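/- arXiv:2510.14068 — 4 statements merged into one kernel-verified Lean document; each statement's English description precedes it below -/
import Mathlib

section
/- Let n ≥ 3 and define f:ℝ^n→ℝ by f(x) = max{ Σ_{j=1}^{n−2} max{0, x_j}, x_{n−1}, x_n }. Then f ∉ MAX_n(n), i.e., f cannot be written as a finite real linear combination of maxima of at most n linear functions. -/
open Pointwise

noncomputable section SparseMaxout

/-- Vectors in `ℝ^n`. -/
abbrev Vec (n : ℕ) := Fin n → ℝ

/-- A polytope is the convex hull of a finite nonempty set of points. -/
def IsPolytope {n : ℕ} (P : Set (Vec n)) : Prop :=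
  ∃ s : Finset (Vec n), s.Nonempty ∧ P = convexHull ℝ (s : Set (Vec n))

/-- A simplex is the convex hull of a finite nonempty affinely independent set of points. -/
def IsSimplex {n : ℕ} (S : Set (Vec n)) : Prop :=
  ∃ (k : ℕ) (pts : Fin k → Vec n), 0 < k ∧ AffineIndependent ℝ pts ∧
    S = convexHull ℝ (Set.range pts)

/-- The support function `f_P(x) = max_{a ∈ P} ⟨a, x⟩` of a set `P`. -/
def suppFn {n : ℕ} (P : Set (Vec n)) (x : Vec n) : ℝ :=
  sSup ((fun a => ∑ i, a i * x i) '' P)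

/-- The dimension of a polytope: the dimension of its affine hull. -/
def polyDim {n : ℕ} (P : Set (Vec n)) : ℕ :=
  Module.finrank ℝ (affineSpan ℝ P).direction

/-- A (representative of a) virtual polytope: a pair `(P, Q)` standing for `P - Q`. -/
abbrev VP (n : ℕ) := Set (Vec n) × Set (Vec n)

/-- Two pairs represent the same virtual polytope: `P₁ - Q₁ = P₂ - Q₂` iff
`P₁ + Q₂ = P₂ + Q₁` (Minkowski sums). -/
def vEquiv {n : ℕ} (A B : VP n) : Prop :=
  A.1 + B.2 = B.1 + A.2

/-- Both components are polytopes. -/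
def IsPolyPair {n : ℕ} (A : VP n) : Prop :=
  IsPolytope A.1 ∧ IsPolytope A.2

/-- Scalar multiple of a virtual polytope: `λ(P - Q) := λP - λQ`. -/
def vSMul {n : ℕ} (c : ℝ) (A : VP n) : VP n := (c • A.1, c • A.2)

/-- Convex hull of finitely many virtual polytopes:
`conv(P₁-Q₁, …, P_m-Q_m) := conv(⋃ᵢ (Pᵢ + Σ_{k≠i} Q_k)) - Σ_k Q_k`. -/
def vConv {n m : ℕ} (V : Fin m → VP n) : VP n :=
  (convexHull ℝ (⋃ i, ((V i).1 + ∑ k ∈ Finset.univ.erase i, (V k).2)),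
   ∑ k, (V k).2)

/-- The dimension of a virtual polytope: `min{dim(A + B) : V = A - B}` over
polytope representations. -/
def vDim {n : ℕ} (V : VP n) : ℕ :=
  sInf {m | ∃ A B : Set (Vec n), IsPolytope A ∧ IsPolytope B ∧
    vEquiv (A, B) V ∧ polyDim (A + B) = m}

/-- Support function of a virtual polytope: `f_{P-Q} := f_P - f_Q`. -/
def vSuppFn {n : ℕ} (V : VP n) (x : Vec n) : ℝ :=
  suppFn V.1 x - suppFn V.2 x

/-- The recursively defined classes `Q̂_ℓ` of virtual polytopes dual to sparse maxout
networks with indegree constraints `d` and ranks `r` (layer `k` uses `d k`, `r k`);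
membership is up to equality of virtual polytopes. -/
def Qhat (n : ℕ) (d r : ℕ → ℕ) : ℕ → Set (VP n)
  | 0 => {V | IsPolyPair V ∧ ∃ v : Vec n, vEquiv V ({v}, {0})}
  | (k+1) => {V | IsPolyPair V ∧
      ∃ (α : Fin (r (k+1)) → Fin (d (k+1)) → ℝ) (W : Fin (d (k+1)) → VP n),
        (∀ j, W j ∈ Qhat n d r k) ∧
        vEquiv V (vConv (fun i => ∑ j, vSMul (α i j) (W j)))}

/-- `Q_n(ℓ,d,r)`: finite real linear combinations of elements of `Q̂_ℓ`. -/
def Qfull (n : ℕ) (d r : ℕ → ℕ) (ℓ : ℕ) : Set (VP n) :=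
  {V | IsPolyPair V ∧ ∃ (p : ℕ) (c : Fin p → ℝ) (W : Fin p → VP n),
    (∀ i, W i ∈ Qhat n d r ℓ) ∧ vEquiv V (∑ i, vSMul (c i) (W i))}

/-- `m_ℓ = Σ_{k=1}^ℓ (r_k - 1) ∏_{i=k+1}^ℓ d_i`. -/
def mval (d r : ℕ → ℕ) (ℓ : ℕ) : ℕ :=
  ∑ k ∈ Finset.Icc 1 ℓ, (r k - 1) * ∏ i ∈ Finset.Icc (k+1) ℓ, d i

/-- The recursively defined classes `N̂_ℓ` of functions computed by a single output
neuron of an indegree-`d`-constrained rank-`r` maxout network with `ℓ` hidden layers. -/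
def Nhat (n : ℕ) (d r : ℕ → ℕ) : ℕ → Set ((Vec n) → ℝ)
  | 0 => {f | ∃ v : Vec n, f = fun x => ∑ i, v i * x i}
  | (k+1) => {f | ∃ (α : Fin (r (k+1)) → Fin (d (k+1)) → ℝ)
      (g : Fin (d (k+1)) → (Vec n) → ℝ),
      (∀ j, g j ∈ Nhat n d r k) ∧
      f = fun x => ⨆ i, ∑ j, α i j * g j x}

/-- `N_n(ℓ,d,r)`: finite real linear combinations of functions in `N̂_ℓ`. -/
def Nfull (n : ℕ) (d r : ℕ → ℕ) (ℓ : ℕ) : Set ((Vec n) → ℝ) :=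
  {f | ∃ (p : ℕ) (c : Fin p → ℝ) (g : Fin p → (Vec n) → ℝ),
    (∀ i, g i ∈ Nhat n d r ℓ) ∧ f = fun x => ∑ i, c i * g i x}

/-- Unconstrained single-neuron classes `N̂_ℓ` (no indegree constraint). -/
def NhatU (n : ℕ) (r : ℕ → ℕ) : ℕ → Set ((Vec n) → ℝ)
  | 0 => {f | ∃ v : Vec n, f = fun x => ∑ i, v i * x i}
  | (k+1) => {f | ∃ (m : ℕ) (α : Fin (r (k+1)) → Fin m → ℝ)
      (g : Fin m → (Vec n) → ℝ),
      (∀ j, g j ∈ NhatU n r k) ∧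
      f = fun x => ⨆ i, ∑ j, α i j * g j x}

/-- `N_n(ℓ,r)`: finite real linear combinations of functions in the unconstrained `N̂_ℓ`. -/
def NfullU (n : ℕ) (r : ℕ → ℕ) (ℓ : ℕ) : Set ((Vec n) → ℝ) :=
  {f | ∃ (p : ℕ) (c : Fin p → ℝ) (g : Fin p → (Vec n) → ℝ),
    (∀ i, g i ∈ NhatU n r ℓ) ∧ f = fun x => ∑ i, c i * g i x}

/-- `MAX_n(m)`: finite real linear combinations of maxima of at most `m` linear functions. -/
def MAXn (n m : ℕ) : Set ((Vec n) → ℝ) :=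
  {f | ∃ (p : ℕ) (β : Fin p → ℝ) (a : Fin p → Fin m → Vec n),
    f = fun x => ∑ i, β i * ⨆ j, ∑ t, a i j t * x t}

set_option linter.unusedSectionVars false
set_option maxHeartbeats 1000000

namespace HardMaxProof
open Filter Topology Finset

variable {n : ℕ}

/-- plain dot product -/
def dotv (a x : Vec n) : ℝ := ∑ t, a t * x t

lemma dotv_add_smul (a x v : Vec n) (s : ℝ) :
    dotv a (x + s • v) = dotv a x + s * dotv a v := by
  simp only [dotv, Pi.add_apply, Pi.smul_apply, smul_eq_mul, mul_add]
  rw [Finset.sum_add_distrib, Finset.mul_sum]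
  congr 1
  exact Finset.sum_congr rfl (fun t _ => by ring)

lemma dotv_smul (a : Vec n) (μ : ℝ) (v : Vec n) : dotv a (μ • v) = μ * dotv a v := by
  have := dotv_add_smul a 0 v μ
  simpa [dotv] using this

lemma dotv_sub_right (a x y : Vec n) : dotv a (x - y) = dotv a x - dotv a y := by
  simp only [dotv, Pi.sub_apply, mul_sub]
  rw [Finset.sum_sub_distrib]

lemma eq_zero_of_dotv_self {a : Vec n} (h : dotv a a = 0) : a = 0 := by
  have h2 : ∀ t ∈ Finset.univ, a t * a t = 0 := by
    intro t _
    have hnn : ∀ t ∈ (Finset.univ : Finset (Fin n)), 0 ≤ a t * a t :=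
      fun t _ => mul_self_nonneg (a t)
    exact (Finset.sum_eq_zero_iff_of_nonneg hnn).1 h t (Finset.mem_univ t)
  funext t
  have := h2 t (Finset.mem_univ t)
  have : a t = 0 := by nlinarith [this]
  simpa using this

/-- eventual value of `φ` approaching `x` from direction `v` -/
def evV (φ : Vec n → ℝ) (x v : Vec n) (c : ℝ) : Prop :=
  ∀ᶠ s : ℝ in 𝓝[>] 0, φ (x + s • v) = c

/-- eventual one-sided derivative -/
def evD (φ : Vec n → ℝ) (x v : Vec n) (c : ℝ) : Prop :=
  ∀ᶠ s : ℝ in 𝓝[>] 0, φ (x + s • v) = φ x + s * c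

lemma evV_unique {φ : Vec n → ℝ} {x v : Vec n} {c c' : ℝ}
    (h : evV φ x v c) (h' : evV φ x v c') : c = c' := by
  obtain ⟨s, hs, hs'⟩ := (h.and h').exists
  rw [← hs, hs']

lemma evD_unique {φ : Vec n → ℝ} {x v : Vec n} {c c' : ℝ}
    (h : evD φ x v c) (h' : evD φ x v c') : c = c' := by
  obtain ⟨s, ⟨hs, hs'⟩, hpos⟩ := ((h.and h').and eventually_mem_nhdsWithin).exists
  rw [Set.mem_Ioi] at hpos
  have : s * c = s * c' := by linarith
  exact mul_left_cancel₀ (ne_of_gt hpos) this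

lemma evD_sum {ι : Type*} (t : Finset ι) (φ : ι → Vec n → ℝ) (x v : Vec n) (c : ι → ℝ)
    (h : ∀ i ∈ t, evD (φ i) x v (c i)) :
    evD (fun y => ∑ i ∈ t, φ i y) x v (∑ i ∈ t, c i) := by
  classical
  induction t using Finset.induction_on with
  | empty => simp [evD]
  | @insert i t' hni ih =>
    simp only [Finset.sum_insert hni]
    have h1 := h i (Finset.mem_insert_self i t')
    have h2 := ih (fun j hj => h j (Finset.mem_insert_of_mem hj))
    filter_upwards [h1, h2] with s hs1 hs2
    rw [hs1, hs2]; ring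

lemma ev_lt_const {c : ℝ} (h : 0 < c) : ∀ᶠ s : ℝ in 𝓝[>] 0, s < c := by
  have h1 : Filter.Tendsto (fun s : ℝ => s) (𝓝[>] 0) (𝓝 0) :=
    tendsto_nhdsWithin_of_tendsto_nhds tendsto_id
  simpa using h1.eventually_lt_const h

lemma ev_pos : ∀ᶠ s : ℝ in 𝓝[>] (0:ℝ), 0 < s := eventually_mem_nhdsWithin

lemma ev_affine_ne {a b : ℝ} (h : a ≠ 0) : ∀ᶠ s : ℝ in 𝓝[>] 0, a + s * b ≠ 0 := by
  have h1 : Filter.Tendsto (fun s : ℝ => a + s * b) (𝓝[>] 0) (𝓝 a) := by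
    have : Filter.Tendsto (fun s : ℝ => a + s * b) (𝓝 0) (𝓝 (a + 0 * b)) :=
      (continuous_const.add (continuous_id.mul continuous_const)).tendsto 0
    simpa using tendsto_nhdsWithin_of_tendsto_nhds this
  exact h1.eventually_ne h

lemma ev_affine_lt {a b a' b' : ℝ} (h : a < a') :
    ∀ᶠ s : ℝ in 𝓝[>] 0, a + s * b < a' + s * b' := by
  have h1 : Filter.Tendsto (fun s : ℝ => (a + s * b) - (a' + s * b')) (𝓝[>] 0) (𝓝 (a - a')) := by
    have : Filter.Tendsto (fun s : ℝ => (a + s * b) - (a' + s * b')) (𝓝 0)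
        (𝓝 ((a + 0 * b) - (a' + 0 * b'))) := by
      apply Continuous.tendsto
      continuity
    simpa using tendsto_nhdsWithin_of_tendsto_nhds this
  have := h1.eventually_lt_const (by linarith : a - a' < 0)
  filter_upwards [this] with s hs; linarith

lemma eventually_list {α : Type*} (l : List α) (p : α → ℝ → Prop)
    (h : ∀ a ∈ l, ∀ᶠ s : ℝ in 𝓝[>] (0:ℝ), p a s) :
    ∀ᶠ s : ℝ in 𝓝[>] (0:ℝ), ∀ a ∈ l, p a s := by
  induction l with
  | nil => simp
  | cons hd tl ih =>
    have h1 := h hd (List.mem_cons_self)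
    have h2 := ih (fun a ha => h a (List.mem_cons_of_mem hd ha))
    filter_upwards [h1, h2] with s hs1 hs2
    intro a ha
    rcases List.mem_cons.1 ha with rfl | ha
    · exact hs1
    · exact hs2 a ha


section ActPart
variable [NeZero n]

noncomputable def Act (A : Fin n → Vec n) (x : Vec n) : Finset (Fin n) :=
  Finset.univ.filter (fun j => ∀ j', dotv (A j') x ≤ dotv (A j) x)

lemma mem_Act {A : Fin n → Vec n} {x : Vec n} {j : Fin n} :
    j ∈ Act A x ↔ ∀ j', dotv (A j') x ≤ dotv (A j) x := by
  simp [Act, Finset.mem_filter]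

lemma Act_nonempty (A : Fin n → Vec n) (x : Vec n) : (Act A x).Nonempty := by
  obtain ⟨j, _, hj⟩ := Finset.exists_max_image Finset.univ (fun j => dotv (A j) x)
    ⟨Classical.arbitrary (Fin n), Finset.mem_univ _⟩
  exact ⟨j, mem_Act.2 fun j' => hj j' (Finset.mem_univ j')⟩

noncomputable def stepF (A : Fin n → Vec n) (v : Vec n) (K : Finset (Fin n)) :
    Finset (Fin n) :=
  K.filter (fun j => ∀ j' ∈ K, dotv (A j') v ≤ dotv (A j) v)

lemma mem_stepF {A : Fin n → Vec n} {v : Vec n} {K : Finset (Fin n)} {j : Fin n} :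
    j ∈ stepF A v K ↔ j ∈ K ∧ ∀ j' ∈ K, dotv (A j') v ≤ dotv (A j) v := by
  simp [stepF, Finset.mem_filter]

lemma stepF_nonempty {A : Fin n → Vec n} (v : Vec n) {K : Finset (Fin n)}
    (hK : K.Nonempty) : (stepF A v K).Nonempty := by
  obtain ⟨j, hj, hmax⟩ := Finset.exists_max_image K (fun j => dotv (A j) v) hK
  exact ⟨j, mem_stepF.2 ⟨hj, hmax⟩⟩

lemma stepF_subset {A : Fin n → Vec n} {v : Vec n} {K : Finset (Fin n)} :
    stepF A v K ⊆ K := Finset.filter_subset _ _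

lemma stepF_eq_of_ties {A : Fin n → Vec n} {v : Vec n} {K : Finset (Fin n)}
    (h : ∀ j ∈ K, ∀ j' ∈ K, dotv (A j) v = dotv (A j') v) : stepF A v K = K := by
  apply Finset.Subset.antisymm stepF_subset
  intro j hj
  exact mem_stepF.2 ⟨hj, fun j' hj' => le_of_eq (h j' hj' j hj)⟩

noncomputable def ActC (A : Fin n → Vec n) (x : Vec n) (C : List (Vec n)) :
    Finset (Fin n) :=
  C.foldl (fun K v => stepF A v K) (Act A x)

lemma ActC_nil (A : Fin n → Vec n) (x : Vec n) : ActC A x [] = Act A x := rfl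

lemma ActC_cons (A : Fin n → Vec n) (x : Vec n) (v : Vec n) (C : List (Vec n)) :
    ActC A x (v :: C) = C.foldl (fun K v => stepF A v K) (stepF A v (Act A x)) := rfl

lemma ActC_nonempty (A : Fin n → Vec n) (x : Vec n) (C : List (Vec n)) :
    (ActC A x C).Nonempty := by
  unfold ActC
  generalize hK : Act A x = K
  have hne : K.Nonempty := hK ▸ Act_nonempty A x
  clear hK
  induction C generalizing K with
  | nil => exact hne
  | cons v C ih => exact ih _ (stepF_nonempty v hne)

/-- value functional: width along ν of active-set vectors -/
noncomputable def VALset (A : Fin n → Vec n) (S : Finset (Fin n)) (ν : Vec n) : ℝ :=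
  if h : S.Nonempty then
    S.sup' h (fun j => dotv (A j) ν) + S.sup' h (fun j => dotv (A j) (-ν))
  else 0

noncomputable def VAL (A : Fin n → Vec n) (x : Vec n) (C : List (Vec n)) (ν : Vec n) : ℝ :=
  VALset A (ActC A x C) ν

/-- Key eventual lemma: the active set just after moving from `x` in direction `v`. -/
lemma act_step (A : Fin n → Vec n) (x v : Vec n) :
    ∀ᶠ s : ℝ in 𝓝[>] 0, Act A (x + s • v) = stepF A v (Act A x) := by
  set K := Act A x with hK
  set S := stepF A v K with hS
  obtain ⟨js, hjs⟩ := stepF_nonempty v (Act_nonempty A x)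
  have hjsK : js ∈ K := stepF_subset hjs
  have hxeq : ∀ j ∈ K, dotv (A j) x = dotv (A js) x := fun j hj =>
    le_antisymm (mem_Act.1 hjsK j) (mem_Act.1 hj js)
  have hveq : ∀ j ∈ S, dotv (A j) v = dotv (A js) v := fun j hj =>
    le_antisymm ((mem_stepF.1 hjs).2 j (stepF_subset hj)) ((mem_stepF.1 hj).2 js hjsK)
  -- eventual domination of each index
  have hev : ∀ j : Fin n, ∀ᶠ s : ℝ in 𝓝[>] 0,
      (j ∉ S → dotv (A j) (x + s • v) < dotv (A js) (x + s • v)) ∧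
      (j ∈ S → dotv (A j) (x + s • v) = dotv (A js) (x + s • v)) := by
    intro j
    by_cases hjS : j ∈ S
    · filter_upwards with s
      refine ⟨fun h => absurd hjS h, fun _ => ?_⟩
      rw [dotv_add_smul, dotv_add_smul, hxeq j (stepF_subset hjS), hveq j hjS]
    · by_cases hjK : j ∈ K
      · -- tie at x, strictly smaller in v
        have hvlt : dotv (A j) v < dotv (A js) v := by
          rcases lt_or_ge (dotv (A j) v) (dotv (A js) v) with h | h
          · exact h
          · exfalso; apply hjS
            refine mem_stepF.2 ⟨hjK, fun j' hj' => ?_⟩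
            exact le_trans ((mem_stepF.1 hjs).2 j' hj') h
        filter_upwards [ev_pos] with s hs
        refine ⟨fun _ => ?_, fun h => absurd h hjS⟩
        rw [dotv_add_smul, dotv_add_smul, hxeq j hjK]
        have := mul_lt_mul_of_pos_left hvlt hs
        linarith
      · have hxlt : dotv (A j) x < dotv (A js) x := by
          rcases lt_or_ge (dotv (A j) x) (dotv (A js) x) with h | h
          · exact h
          · exfalso; apply hjK
            exact mem_Act.2 fun j' => le_trans (mem_Act.1 hjsK j') h
        filter_upwards [ev_affine_lt (b := dotv (A j) v) (b' := dotv (A js) v) hxlt]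
          with s hs
        refine ⟨fun _ => ?_, fun h => absurd h hjS⟩
        rw [dotv_add_smul, dotv_add_smul]; exact hs
  have hall := (Filter.eventually_all (ι := Fin n)).2 hev
  filter_upwards [hall] with s hs
  apply Finset.ext
  intro j
  constructor
  · intro hj
    by_contra hjS
    have h1 := (hs j).1 hjS
    have h2 := mem_Act.1 hj js
    linarith
  · intro hjS
    refine mem_Act.2 fun j' => ?_
    by_cases hj'S : j' ∈ S
    · rw [(hs j').2 hj'S, (hs j).2 hjS]
    · rw [(hs j).2 hjS]; exact le_of_lt ((hs j').1 hj'S)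

lemma actC_ev (A : Fin n → Vec n) (x v : Vec n) (C : List (Vec n)) :
    ∀ᶠ s : ℝ in 𝓝[>] 0, ActC A (x + s • v) C = ActC A x (v :: C) := by
  filter_upwards [act_step A x v] with s hs
  unfold ActC
  rw [hs]
  rfl

lemma val_ev (A : Fin n → Vec n) (x v : Vec n) (C : List (Vec n)) (ν : Vec n) :
    evV (fun y => VAL A y C ν) x v (VAL A x (v :: C) ν) := by
  filter_upwards [actC_ev A x v C] with s hs
  unfold VAL
  rw [hs]

/-- invariance of the active set under shifts in a direction on which all the `A j` agree -/
lemma Act_shift {A : Fin n → Vec n} {u : Vec n}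
    (hu : ∀ j j', dotv (A j) u = dotv (A j') u) (x : Vec n) (μ : ℝ) :
    Act A (x + μ • u) = Act A x := by
  apply Finset.ext
  intro j
  simp only [mem_Act, dotv_add_smul]
  constructor
  · intro h j'
    have := h j'
    rw [hu j' j] at this
    linarith
  · intro h j'
    have := h j'
    rw [hu j' j]
    linarith

lemma VAL_shift {A : Fin n → Vec n} {u : Vec n}
    (hu : ∀ j j', dotv (A j) u = dotv (A j') u) (x : Vec n) (μ : ℝ) (C : List (Vec n))
    (ν : Vec n) : VAL A (x + μ • u) C ν = VAL A x C ν := by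
  unfold VAL ActC
  rw [Act_shift hu x μ]

/-- stability of the active set when all active indices tie along `v` -/
lemma act_stable {A : Fin n → Vec n} {x v : Vec n}
    (h : ∀ j ∈ Act A x, ∀ j' ∈ Act A x, dotv (A j) v = dotv (A j') v) :
    ∀ᶠ s : ℝ in 𝓝[>] 0, Act A (x + s • v) = Act A x := by
  filter_upwards [act_step A x v] with s hs
  rw [hs, stepF_eq_of_ties h]

lemma val_stable {A : Fin n → Vec n} {x v : Vec n}
    (h : ∀ j ∈ Act A x, ∀ j' ∈ Act A x, dotv (A j) v = dotv (A j') v)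
    (C : List (Vec n)) (ν : Vec n) : VAL A x (v :: C) ν = VAL A x C ν := by
  have h1 := val_ev A x v C ν
  have h2 : evV (fun y => VAL A y C ν) x v (VAL A x C ν) := by
    filter_upwards [act_stable h] with s hs
    unfold VAL ActC
    rw [hs]
  obtain ⟨s, hs1, hs2⟩ := (h1.and h2).exists
  rw [← hs1, hs2]

end ActPart


section IndPart
variable [NeZero n]

structure Term (n : ℕ) where
  c : ℝ
  A : Fin n → Vec n
  u : Vec n
  CH : List (Vec n)

noncomputable def Term.eval (ν : Vec n) (T : Term n) (x : Vec n) : ℝ :=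
  T.c * VAL T.A x T.CH ν

def pairdiffs (A : Fin n → Vec n) : List (Vec n) :=
  (List.finRange n).flatMap (fun j => (List.finRange n).map (fun j' => A j - A j'))

lemma mem_pairdiffs {A : Fin n → Vec n} (j j' : Fin n) : A j - A j' ∈ pairdiffs A := by
  unfold pairdiffs
  rw [List.mem_flatMap]
  exact ⟨j, List.mem_finRange j, List.mem_map.2 ⟨j', List.mem_finRange j', rfl⟩⟩

lemma pairdiffs_mem {A : Fin n → Vec n} {d : Vec n} (hd : d ∈ pairdiffs A) :
    ∃ j j', d = A j - A j' := by
  unfold pairdiffs at hd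
  rw [List.mem_flatMap] at hd
  obtain ⟨j, _, hd⟩ := hd
  obtain ⟨j', _, rfl⟩ := List.mem_map.1 hd
  exact ⟨j, j', rfl⟩

def IndStat (ν : Vec n) (L : Set (Vec n)) (F : Vec n → ℝ) : Prop :=
  ∃ (Ts : List (Term n)) (E : List (Vec n)),
    (∀ T ∈ Ts, T.u ∈ L ∧ T.u ≠ 0 ∧ ∀ j j', dotv (T.A j) T.u = dotv (T.A j') T.u) ∧
    (∀ d ∈ E, ∃ p ∈ L, dotv d p ≠ 0) ∧
    (∀ x ∈ L, (∀ d ∈ E, dotv d x ≠ 0) →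
      F x = (Ts.map (fun T => Term.eval ν T x)).sum)

lemma dotv_sub_left (a b x : Vec n) : dotv (a - b) x = dotv a x - dotv b x := by
  simp only [dotv, Pi.sub_apply, sub_mul]
  rw [Finset.sum_sub_distrib]

lemma dotv_sub_smul (a p w : Vec n) (μ : ℝ) :
    dotv a (p - μ • w) = dotv a p - μ * dotv a w := by
  have h := dotv_add_smul a p w (-μ)
  rw [neg_smul, ← sub_eq_add_neg] at h
  rw [h]; ring

lemma dotv_neg (a w : Vec n) : dotv a (-w) = - dotv a w := by
  have := dotv_smul a (-1) w
  simpa using this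

lemma list_sum_map_sub {α : Type*} (l : List α) (f g : α → ℝ) :
    (l.map f).sum - (l.map g).sum = (l.map (fun a => f a - g a)).sum := by
  induction l with
  | nil => simp
  | cons hd tl ih =>
    simp only [List.map_cons, List.sum_cons]
    rw [← ih]; ring

lemma list_sum_map_flatMap {α β : Type*} (l : List α) (f : α → List β) (g : β → ℝ) :
    ((l.flatMap f).map g).sum = (l.map (fun a => ((f a).map g).sum)).sum := by
  induction l with
  | nil => rfl
  | cons hd tl ih =>
    simp only [List.flatMap_cons, List.map_append, List.sum_append, List.map_cons,
      List.sum_cons, ih]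

lemma evV_list_sum {α : Type*} (l : List α) (φ : α → Vec n → ℝ) (x v : Vec n) (c : α → ℝ)
    (h : ∀ a ∈ l, evV (φ a) x v (c a)) :
    evV (fun y => (l.map (fun a => φ a y)).sum) x v ((l.map c).sum) := by
  induction l with
  | nil => simp [evV]
  | cons hd tl ih =>
    have h1 := h hd (List.mem_cons_self)
    have h2 := ih (fun a ha => h a (List.mem_cons_of_mem hd ha))
    filter_upwards [h1, h2] with s hs1 hs2
    simp only [List.map_cons, List.sum_cons]
    rw [hs1, hs2]

lemma list_sum_map_congr {α : Type*} (l : List α) (f g : α → ℝ)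
    (h : ∀ a ∈ l, f a = g a) : (l.map f).sum = (l.map g).sum := by
  induction l with
  | nil => rfl
  | cons hd tl ih =>
    simp only [List.map_cons, List.sum_cons]
    rw [h hd (List.mem_cons_self), ih (fun a ha => h a (List.mem_cons_of_mem hd ha))]

lemma step_lemma (ν : Vec n) (L L' : Set (Vec n)) (w : Vec n) (F F' : Vec n → ℝ)
    (hL'L : L' ⊆ L) (hwL : w ∈ L)
    (hclose : ∀ p ∈ L, ∀ μ : ℝ, p + μ • w ∈ L)
    (hdecomp : ∀ p ∈ L, ∃ μ : ℝ, p - μ • w ∈ L')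
    (hF' : ∀ x ∈ L', ∃ aP aM, evV F x w aP ∧ evV F x (-w) aM ∧ F' x = aP - aM)
    (hind : IndStat ν L F) : IndStat ν L' F' := by
  classical
  obtain ⟨Ts, E, hTs, hE, hid⟩ := hind
  refine ⟨Ts.flatMap (fun T => if T.u ∈ L' then
      [⟨T.c, T.A, T.u, w :: T.CH⟩, ⟨-T.c, T.A, T.u, (-w) :: T.CH⟩] else []),
    (E.filter (fun d => dotv d w = 0)) ++ Ts.flatMap (fun T => if T.u ∈ L' then [] else
      (pairdiffs T.A).filter (fun d => ∃ p ∈ L, dotv d p ≠ 0)), ?_, ?_, ?_⟩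
  · -- new terms conditions
    intro T' hT'
    rw [List.mem_flatMap] at hT'
    obtain ⟨T, hT, hT'⟩ := hT'
    by_cases hs : T.u ∈ L'
    · rw [if_pos hs] at hT'
      obtain ⟨hu, _, hties⟩ := hTs T hT
      simp only [List.mem_cons, List.not_mem_nil, or_false] at hT'
      rcases hT' with rfl | rfl
      · exact ⟨hs, (hTs T hT).2.1, hties⟩
      · exact ⟨hs, (hTs T hT).2.1, hties⟩
    · rw [if_neg hs] at hT'
      exact absurd hT' List.not_mem_nil
  · -- liveness of new E
    intro d hd
    rw [List.mem_append] at hd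
    rcases hd with hd | hd
    · rw [List.mem_filter] at hd
      obtain ⟨hdE, hdw⟩ := hd
      have hdw : dotv d w = 0 := by simpa using hdw
      obtain ⟨p, hp, hdp⟩ := hE d hdE
      obtain ⟨μ, hμ⟩ := hdecomp p hp
      refine ⟨p - μ • w, hμ, ?_⟩
      rw [dotv_sub_smul, hdw]
      simpa using hdp
    · rw [List.mem_flatMap] at hd
      obtain ⟨T, hT, hd⟩ := hd
      by_cases hs : T.u ∈ L'
      · rw [if_pos hs] at hd; exact absurd hd List.not_mem_nil
      · rw [if_neg hs] at hd
        rw [List.mem_filter] at hd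
        obtain ⟨hdp, hlive⟩ := hd
        have hlive : ∃ p ∈ L, dotv d p ≠ 0 := by simpa using hlive
        -- d is a pair difference of an exiting term: live on L implies live on L'
        by_contra hdead
        push_neg at hdead
        obtain ⟨hu, hu0, hties⟩ := hTs T hT
        have hdu : dotv d T.u = 0 := by
          obtain ⟨j, j', rfl⟩ := pairdiffs_mem hdp
          rw [dotv_sub_left]
          rw [hties j j']; ring
        obtain ⟨μu, hμu⟩ := hdecomp T.u hu
        have hμu0 : μu ≠ 0 := by
          intro h
          rw [h] at hμu
          simp at hμu
          exact hs hμu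
        have hdw : dotv d w = 0 := by
          have h1 : dotv d (T.u - μu • w) = 0 := hdead _ hμu
          rw [dotv_sub_smul, hdu] at h1
          have : μu * dotv d w = 0 := by linarith
          exact (mul_eq_zero.1 this).resolve_left hμu0
        obtain ⟨p, hp, hdp2⟩ := hlive
        obtain ⟨μp, hμp⟩ := hdecomp p hp
        apply hdp2
        have h2 : dotv d (p - μp • w) = 0 := hdead _ hμp
        rw [dotv_sub_smul, hdw] at h2
        linarith
  · -- the identity at good points of L'
    intro x hx hgood
    have hgoodE : ∀ d ∈ E, dotv d w = 0 → dotv d x ≠ 0 := by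
      intro d hdE hdw
      apply hgood
      rw [List.mem_append]
      exact Or.inl (List.mem_filter.2 ⟨hdE, by simpa using hdw⟩)
    -- eventual goodness along both directions
    have hev_good : ∀ v : Vec n, (∀ d ∈ E, dotv d v = 0 → dotv d w = 0) →
        ∀ᶠ s : ℝ in 𝓝[>] 0, ∀ d ∈ E, dotv d (x + s • v) ≠ 0 := by
      intro v hvw
      apply eventually_list E
      intro d hdE
      by_cases hdv : dotv d v = 0
      · have hdx : dotv d x ≠ 0 := hgoodE d hdE (hvw d hdE hdv)
        filter_upwards with s
        rw [dotv_add_smul, hdv]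
        simpa using hdx
      · by_cases hdx : dotv d x = 0
        · filter_upwards [ev_pos] with s hs
          rw [dotv_add_smul, hdx]
          simp only [zero_add]
          exact mul_ne_zero (ne_of_gt hs) hdv
        · filter_upwards [ev_affine_ne (b := dotv d v) hdx] with s hs
          rw [dotv_add_smul]; exact hs
    have hwcond : ∀ d ∈ E, dotv d w = 0 → dotv d w = 0 := fun d _ h => h
    have hmwcond : ∀ d ∈ E, dotv d (-w) = 0 → dotv d w = 0 := by
      intro d _ h
      have : dotv d (-w) = -dotv d w := by
        have := dotv_smul d (-1) w
        simpa using this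
      rw [this] at h; linarith
    -- identity along the approach segments
    have hmem : ∀ v : Vec n, v = w ∨ v = -w → ∀ s : ℝ, x + s • v ∈ L := by
      intro v hv s
      rcases hv with rfl | rfl
      · exact hclose x (hL'L hx) s
      · rw [smul_neg, ← neg_smul]
        exact hclose x (hL'L hx) (-s)
    have hFev : ∀ v : Vec n, v = w ∨ v = -w →
        evV F x v ((Ts.map (fun T => T.c * VAL T.A x (v :: T.CH) ν)).sum) := by
      intro v hv
      have hcond : ∀ d ∈ E, dotv d v = 0 → dotv d w = 0 := by
        rcases hv with rfl | rfl
        · exact hwcond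
        · exact hmwcond
      have h1 := hev_good v hcond
      have h2 : evV (fun y => (Ts.map (fun T => Term.eval ν T y)).sum) x v
          ((Ts.map (fun T => T.c * VAL T.A x (v :: T.CH) ν)).sum) := by
        have := evV_list_sum Ts (fun T y => Term.eval ν T y) x v
          (fun T => T.c * VAL T.A x (v :: T.CH) ν) ?_
        · convert this using 2
        · intro T _
          unfold Term.eval evV
          filter_upwards [val_ev T.A x v T.CH ν] with s hs
          rw [hs]
      unfold evV
      filter_upwards [h1, h2] with s hs1 hs2
      rw [hid _ (hmem v hv s) hs1, hs2]
  -- combine with hF'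
    obtain ⟨aP, aM, hP, hM, hF'x⟩ := hF' x hx
    have haP : aP = (Ts.map (fun T => T.c * VAL T.A x (w :: T.CH) ν)).sum :=
      evV_unique hP (hFev w (Or.inl rfl))
    have haM : aM = (Ts.map (fun T => T.c * VAL T.A x ((-w) :: T.CH) ν)).sum :=
      evV_unique hM (hFev (-w) (Or.inr rfl))
    -- exiting terms are stable
    have hstab : ∀ T ∈ Ts, T.u ∉ L' → ∀ v : Vec n, v = w ∨ v = -w →
        VAL T.A x (v :: T.CH) ν = VAL T.A x T.CH ν := by
      intro T hT hTu v hv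
      apply val_stable
      intro j hj j' hj'
      -- active ties are dead on L, hence tie along w
      have hδx : dotv (T.A j - T.A j') x = 0 := by
        rw [dotv_sub_left]
        have h1 := mem_Act.1 hj j'
        have h2 := mem_Act.1 hj' j
        linarith
      have hδdead : ¬ (∃ p ∈ L, dotv (T.A j - T.A j') p ≠ 0) := by
        intro hlive
        apply hgood (T.A j - T.A j')
        · rw [List.mem_append]
          refine Or.inr (List.mem_flatMap.2 ⟨T, hT, ?_⟩)
          rw [if_neg hTu]
          exact List.mem_filter.2 ⟨mem_pairdiffs j j', by simpa using hlive⟩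
        · exact hδx
      push_neg at hδdead
      have hδw : dotv (T.A j - T.A j') w = 0 := hδdead w hwL
      rw [dotv_sub_left] at hδw
      rcases hv with rfl | rfl
      · linarith
      · have e1 : dotv (T.A j) (-w) = - dotv (T.A j) w := dotv_neg _ _
        have e2 : dotv (T.A j') (-w) = - dotv (T.A j') w := dotv_neg _ _
        rw [e1, e2]; linarith
    rw [hF'x, haP, haM, list_sum_map_sub]
    symm
    rw [list_sum_map_flatMap]
    apply list_sum_map_congr
    intro T hT
    by_cases hs : T.u ∈ L'
    · rw [if_pos hs]
      simp only [List.map_cons, List.map_nil, List.sum_cons, List.sum_nil]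
      show T.c * VAL T.A x (w :: T.CH) ν + (-T.c * VAL T.A x ((-w) :: T.CH) ν + 0) = _
      ring
    · rw [if_neg hs]
      simp only [List.map_nil, List.sum_nil]
      rw [hstab T hT hs w (Or.inl rfl), hstab T hT hs (-w) (Or.inr rfl)]
      ring

end IndPart

section MoreLemmas
variable [NeZero n]

lemma sup'_Act {A : Fin n → Vec n} {y : Vec n} {j : Fin n} (hj : j ∈ Act A y) :
    Finset.univ.sup' ⟨j, Finset.mem_univ j⟩ (fun j' => dotv (A j') y) = dotv (A j) y := by
  apply le_antisymm
  · exact Finset.sup'_le _ (fun j' => dotv (A j') y) (fun j' _ => mem_Act.1 hj j')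
  · exact Finset.le_sup' (fun j' => dotv (A j') y) (Finset.mem_univ j)

lemma stepF_val {A : Fin n → Vec n} {v : Vec n} {K : Finset (Fin n)} {j j' : Fin n}
    (hj : j ∈ stepF A v K) (hj' : j' ∈ stepF A v K) : dotv (A j) v = dotv (A j') v :=
  le_antisymm ((mem_stepF.1 hj').2 j (stepF_subset hj)) ((mem_stepF.1 hj).2 j' (stepF_subset hj'))

/-- one-sided derivative of a max of linear functions -/
lemma maxlin_evD (A : Fin n → Vec n) (x v : Vec n) :
    ∃ js ∈ stepF A v (Act A x),
      evD (fun y => Finset.univ.sup' ⟨js, Finset.mem_univ js⟩ (fun j => dotv (A j) y)) x v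
        (dotv (A js) v) := by
  obtain ⟨js, hjs⟩ := stepF_nonempty v (Act_nonempty A x)
  refine ⟨js, hjs, ?_⟩
  unfold evD
  filter_upwards [act_step A x v] with s hs
  have h1 : js ∈ Act A (x + s • v) := by rw [hs]; exact hjs
  rw [sup'_Act h1, sup'_Act (stepF_subset hjs), dotv_add_smul]

lemma evD_smul {φ : Vec n → ℝ} {x v : Vec n} {c : ℝ} (b : ℝ) (h : evD φ x v c) :
    evD (fun y => b * φ y) x v (b * c) := by
  filter_upwards [h] with s hs
  simp only [hs]; ring

lemma sup'_congr_of_mem {S : Finset (Fin n)} (hS : S.Nonempty) (f : Fin n → ℝ) {j : Fin n}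
    (hj : j ∈ S) (h : ∀ j' ∈ S, f j' = f j) : S.sup' hS f = f j := by
  apply le_antisymm
  · exact Finset.sup'_le hS f (fun j' hj' => le_of_eq (h j' hj'))
  · exact Finset.le_sup' f hj

lemma VALset_zero {A : Fin n → Vec n} {S : Finset (Fin n)} {ν : Vec n}
    (hS : S.Nonempty)
    (h : ∀ j ∈ S, ∀ j' ∈ S, dotv (A j) ν = dotv (A j') ν) : VALset A S ν = 0 := by
  obtain ⟨j0, hj0⟩ := hS
  unfold VALset
  rw [dif_pos ⟨j0, hj0⟩]
  rw [sup'_congr_of_mem ⟨j0, hj0⟩ _ hj0 (fun j' hj' => h j' hj' j0 hj0)]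
  rw [sup'_congr_of_mem ⟨j0, hj0⟩ _ hj0 (fun j' hj' => by
    rw [dotv_neg, dotv_neg, h j' hj' j0 hj0])]
  rw [dotv_neg]; ring

lemma VALset_stepF_sum {A : Fin n → Vec n} {x : Vec n} {ν : Vec n} {jp jm : Fin n}
    (hjp : jp ∈ stepF A ν (Act A x)) (hjm : jm ∈ stepF A (-ν) (Act A x)) :
    dotv (A jp) ν + dotv (A jm) (-ν) = VALset A (Act A x) ν := by
  have hne := Act_nonempty A x
  unfold VALset
  rw [dif_pos hne]
  congr 1
  · apply le_antisymm
    · exact Finset.le_sup' (fun j => dotv (A j) ν) (stepF_subset hjp)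
    · exact Finset.sup'_le hne (fun j => dotv (A j) ν) (fun j' hj' => (mem_stepF.1 hjp).2 j' hj')
  · apply le_antisymm
    · exact Finset.le_sup' (fun j => dotv (A j) (-ν)) (stepF_subset hjm)
    · exact Finset.sup'_le hne (fun j => dotv (A j) (-ν)) (fun j' hj' => (mem_stepF.1 hjm).2 j' hj')

/-- a linear functional given by a vector -/
def dlin (d : Vec n) : Vec n →ₗ[ℝ] ℝ where
  toFun := dotv d
  map_add' := by
    intro x y
    simp only [dotv, Pi.add_apply, mul_add]
    exact Finset.sum_add_distrib
  map_smul' := by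
    intro c x
    simp only [dotv, Pi.smul_apply, smul_eq_mul, RingHom.id_apply]
    rw [Finset.mul_sum]
    exact Finset.sum_congr rfl (fun t _ => by ring)

/-- existence of a common invariance direction for `n` vectors in `ℝ^n` -/
lemma exists_inv_dir (hn : 1 ≤ n) (A : Fin n → Vec n) :
    ∃ u : Vec n, u ≠ 0 ∧ ∀ j j', dotv (A j) u = dotv (A j') u := by
  have hlast : n - 1 < n := by omega
  set jl : Fin n := ⟨n-1, hlast⟩
  set L : Vec n →ₗ[ℝ] (Fin (n-1) → ℝ) :=
    LinearMap.pi (fun k : Fin (n-1) => dlin (A (Fin.castLE (by omega) k) - A jl)) with hL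
  have hker : LinearMap.ker L ≠ ⊥ := by
    intro hbot
    have hinj : Function.Injective L := LinearMap.ker_eq_bot.1 hbot
    have h1 : Module.finrank ℝ (Vec n) ≤ Module.finrank ℝ (Fin (n-1) → ℝ) :=
      LinearMap.finrank_le_finrank_of_injective hinj
    rw [Module.finrank_fintype_fun_eq_card, Module.finrank_fintype_fun_eq_card] at h1
    simp only [Fintype.card_fin] at h1
    omega
  obtain ⟨u, huker, hu0⟩ := (Submodule.ne_bot_iff _).1 hker
  refine ⟨u, hu0, ?_⟩
  have hval : ∀ j : Fin n, dotv (A j) u = dotv (A jl) u := by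
    intro j
    by_cases hj : (j : ℕ) < n - 1
    · have := congrFun (LinearMap.mem_ker.1 huker) ⟨j, hj⟩
      simp only [LinearMap.pi_apply, Pi.zero_apply] at this
      have h2 : dotv (A (Fin.castLE (by omega) (⟨(j:ℕ), hj⟩ : Fin (n-1))) - A jl) u = 0 := this
      have h3 : Fin.castLE (by omega : n - 1 ≤ n) (⟨(j:ℕ), hj⟩ : Fin (n-1)) = j := by
        apply Fin.ext; rfl
      rw [h3, dotv_sub_left] at h2
      linarith
    · have : j = jl := by
        apply Fin.ext
        have := j.isLt
        simp only [jl]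
        omega
      rw [this]
  intro j j'
  rw [hval j, hval j']

end MoreLemmas

section Main

variable (n : ℕ)

def yi (hn : 3 ≤ n) : Fin n := ⟨n-2, Nat.sub_lt (by omega) (by omega)⟩
def zi (hn : 3 ≤ n) : Fin n := ⟨n-1, Nat.sub_lt (by omega) (by omega)⟩

noncomputable def nuv (hn : 3 ≤ n) : Vec n :=
  fun t => if t = yi n hn then 1 else if t = zi n hn then -1 else 0

noncomputable def w1v (hn : 3 ≤ n) : Vec n :=
  fun t => if t = yi n hn ∨ t = zi n hn then 1 else 0

noncomputable def erv (r : ℕ) : Vec n := fun t => if (t : ℕ) = r then 1 else 0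

noncomputable def Gf (x : Vec n) : ℝ :=
  ∑ j ∈ Finset.univ.filter (fun j : Fin n => (j : ℕ) < n - 2), max 0 (x j)

def LL (hn : 3 ≤ n) (k : ℕ) : Set (Vec n) :=
  {x | x (yi n hn) = x (zi n hn) ∧ (2 ≤ k → x (yi n hn) = 0) ∧
    ∀ j : Fin n, (j : ℕ) < k - 2 → x j = 0}

noncomputable def FF (hn : 3 ≤ n) (k : ℕ) : Vec n → ℝ :=
  if 2 ≤ k then
    fun x => if ∀ j : Fin n, k - 2 ≤ (j : ℕ) → (j : ℕ) < n - 2 → x j ≤ 0 then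
      2 * (-1 : ℝ)^(k-2) else 0
  else fun x => if Gf n x ≤ x (yi n hn) then 2 else 0

noncomputable def FM (hn : 3 ≤ n) : Vec n → ℝ :=
  fun x => max (Gf n x) (max (x (yi n hn)) (x (zi n hn)))

variable {n}

lemma yi_ne_zi (hn : 3 ≤ n) : yi n hn ≠ zi n hn := by
  intro h
  have := congrArg Fin.val h
  simp only [yi, zi] at this
  omega

lemma cube_ne_yi (hn : 3 ≤ n) {j : Fin n} (hj : (j : ℕ) < n - 2) : j ≠ yi n hn := by
  intro h; rw [h] at hj; simp only [yi] at hj; omega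

lemma cube_ne_zi (hn : 3 ≤ n) {j : Fin n} (hj : (j : ℕ) < n - 2) : j ≠ zi n hn := by
  intro h; rw [h] at hj; simp only [zi] at hj; omega

lemma nuv_yi (hn : 3 ≤ n) : nuv n hn (yi n hn) = 1 := by simp [nuv]

lemma nuv_zi (hn : 3 ≤ n) : nuv n hn (zi n hn) = -1 := by
  simp [nuv, (yi_ne_zi hn).symm]

lemma nuv_cube (hn : 3 ≤ n) {j : Fin n} (hj : (j : ℕ) < n - 2) : nuv n hn j = 0 := by
  simp [nuv, cube_ne_yi hn hj, cube_ne_zi hn hj]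

lemma w1v_yi (hn : 3 ≤ n) : w1v n hn (yi n hn) = 1 := by simp [w1v]

lemma w1v_zi (hn : 3 ≤ n) : w1v n hn (zi n hn) = 1 := by simp [w1v]

lemma w1v_cube (hn : 3 ≤ n) {j : Fin n} (hj : (j : ℕ) < n - 2) : w1v n hn j = 0 := by
  simp [w1v, cube_ne_yi hn hj, cube_ne_zi hn hj]

lemma erv_self {r : ℕ} {j : Fin n} (hj : (j : ℕ) = r) : erv n r j = 1 := by simp [erv, hj]

lemma erv_ne {r : ℕ} {j : Fin n} (hj : (j : ℕ) ≠ r) : erv n r j = 0 := by simp [erv, hj]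

lemma Gf_nonneg (x : Vec n) : 0 ≤ Gf n x :=
  Finset.sum_nonneg (fun j _ => le_max_left 0 (x j))

lemma Gf_zero_iff (x : Vec n) :
    Gf n x = 0 ↔ ∀ j : Fin n, (j : ℕ) < n - 2 → x j ≤ 0 := by
  unfold Gf
  rw [Finset.sum_eq_zero_iff_of_nonneg (fun j _ => le_max_left 0 (x j))]
  constructor
  · intro h j hj
    have := h j (Finset.mem_filter.2 ⟨Finset.mem_univ j, hj⟩)
    rw [max_eq_left_iff] at this
    exact this
  · intro h j hj
    rw [max_eq_left_iff]
    exact h j (Finset.mem_filter.1 hj).2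

lemma Gf_shift {v : Vec n} (hv : ∀ j : Fin n, (j : ℕ) < n - 2 → v j = 0)
    (x : Vec n) (s : ℝ) : Gf n (x + s • v) = Gf n x := by
  unfold Gf
  apply Finset.sum_congr rfl
  intro j hj
  have hj' := (Finset.mem_filter.1 hj).2
  simp [hv j hj']

lemma mem_LL1_iff (hn : 3 ≤ n) (x : Vec n) :
    x ∈ LL n hn 1 ↔ x (yi n hn) = x (zi n hn) := by
  unfold LL
  simp only [Set.mem_setOf_eq]
  constructor
  · exact fun h => h.1
  · intro h
    refine ⟨h, by omega, fun j hj => by omega⟩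

/-- the one-sided derivatives of the hard function along `±ν` on the wall `x_y = x_z` -/
lemma FM_evD (hn : 3 ≤ n) {x : Vec n} (hx : x ∈ LL n hn 1) (v : Vec n)
    (hv : v = nuv n hn ∨ v = -nuv n hn) :
    evD (FM n hn) x v (if Gf n x ≤ x (yi n hn) then 1 else 0) := by
  have hτ : x (zi n hn) = x (yi n hn) := ((mem_LL1_iff hn x).1 hx).symm
  set τ := x (yi n hn) with hτdef
  have hcoord : ∀ s : ℝ, 0 < s → FM n hn (x + s • v) = max (Gf n x) (τ + s) := by
    intro s hs
    have hG : Gf n (x + s • v) = Gf n x := by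
      apply Gf_shift _ x s
      intro j hj
      rcases hv with rfl | rfl
      · exact nuv_cube hn hj
      · simp [nuv_cube hn hj]
    have hy : (x + s • v) (yi n hn) = τ + s * (v (yi n hn)) := by
      simp [Pi.add_apply, Pi.smul_apply, smul_eq_mul]; exact hτdef.symm
    have hz : (x + s • v) (zi n hn) = τ + s * (v (zi n hn)) := by
      simp [Pi.add_apply, Pi.smul_apply, smul_eq_mul, hτ]
    unfold FM
    rw [hG, hy, hz]
    rcases hv with rfl | rfl
    · rw [nuv_yi hn, nuv_zi hn]
      congr 1
      rw [max_eq_left (by nlinarith)]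
      ring_nf
    · have hny : (-nuv n hn) (yi n hn) = -1 := by simp [nuv_yi hn]
      have hnz : (-nuv n hn) (zi n hn) = 1 := by simp [nuv_zi hn]
      rw [hny, hnz]
      congr 1
      rw [max_eq_right (by nlinarith)]
      ring_nf
  have hFMx : FM n hn x = max (Gf n x) τ := by
    unfold FM
    rw [← hτdef, hτ, max_self]
  by_cases hc : Gf n x ≤ τ
  · rw [if_pos hc]
    filter_upwards [ev_pos] with s hs
    rw [hcoord s hs, hFMx, max_eq_right hc, max_eq_right (by linarith)]
    ring
  · rw [if_neg hc]
    push_neg at hc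
    filter_upwards [ev_pos, ev_lt_const (show (0:ℝ) < Gf n x - τ by linarith)] with s hs hs2
    rw [hcoord s hs, hFMx, max_eq_left (le_of_lt hc), max_eq_left (by linarith)]
    ring

lemma L1_decomp (hn : 3 ≤ n) (q : Vec n) :
    q - ((q (yi n hn) - q (zi n hn))/2) • nuv n hn ∈ LL n hn 1 := by
  rw [mem_LL1_iff]
  simp only [Pi.sub_apply, Pi.smul_apply, smul_eq_mul, nuv_yi hn, nuv_zi hn]
  ring

lemma dead_L1 (hn : 3 ≤ n) {δ : Vec n} (hdead : ∀ q ∈ LL n hn 1, dotv δ q = 0)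
    {uu : Vec n} (huu : dotv δ uu = 0) (hexit : uu (yi n hn) ≠ uu (zi n hn)) : δ = 0 := by
  haveI : NeZero n := ⟨by omega⟩
  have hq : ∀ q : Vec n, dotv δ q = ((q (yi n hn) - q (zi n hn))/2) * dotv δ (nuv n hn) := by
    intro q
    have h1 := hdead _ (L1_decomp hn q)
    rw [dotv_sub_smul] at h1
    linarith
  have hν0 : dotv δ (nuv n hn) = 0 := by
    have h2 := hq uu
    rw [huu] at h2
    have h3 : (uu (yi n hn) - uu (zi n hn))/2 ≠ 0 := by
      intro h; apply hexit; field_simp at h; linarith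
    field_simp at h2
    rcases mul_eq_zero.1 (by linear_combination -h2 : (uu (yi n hn) - uu (zi n hn)) * dotv δ (nuv n hn) = 0) with h2 | h2
    · exact absurd (by linarith : uu (yi n hn) = uu (zi n hn)) hexit
    · exact h2
  apply eq_zero_of_dotv_self
  rw [hq δ, hν0]
  ring

lemma exit_val_zero (hn : 3 ≤ n) {A : Fin n → Vec n} {uu : Vec n}
    (hties : ∀ j j', dotv (A j) uu = dotv (A j') uu)
    (hexit : uu ∉ LL n hn 1) {x : Vec n}
    (hgoodpairs : ∀ j j' : Fin n, (∃ q ∈ LL n hn 1, dotv (A j - A j') q ≠ 0) →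
      dotv (A j - A j') x ≠ 0) :
    haveI : NeZero n := ⟨by omega⟩
    VAL A x [] (nuv n hn) = 0 := by
  haveI : NeZero n := ⟨by omega⟩
  unfold VAL
  rw [ActC_nil]
  apply VALset_zero (Act_nonempty A x)
  intro j hj j' hj'
  have hδx : dotv (A j - A j') x = 0 := by
    rw [dotv_sub_left]
    have h1 := mem_Act.1 hj j'
    have h2 := mem_Act.1 hj' j
    linarith
  have hdead : ∀ q ∈ LL n hn 1, dotv (A j - A j') q = 0 := by
    by_contra hlive
    push_neg at hlive
    obtain ⟨q, hq1, hq2⟩ := hlive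
    exact hgoodpairs j j' ⟨q, hq1, hq2⟩ hδx
  have hδu : dotv (A j - A j') uu = 0 := by
    rw [dotv_sub_left, hties j j']; ring
  have hδ0 : A j - A j' = 0 := dead_L1 hn hdead hδu
    (fun h => hexit ((mem_LL1_iff hn uu).2 h))
  have : A j = A j' := by
    have := sub_eq_zero.1 hδ0
    exact this
  rw [this]

lemma init (hn : 3 ≤ n) (p : ℕ) (β : Fin p → ℝ) (a : Fin p → Fin n → Vec n)
    (hf : ∀ x : Vec n, FM n hn x = ∑ i, β i *
      Finset.univ.sup' (⟨⟨0, by omega⟩, Finset.mem_univ _⟩) (fun j => dotv (a i j) x)) :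
    haveI : NeZero n := ⟨by omega⟩
    IndStat (nuv n hn) (LL n hn 1) (FF n hn 1) := by
  haveI : NeZero n := ⟨by omega⟩
  classical
  choose u hu0 huties using fun i => exists_inv_dir (show 1 ≤ n by omega) (a i)
  refine ⟨(List.finRange p).flatMap (fun i => if u i ∈ LL n hn 1 then
      [⟨β i, a i, u i, []⟩] else ([] : List (Term n))),
    (List.finRange p).flatMap (fun i => if u i ∈ LL n hn 1 then ([] : List (Vec n)) else
      (pairdiffs (a i)).filter (fun d => ∃ q ∈ LL n hn 1, dotv d q ≠ 0)), ?_, ?_, ?_⟩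
  · intro T hT
    rw [List.mem_flatMap] at hT
    obtain ⟨i, _, hT⟩ := hT
    by_cases hs : u i ∈ LL n hn 1
    · rw [if_pos hs] at hT
      simp only [List.mem_cons, List.not_mem_nil, or_false] at hT
      subst hT
      exact ⟨hs, hu0 i, huties i⟩
    · rw [if_neg hs] at hT
      exact absurd hT List.not_mem_nil
  · intro d hd
    rw [List.mem_flatMap] at hd
    obtain ⟨i, _, hd⟩ := hd
    by_cases hs : u i ∈ LL n hn 1
    · rw [if_pos hs] at hd
      exact absurd hd List.not_mem_nil
    · rw [if_neg hs] at hd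
      rw [List.mem_filter] at hd
      have := hd.2
      simpa using this
  · intro x hx hgood
    have hne0 : (Finset.univ : Finset (Fin n)).Nonempty :=
      ⟨⟨0, by omega⟩, Finset.mem_univ _⟩
    -- the finset-sum identity
    have hA : FF n hn 1 x = ∑ i, β i * VAL (a i) x [] (nuv n hn) := by
      have hjpex := fun i => maxlin_evD (a i) x (nuv n hn)
      choose jp hjpmem hjpev using hjpex
      have hjmex := fun i => maxlin_evD (a i) x (-nuv n hn)
      choose jm hjmmem hjmev using hjmex
      have hkey : ∀ v : Vec n, (c : Fin p → ℝ) →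
          (∀ i, evD (fun y => Finset.univ.sup' hne0 (fun j => dotv (a i j) y)) x v (c i)) →
          evD (FM n hn) x v (∑ i, β i * c i) := by
        intro v c hc
        have hsum := evD_sum Finset.univ
          (fun i y => β i * Finset.univ.sup' hne0 (fun j => dotv (a i j) y)) x v
          (fun i => β i * c i) (fun i _ => evD_smul (β i) (hc i))
        have heq : (fun y => ∑ i, β i * Finset.univ.sup' hne0 (fun j => dotv (a i j) y))
            = FM n hn := by
          funext y
          exact (hf y).symm
        rw [← heq]
        exact hsum
      have hev1 := hkey (nuv n hn) (fun i => dotv (a i (jp i)) (nuv n hn)) (fun i => hjpev i)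
      have hev2 := hkey (-nuv n hn) (fun i => dotv (a i (jm i)) (-nuv n hn)) (fun i => hjmev i)
      have hd1 := FM_evD hn hx (nuv n hn) (Or.inl rfl)
      have hd2 := FM_evD hn hx (-nuv n hn) (Or.inr rfl)
      have e1 := evD_unique hd1 hev1
      have e2 := evD_unique hd2 hev2
      have hFF : FF n hn 1 x = (if Gf n x ≤ x (yi n hn) then (1:ℝ) else 0)
          + (if Gf n x ≤ x (yi n hn) then (1:ℝ) else 0) := by
        unfold FF
        rw [if_neg (by omega : ¬ 2 ≤ 1)]
        by_cases hc : Gf n x ≤ x (yi n hn)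
        · rw [if_pos hc, if_pos hc]; ring
        · rw [if_neg hc, if_neg hc]; ring
      have e12 := congrArg₂ HAdd.hAdd e1 e2
      rw [hFF, e12, ← Finset.sum_add_distrib]
      apply Finset.sum_congr rfl
      intro i _
      have := VALset_stepF_sum (hjpmem i) (hjmmem i)
      unfold VAL
      rw [ActC_nil, ← this]
      ring
    rw [hA]
    have hconv : (∑ i : Fin p, β i * VAL (a i) x [] (nuv n hn)) =
        ((List.finRange p).map (fun i => β i * VAL (a i) x [] (nuv n hn))).sum := by
      rw [← List.ofFn_eq_map]
      exact (List.sum_ofFn).symm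
    rw [hconv, list_sum_map_flatMap]
    apply list_sum_map_congr
    intro i _
    by_cases hs : u i ∈ LL n hn 1
    · rw [if_pos hs]
      show β i * VAL (a i) x [] (nuv n hn) = Term.eval (nuv n hn) ⟨β i, a i, u i, []⟩ x + 0
      unfold Term.eval
      ring
    · rw [if_neg hs]
      show β i * VAL (a i) x [] (nuv n hn) = ([] : List ℝ).sum
      have hz : VAL (a i) x [] (nuv n hn) = 0 := by
        apply exit_val_zero hn (huties i) hs
        intro j j' hlive
        apply hgood
        rw [List.mem_flatMap]
        refine ⟨i, List.mem_finRange i, ?_⟩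
        rw [if_neg hs, List.mem_filter]
        exact ⟨mem_pairdiffs j j', by simpa using hlive⟩
      rw [hz]
      simp

lemma step12 (hn : 3 ≤ n) :
    haveI : NeZero n := ⟨by omega⟩
    IndStat (nuv n hn) (LL n hn 1) (FF n hn 1) → IndStat (nuv n hn) (LL n hn 2) (FF n hn 2) := by
  haveI : NeZero n := ⟨by omega⟩
  intro hind
  apply step_lemma (nuv n hn) (LL n hn 1) (LL n hn 2) (w1v n hn) (FF n hn 1) (FF n hn 2)
    ?_ ?_ ?_ ?_ ?_ hind
  · intro x hx
    exact (mem_LL1_iff hn x).2 hx.1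
  · rw [mem_LL1_iff hn, w1v_yi hn, w1v_zi hn]
  · intro q hq μ
    rw [mem_LL1_iff hn] at hq ⊢
    simp only [Pi.add_apply, Pi.smul_apply, smul_eq_mul, w1v_yi hn, w1v_zi hn, hq]
  · intro q hq
    refine ⟨q (yi n hn), ?_⟩
    have hq1 := (mem_LL1_iff hn q).1 hq
    refine ⟨?_, fun _ => ?_, fun j hj => by omega⟩
    · simp only [Pi.sub_apply, Pi.smul_apply, smul_eq_mul, w1v_yi hn, w1v_zi hn, hq1]
    · simp only [Pi.sub_apply, Pi.smul_apply, smul_eq_mul, w1v_yi hn]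
      ring
  · intro x hx
    have hxy : x (yi n hn) = 0 := hx.2.1 (by omega)
    refine ⟨FF n hn 2 x, 0, ?_, ?_, by ring⟩
    · -- approach along +w1
      have hcoord : ∀ s : ℝ, FF n hn 1 (x + s • w1v n hn) =
          if Gf n x ≤ s then 2 else 0 := by
        intro s
        unfold FF
        rw [if_neg (by omega : ¬ 2 ≤ 1)]
        rw [Gf_shift (fun j hj => w1v_cube hn hj)]
        congr 1
        simp only [Pi.add_apply, Pi.smul_apply, smul_eq_mul, w1v_yi hn, hxy]
        norm_num
      by_cases hG : Gf n x = 0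
      · have hFF2 : FF n hn 2 x = 2 := by
          unfold FF
          rw [if_pos (by omega : 2 ≤ 2)]
          rw [if_pos ?_]
          · norm_num
          · intro j _ hj2
            exact (Gf_zero_iff x).1 hG j hj2
        rw [hFF2]
        filter_upwards [ev_pos] with s hs
        rw [hcoord s, if_pos (by rw [hG]; linarith)]
      · have hGpos : 0 < Gf n x := lt_of_le_of_ne (Gf_nonneg x) (Ne.symm hG)
        have hFF2 : FF n hn 2 x = 0 := by
          unfold FF
          rw [if_pos (by omega : 2 ≤ 2)]
          rw [if_neg ?_]
          intro hall
          apply hG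
          rw [Gf_zero_iff]
          intro j hj
          exact hall j (by omega) hj
        rw [hFF2]
        filter_upwards [ev_lt_const hGpos] with s hs
        rw [hcoord s, if_neg (by linarith)]
    · -- approach along -w1
      have hcoord : ∀ s : ℝ, 0 < s → FF n hn 1 (x + s • (-w1v n hn)) = 0 := by
        intro s hs
        unfold FF
        rw [if_neg (by omega : ¬ 2 ≤ 1)]
        rw [Gf_shift (v := -w1v n hn) (fun j hj => by simp [w1v_cube hn hj])]
        rw [if_neg ?_]
        have h1 : (x + s • (-w1v n hn)) (yi n hn) = -s := by
          simp only [Pi.add_apply, Pi.smul_apply, Pi.neg_apply, smul_eq_mul, w1v_yi hn, hxy]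
          ring
        rw [h1]
        have := Gf_nonneg x
        intro hcon
        linarith
      filter_upwards [ev_pos] with s hs
      exact hcoord s hs

lemma steporth (hn : 3 ≤ n) (r : ℕ) (hr : r + 4 ≤ n) :
    haveI : NeZero n := ⟨by omega⟩
    IndStat (nuv n hn) (LL n hn (2+r)) (FF n hn (2+r)) →
      IndStat (nuv n hn) (LL n hn (3+r)) (FF n hn (3+r)) := by
  haveI : NeZero n := ⟨by omega⟩
  intro hind
  have hyval : ((yi n hn : Fin n) : ℕ) = n - 2 := rfl
  have hzval : ((zi n hn : Fin n) : ℕ) = n - 1 := rfl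
  have hrn : r < n := by omega
  set jr : Fin n := ⟨r, hrn⟩ with hjr
  have hwyi : erv n r (yi n hn) = 0 := erv_ne (by rw [hyval]; omega)
  have hwzi : erv n r (zi n hn) = 0 := erv_ne (by rw [hzval]; omega)
  apply step_lemma (nuv n hn) (LL n hn (2+r)) (LL n hn (3+r)) (erv n r)
    (FF n hn (2+r)) (FF n hn (3+r)) ?_ ?_ ?_ ?_ ?_ hind
  · intro x hx
    exact ⟨hx.1, fun _ => hx.2.1 (by omega), fun j hj => hx.2.2 j (by omega)⟩
  · refine ⟨by rw [hwyi, hwzi], fun _ => hwyi, fun j hj => erv_ne ?_⟩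
    omega
  · intro q hq μ
    refine ⟨?_, fun _ => ?_, fun j hj => ?_⟩
    · simp only [Pi.add_apply, Pi.smul_apply, smul_eq_mul, hwyi, hwzi, hq.1]
    · simp only [Pi.add_apply, Pi.smul_apply, smul_eq_mul, hwyi, hq.2.1 (by omega)]
      ring
    · have h1 : erv n r j = 0 := erv_ne (by omega)
      have h2 : q j = 0 := hq.2.2 j (by omega)
      simp only [Pi.add_apply, Pi.smul_apply, smul_eq_mul, h1, h2]
      ring
  · intro q hq
    refine ⟨q jr, ?_, fun _ => ?_, fun j hj => ?_⟩
    · simp only [Pi.sub_apply, Pi.smul_apply, smul_eq_mul, hwyi, hwzi, hq.1]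
    · simp only [Pi.sub_apply, Pi.smul_apply, smul_eq_mul, hwyi, hq.2.1 (by omega)]
      ring
    · by_cases hjreq : (j : ℕ) = r
      · have : j = jr := Fin.ext (by rw [hjreq])
        rw [this]
        simp only [Pi.sub_apply, Pi.smul_apply, smul_eq_mul, erv_self (show ((jr : Fin n) : ℕ) = r from rfl)]
        ring
      · have h1 : erv n r j = 0 := erv_ne hjreq
        have h2 : q j = 0 := hq.2.2 j (by omega)
        simp only [Pi.sub_apply, Pi.smul_apply, smul_eq_mul, h1, h2]
        ring
  · intro x hx
    have hxr : x jr = 0 := hx.2.2 jr (by simp only [hjr]; omega)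
    refine ⟨0, if (∀ j : Fin n, r + 1 ≤ (j : ℕ) → (j : ℕ) < n - 2 → x j ≤ 0)
      then 2 * (-1 : ℝ)^r else 0, ?_, ?_, ?_⟩
    · -- approach along +erv: always 0
      filter_upwards [ev_pos] with s hs
      unfold FF
      rw [if_pos (by omega : 2 ≤ 2 + r)]
      rw [if_neg ?_]
      intro hall
      have := hall jr (by simp only [hjr]; omega) (by simp only [hjr]; omega)
      rw [Pi.add_apply, Pi.smul_apply, smul_eq_mul, hxr,
        erv_self (show ((jr : Fin n) : ℕ) = r from rfl)] at this
      linarith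
    · -- approach along -erv
      filter_upwards [ev_pos] with s hs
      unfold FF
      rw [if_pos (by omega : 2 ≤ 2 + r)]
      have hcond : (∀ j : Fin n, (2+r) - 2 ≤ (j : ℕ) → (j : ℕ) < n - 2 →
          (x + s • (-erv n r)) j ≤ 0) ↔
          (∀ j : Fin n, r + 1 ≤ (j : ℕ) → (j : ℕ) < n - 2 → x j ≤ 0) := by
        constructor
        · intro h j hj1 hj2
          have := h j (by omega) hj2
          rw [Pi.add_apply, Pi.smul_apply, Pi.neg_apply, smul_eq_mul,
            erv_ne (by omega : (j : ℕ) ≠ r)] at this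
          linarith
        · intro h j hj1 hj2
          by_cases hjeq : (j : ℕ) = r
          · have hj' : j = jr := Fin.ext (by rw [hjeq])
            rw [hj']
            rw [Pi.add_apply, Pi.smul_apply, Pi.neg_apply, smul_eq_mul, hxr,
              erv_self (show ((jr : Fin n) : ℕ) = r from rfl)]
            linarith
          · rw [Pi.add_apply, Pi.smul_apply, Pi.neg_apply, smul_eq_mul, erv_ne hjeq]
            have := h j (by omega) hj2
            linarith
      by_cases hc : ∀ j : Fin n, r + 1 ≤ (j : ℕ) → (j : ℕ) < n - 2 → x j ≤ 0
      · rw [if_pos (hcond.2 hc), if_pos hc]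
        have h22 : (2 + r) - 2 = r := by omega
        rw [h22]
      · rw [if_neg (fun h => hc (hcond.1 h)), if_neg hc]
    · -- FF (3+r) x = 0 - aM
      unfold FF
      rw [if_pos (by omega : 2 ≤ 3 + r)]
      have h32 : (3 + r) - 2 = r + 1 := by omega
      by_cases hc : ∀ j : Fin n, r + 1 ≤ (j : ℕ) → (j : ℕ) < n - 2 → x j ≤ 0
      · rw [if_pos (by rw [h32]; exact hc), if_pos hc, h32]
        rw [pow_succ]
        ring
      · rw [if_neg (by rw [h32]; exact hc), if_neg hc]
        ring

lemma glue (hn : 3 ≤ n)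
    (h2 : haveI : NeZero n := ⟨by omega⟩;
      IndStat (nuv n hn) (LL n hn 2) (FF n hn 2)) :
    ∀ r : ℕ, r + 3 ≤ n →
      (haveI : NeZero n := ⟨by omega⟩;
        IndStat (nuv n hn) (LL n hn (2+r)) (FF n hn (2+r))) := by
  haveI : NeZero n := ⟨by omega⟩
  intro r
  induction r with
  | zero => intro _; exact h2
  | succ r ih =>
    intro hr
    have h1 := ih (by omega)
    have h2' := steporth hn r (by omega) h1
    have heq : 3 + r = 2 + (r + 1) := by omega
    rw [heq] at h2'
    exact h2'

lemma base_contra (hn : 3 ≤ n)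
    (hind : haveI : NeZero n := ⟨by omega⟩;
      IndStat (nuv n hn) (LL n hn (2 + (n-3))) (FF n hn (2 + (n-3)))) : False := by
  haveI : NeZero n := ⟨by omega⟩
  obtain ⟨Ts, E, hTs, hE, hid⟩ := hind
  set K := 2 + (n - 3) with hK
  have hK2 : 2 ≤ K := by omega
  have hKm2 : K - 2 = n - 3 := by omega
  have hjm1lt : n - 3 < n := by omega
  set jm1 : Fin n := ⟨n-3, hjm1lt⟩ with hjm1
  set eb : Vec n := erv n (n-3) with heb
  have hebjm1 : eb jm1 = 1 := erv_self rfl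
  have hebyi : eb (yi n hn) = 0 := erv_ne (by show n - 2 ≠ n - 3; omega)
  have hebzi : eb (zi n hn) = 0 := erv_ne (by show n - 1 ≠ n - 3; omega)
  have char : ∀ x ∈ LL n hn K, x = (x jm1) • eb := by
    intro x hx
    funext t
    rw [Pi.smul_apply, smul_eq_mul]
    by_cases ht : (t : ℕ) = n - 3
    · have ht' : t = jm1 := Fin.ext (by rw [ht])
      rw [ht', hebjm1]; ring
    · have hebt : eb t = 0 := erv_ne ht
      rw [hebt]
      have hxt : x t = 0 := by
        rcases lt_or_ge ((t : ℕ)) (n - 3) with h | h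
        · exact hx.2.2 t (by omega)
        · have htlt := t.isLt
          rcases (by omega : (t : ℕ) = n - 2 ∨ (t : ℕ) = n - 1) with h2 | h2
          · have : t = yi n hn := Fin.ext h2
            rw [this]; exact hx.2.1 hK2
          · have : t = zi n hn := Fin.ext h2
            rw [this, ← hx.1]; exact hx.2.1 hK2
      rw [hxt]; ring
  have hpmem : ∀ c : ℝ, c • eb ∈ LL n hn K := by
    intro c
    refine ⟨?_, fun _ => ?_, fun j hj => ?_⟩
    · simp only [Pi.smul_apply, smul_eq_mul, hebyi, hebzi]
    · simp only [Pi.smul_apply, smul_eq_mul, hebyi]; ring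
    · have : eb j = 0 := erv_ne (by omega)
      simp only [Pi.smul_apply, smul_eq_mul, this]; ring
  set pP : Vec n := (1 : ℝ) • eb with hpP
  set pM : Vec n := (-1 : ℝ) • eb with hpM
  have hgood : ∀ c : ℝ, c ≠ 0 → ∀ d ∈ E, dotv d (c • eb) ≠ 0 := by
    intro c hc d hd
    obtain ⟨q, hq, hdq⟩ := hE d hd
    have hqeq := char q hq
    rw [hqeq, dotv_smul] at hdq
    have hdeb : dotv d eb ≠ 0 := fun h => hdq (by rw [h]; ring)
    rw [dotv_smul]
    exact mul_ne_zero hc hdeb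
  have hidP := hid pP (hpmem 1) (hgood 1 one_ne_zero)
  have hidM := hid pM (hpmem (-1)) (hgood (-1) (by norm_num))
  have hsums : (Ts.map (fun T => Term.eval (nuv n hn) T pP)).sum =
      (Ts.map (fun T => Term.eval (nuv n hn) T pM)).sum := by
    apply list_sum_map_congr
    intro T hT
    obtain ⟨huL, hu0, huties⟩ := hTs T hT
    have huc := char T.u huL
    set c := T.u jm1 with hc
    have hc0 : c ≠ 0 := by
      intro h
      apply hu0
      rw [huc, h, zero_smul]
    have hPM : pP = pM + (2/c) • T.u := by
      rw [huc, hpP, hpM, smul_smul]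
      have : (2/c) * c = 2 := by field_simp
      rw [this, ← add_smul]
      norm_num
    unfold Term.eval
    rw [hPM, VAL_shift huties]
  rw [← hidP, ← hidM] at hsums
  -- but FF K pP = 0 and FF K pM ≠ 0
  have hFP : FF n hn K pP = 0 := by
    unfold FF
    rw [if_pos hK2, if_neg ?_]
    intro hall
    have := hall jm1 (by rw [hKm2]) (by show (n:ℕ) - 3 < n - 2; omega)
    rw [hpP, Pi.smul_apply, smul_eq_mul, hebjm1] at this
    linarith
  have hFM : FF n hn K pM = 2 * (-1 : ℝ)^(K-2) := by
    unfold FF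
    rw [if_pos hK2, if_pos ?_]
    intro j hj1 hj2
    have hjv : (j : ℕ) = n - 3 := by omega
    have hjeq : j = jm1 := Fin.ext (by rw [hjv, hjm1])
    rw [hjeq, hpM, Pi.smul_apply, smul_eq_mul, hebjm1]
    norm_num
  rw [hFP, hFM] at hsums
  have : (2 : ℝ) * (-1)^(K-2) ≠ 0 :=
    mul_ne_zero two_ne_zero (pow_ne_zero _ (by norm_num))
  exact this hsums.symm

lemma isup_eq_sup' (hnz : 0 < n) (g : Fin n → ℝ) :
    haveI : NeZero n := ⟨by omega⟩
    (⨆ j, g j) = Finset.univ.sup' (⟨⟨0, hnz⟩, Finset.mem_univ _⟩) g := by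
  haveI : NeZero n := ⟨by omega⟩
  apply le_antisymm
  · exact ciSup_le fun j => Finset.le_sup' g (Finset.mem_univ j)
  · exact Finset.sup'_le _ g fun j _ =>
      le_ciSup (Set.Finite.bddAbove (Set.finite_range g)) j

end Main

end HardMaxProof

/-- `f(x) = max{Σ_{j=1}^{n-2} max{0,x_j}, x_{n-1}, x_n}` is not in
`MAX_n(n)`. -/
theorem hard_function_not_in_MAXn {n : ℕ} (hn : 3 ≤ n) :
    (fun x : Vec n =>
      max (∑ j ∈ Finset.univ.filter (fun j : Fin n => (j : ℕ) < n - 2), max 0 (x j))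
        (max (x ⟨n - 2, by omega⟩) (x ⟨n - 1, by omega⟩))) ∉ MAXn n n := by
  intro hmem
  obtain ⟨p, β, a, hfe⟩ := hmem
  haveI : NeZero n := ⟨by omega⟩
  have hnz : 0 < n := by omega
  have hf : ∀ x : Vec n, HardMaxProof.FM n hn x = ∑ i, β i *
      Finset.univ.sup' (⟨⟨0, by omega⟩, Finset.mem_univ _⟩)
        (fun j => HardMaxProof.dotv (a i j) x) := by
    intro x
    have h1 := congrFun hfe x
    have h2 : HardMaxProof.FM n hn x = ∑ i, β i * ⨆ j, ∑ t, a i j t * x t := h1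
    rw [h2]
    apply Finset.sum_congr rfl
    intro i _
    congr 1
    exact HardMaxProof.isup_eq_sup' hnz (fun j => HardMaxProof.dotv (a i j) x)
  exact HardMaxProof.base_contra hn
    (HardMaxProof.glue hn
      (HardMaxProof.step12 hn (HardMaxProof.init hn p β a hf)) (n-3) (by omega))
end SparseMaxout
end

section
/- Fix ℓ ≥ 2 and d = (d_1,…,d_ℓ), r = (r_1,…,r_ℓ) ∈ ℕ^ℓ with d_1 = n, d_i ≥ 2 and r_i ≥ 2 for all i, and set m_ℓ := Σ_{k=1}^ℓ (r_k − 1)·∏_{i=k+1}^ℓ d_i. If n ≥ m_ℓ + 1, then N_n(ℓ,d,r) ⊊ N_n(ℓ,r): there is a function computable by an unconstrained rank-r maxout network with ℓ hidden layers (in fact, by a rank-2 maxout network with two hidden layers) that is not computable by any indegree-d-constrained rank-r maxout network with ℓ hidden layers, regardless of its width. -/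
open Pointwise

noncomputable section SparseMaxout

section AuxProofMachinery
open Finset
open scoped Classical

def relu (t : ℝ) : ℝ := max t 0

lemma relu_of_nonneg {t : ℝ} (h : 0 ≤ t) : relu t = t := max_eq_left h
lemma relu_of_nonpos {t : ℝ} (h : t ≤ 0) : relu t = 0 := max_eq_right h

lemma exists_gap {ι : Type} [Fintype ι] (A : ι → ℝ) (v : ℝ) :
    ∃ δ : ℝ, 0 < δ ∧ ∀ α, A α ≠ v → δ ≤ |A α - v| := by
  by_cases hs : (univ.filter (fun α => A α ≠ v)).Nonempty
  · set s := (univ.filter (fun α => A α ≠ v)).image (fun α => |A α - v|) with hsdef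
    have hsne : s.Nonempty := hs.image _
    refine ⟨s.min' hsne, ?_, ?_⟩
    · obtain ⟨α, hα, hval⟩ := mem_image.mp (s.min'_mem hsne)
      rw [mem_filter] at hα
      rw [← hval]
      exact abs_pos.mpr (sub_ne_zero.mpr hα.2)
    · intro α hα
      exact s.min'_le _ (mem_image.mpr ⟨α, mem_filter.mpr ⟨mem_univ _, hα⟩, rfl⟩)
  · exact ⟨1, one_pos, fun α hα => (hs ⟨α, mem_filter.mpr ⟨mem_univ _, hα⟩⟩).elim⟩

lemma L0 {ι : Type} [Fintype ι] (lam A : ι → ℝ)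
    (hyp : ∀ t : ℝ, ∑ α, lam α * relu (A α + t) = 0) (v : ℝ) :
    ∑ α ∈ univ.filter (fun α => A α = v), lam α = 0 := by
  obtain ⟨δ, hδ, hgap⟩ := exists_gap A v
  have key : ∀ α, relu (A α + (δ - v)) + relu (A α + (-δ - v)) - 2 * relu (A α + (-v))
      = if A α = v then δ else 0 := by
    intro α
    by_cases h : A α = v
    · rw [if_pos h, h]
      have e1 : v + (δ - v) = δ := by ring
      have e2 : v + (-δ - v) = -δ := by ring
      have e3 : v + -v = 0 := by ring
      rw [e1, e2, e3, relu_of_nonneg hδ.le, relu_of_nonpos (by linarith), relu_of_nonpos le_rfl]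
      ring
    · rw [if_neg h]
      have hg := hgap α h
      rcases le_abs.mp hg with h1 | h1
      · rw [relu_of_nonneg (by linarith), relu_of_nonneg (by linarith), relu_of_nonneg (by linarith)]
        ring
      · rw [relu_of_nonpos (by linarith), relu_of_nonpos (by linarith), relu_of_nonpos (by linarith)]
        ring
  have sum0 : ∑ α, lam α * (if A α = v then δ else 0) = 0 := by
    have h1 := hyp (δ - v); have h2 := hyp (-δ - v); have h3 := hyp (-v)
    have step : ∑ α, lam α * (if A α = v then δ else 0)
        = (∑ α, lam α * relu (A α + (δ - v))) + (∑ α, lam α * relu (A α + (-δ - v)))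
          - 2 * (∑ α, lam α * relu (A α + (-v))) := by
      rw [← Finset.sum_add_distrib, Finset.mul_sum, ← Finset.sum_sub_distrib]
      apply Finset.sum_congr rfl; intro α _
      rw [← key α]; ring
    rw [step, h1, h2, h3]; ring
  have conv : ∑ α, lam α * (if A α = v then δ else 0)
      = (∑ α ∈ univ.filter (fun α => A α = v), lam α) * δ := by
    rw [Finset.sum_mul, Finset.sum_filter]
    apply Finset.sum_congr rfl; intro α _
    by_cases h : A α = v <;> simp [h]
  rw [conv] at sum0
  exact (mul_eq_zero.mp sum0).resolve_right (ne_of_gt hδ)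

lemma exists_avoid (lo hi : ℝ) (h : lo < hi) (B : Finset ℝ) :
    ∃ t, lo < t ∧ t < hi ∧ t ∉ B := by
  have hinf : ((Set.Ioo lo hi) \ (B : Set ℝ)).Infinite :=
    (Set.infinite_coe_iff.mp (Set.Ioo.infinite h)).diff B.finite_toSet
  obtain ⟨t, ht⟩ := hinf.nonempty
  exact ⟨t, ht.1.1, ht.1.2, fun hb => ht.2 (by exact_mod_cast hb)⟩

lemma oneD {ι : Type} [Fintype ι] (lam a c : ι → ℝ)
    (hyp : ∀ t v : ℝ, ∑ α ∈ univ.filter (fun α => relu (t + a α) + c α = v), lam α = 0)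
    (a0 c0 : ℝ) :
    ∑ α ∈ univ.filter (fun α => a α = a0 ∧ c α = c0), lam α = 0 := by
  set B : Finset ℝ := Finset.image (fun α => c0 - c α - a α) univ with hBdef
  have S1 : ∑ α ∈ univ.filter (fun α => a α ≤ a0 ∧ c α = c0), lam α = 0 := by
    set F1 : Finset ℝ := insert (-a0 - 1) ((univ.filter (fun α => a0 < a α)).image (fun α => -a α)) with hF1
    have hne : F1.Nonempty := insert_nonempty _ _
    have hm1 : F1.max' hne < -a0 := by
      rw [Finset.max'_lt_iff]
      intro y hy
      rw [hF1, mem_insert] at hy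
      rcases hy with rfl | hy
      · linarith
      · rw [mem_image] at hy; obtain ⟨α, hα, rfl⟩ := hy
        rw [mem_filter] at hα; linarith [hα.2]
    obtain ⟨t, hlo, hhi, htB⟩ := exists_avoid _ _ hm1 B
    have hy := hyp t c0
    have heq : univ.filter (fun α => relu (t + a α) + c α = c0)
        = univ.filter (fun α => a α ≤ a0 ∧ c α = c0) := by
      apply filter_congr
      intro α _
      by_cases hle : a α ≤ a0
      · have hflat : t + a α ≤ 0 := by linarith
        rw [relu_of_nonpos hflat]
        simp [hle]
      · push_neg at hle
        have hmem : -a α ≤ F1.max' hne := le_max' _ _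
          (by rw [hF1]; exact mem_insert_of_mem (mem_image.mpr ⟨α, mem_filter.mpr ⟨mem_univ _, hle⟩, rfl⟩))
        have hpos : 0 ≤ t + a α := by linarith
        rw [relu_of_nonneg hpos]
        constructor
        · intro habs; exfalso; apply htB
          rw [hBdef, mem_image]
          exact ⟨α, mem_univ _, by linarith⟩
        · rintro ⟨h1, -⟩; exact absurd h1 (not_le.mpr hle)
    rw [heq] at hy; exact hy
  have S2 : ∑ α ∈ univ.filter (fun α => a α < a0 ∧ c α = c0), lam α = 0 := by
    set F2 : Finset ℝ := insert (-a0 + 1) ((univ.filter (fun α => a α < a0)).image (fun α => -a α)) with hF2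
    have hne : F2.Nonempty := insert_nonempty _ _
    have hm2 : -a0 < F2.min' hne := by
      rw [Finset.lt_min'_iff]
      intro y hy
      rw [hF2, mem_insert] at hy
      rcases hy with rfl | hy
      · linarith
      · rw [mem_image] at hy; obtain ⟨α, hα, rfl⟩ := hy
        rw [mem_filter] at hα; linarith [hα.2]
    obtain ⟨t, hlo, hhi, htB⟩ := exists_avoid _ _ hm2 B
    have hy := hyp t c0
    have heq : univ.filter (fun α => relu (t + a α) + c α = c0)
        = univ.filter (fun α => a α < a0 ∧ c α = c0) := by
      apply filter_congr
      intro α _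
      by_cases hlt : a α < a0
      · have hmem : F2.min' hne ≤ -a α := min'_le _ _
          (by rw [hF2]; exact mem_insert_of_mem (mem_image.mpr ⟨α, mem_filter.mpr ⟨mem_univ _, hlt⟩, rfl⟩))
        have hflat : t + a α ≤ 0 := by linarith
        rw [relu_of_nonpos hflat]
        simp [hlt]
      · push_neg at hlt
        have hpos : 0 ≤ t + a α := by linarith
        rw [relu_of_nonneg hpos]
        constructor
        · intro habs; exfalso; apply htB
          rw [hBdef, mem_image]
          exact ⟨α, mem_univ _, by linarith⟩
        · rintro ⟨h1, -⟩; exact absurd h1 (not_lt.mpr hlt)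
    rw [heq] at hy; exact hy
  have hsplit : univ.filter (fun α => a α ≤ a0 ∧ c α = c0)
      = univ.filter (fun α => a α = a0 ∧ c α = c0) ∪ univ.filter (fun α => a α < a0 ∧ c α = c0) := by
    ext α
    simp only [mem_union, mem_filter, mem_univ, true_and]
    constructor
    · rintro ⟨hle, hc⟩
      rcases lt_or_eq_of_le hle with h | h
      · exact Or.inr ⟨h, hc⟩
      · exact Or.inl ⟨h, hc⟩
    · rintro (⟨h, hc⟩ | ⟨h, hc⟩)
      exacts [⟨le_of_eq h, hc⟩, ⟨h.le, hc⟩]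
  have hdis : Disjoint (univ.filter (fun α => a α = a0 ∧ c α = c0))
      (univ.filter (fun α => a α < a0 ∧ c α = c0)) := by
    rw [Finset.disjoint_left]
    intro α h1 h2
    rw [mem_filter] at h1 h2
    exact (ne_of_lt h2.2.1) h1.2.1
  rw [hsplit, Finset.sum_union hdis] at S1
  linarith [S1, S2]


lemma fin_snoc_ext {K : ℕ} (f g : Fin (K+1) → ℝ)
    (h1 : ∀ j : Fin K, f j.castSucc = g j.castSucc) (h2 : f (Fin.last K) = g (Fin.last K)) :
    f = g := by
  funext j
  induction j using Fin.lastCases with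
  | last => exact h2
  | cast j => exact h1 j

lemma VGI : ∀ (K : ℕ) {ι : Type} [Fintype ι] (s : ι → Fin K → ℝ) (b lam : ι → ℝ),
    (∀ (y : Fin K → ℝ) (v : ℝ),
      ∑ α ∈ univ.filter (fun α => (∑ j, relu (y j + s α j)) - b α = v), lam α = 0) →
    ∀ (σ : Fin K → ℝ) (b0 : ℝ),
      ∑ α ∈ univ.filter (fun α => s α = σ ∧ b α = b0), lam α = 0 := by
  intro K
  induction K with
  | zero =>
    intro ι _ s b lam hyp σ b0
    have h := hyp (fun j => j.elim0) (-b0)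
    have heq : univ.filter (fun α => (∑ j : Fin 0, relu ((fun j => j.elim0) j + s α j)) - b α = -b0)
        = univ.filter (fun α => s α = σ ∧ b α = b0) := by
      apply filter_congr
      intro α _
      simp only [Finset.univ_eq_empty, Finset.sum_empty]
      constructor
      · intro hcond
        exact ⟨funext fun j => j.elim0, by linarith⟩
      · rintro ⟨-, hb⟩; rw [hb]; ring
    rw [heq] at h; exact h
  | succ K IH =>
    intro ι _ s b lam hyp σ b0
    have step : ∀ (y' : Fin K → ℝ) (a0 v : ℝ),
        ∑ α ∈ univ.filter (fun α => s α (Fin.last K) = a0 ∧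
          (∑ j : Fin K, relu (y' j + s α j.castSucc)) - b α = v), lam α = 0 := by
      intro y' a0 v
      refine oneD lam (fun α => s α (Fin.last K))
        (fun α => (∑ j : Fin K, relu (y' j + s α j.castSucc)) - b α) ?_ a0 v
      intro t v'
      have h2 := hyp (Fin.snoc y' t : Fin (K+1) → ℝ) v'
      have heq : univ.filter (fun α => (∑ j, relu ((Fin.snoc y' t : Fin (K+1) → ℝ) j + s α j)) - b α = v')
          = univ.filter (fun α => relu (t + s α (Fin.last K)) +
              ((∑ j : Fin K, relu (y' j + s α j.castSucc)) - b α) = v') := by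
        apply filter_congr
        intro α _
        rw [Fin.sum_univ_castSucc]
        have hc : ∀ j : Fin K, (Fin.snoc y' t : Fin (K+1) → ℝ) j.castSucc = y' j := fun j => by simp
        have hl : (Fin.snoc y' t : Fin (K+1) → ℝ) (Fin.last K) = t := by simp
        rw [Finset.sum_congr rfl (fun j _ => by rw [hc j]), hl]
        constructor <;> intro h <;> linarith [h]
      rw [heq] at h2; exact h2
    have hIH := IH (fun α => fun j : Fin K => s α j.castSucc) b
      (fun α => if s α (Fin.last K) = σ (Fin.last K) then lam α else 0) ?_
      (fun j => σ j.castSucc) b0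
    · rw [← Finset.sum_filter, Finset.filter_filter] at hIH
      have heq2 : univ.filter (fun α => ((fun j : Fin K => s α j.castSucc) = (fun j : Fin K => σ j.castSucc) ∧ b α = b0)
            ∧ s α (Fin.last K) = σ (Fin.last K))
          = univ.filter (fun α => s α = σ ∧ b α = b0) := by
        apply filter_congr
        intro α _
        constructor
        · rintro ⟨⟨hcs, hb⟩, hlast⟩
          exact ⟨fin_snoc_ext _ _ (fun j => congrFun hcs j) hlast, hb⟩
        · rintro ⟨hs, hb⟩
          exact ⟨⟨funext fun j => by rw [hs], hb⟩, by rw [hs]⟩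
      rw [heq2] at hIH; exact hIH
    · intro y v
      rw [← Finset.sum_filter, Finset.filter_filter]
      have heq3 : univ.filter (fun α => ((∑ j, relu (y j + s α j.castSucc)) - b α = v)
            ∧ s α (Fin.last K) = σ (Fin.last K))
          = univ.filter (fun α => s α (Fin.last K) = σ (Fin.last K) ∧
              (∑ j : Fin K, relu (y j + s α j.castSucc)) - b α = v) := by
        apply filter_congr
        intro α _
        exact and_comm
      rw [heq3]
      exact step y (σ (Fin.last K)) v

def Fcan (K : ℕ) (z : Fin (K+1) → ℝ) : ℝ := relu ((∑ j : Fin K, relu (z j.succ)) - z 0)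

lemma TI (K : ℕ) {ι : Type} [Fintype ι] (sh : ι → Fin (K+1) → ℝ)
    (hinj : Function.Injective sh) (lam : ι → ℝ)
    (hyp : ∀ y : Fin (K+1) → ℝ, ∑ α, lam α * Fcan K (y + sh α) = 0) :
    ∀ α, lam α = 0 := by
  have h1 : ∀ (y' : Fin K → ℝ) (v : ℝ),
      ∑ α ∈ univ.filter (fun α => (∑ j : Fin K, relu (y' j + sh α j.succ)) - sh α 0 = v), lam α = 0 := by
    intro y' v
    refine L0 lam (fun α => (∑ j : Fin K, relu (y' j + sh α j.succ)) - sh α 0) ?_ v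
    intro t
    have h2 := hyp (Fin.cons (-t) y' : Fin (K+1) → ℝ)
    have hconv : ∀ α, Fcan K ((Fin.cons (-t) y' : Fin (K+1) → ℝ) + sh α)
        = relu ((∑ j : Fin K, relu (y' j + sh α j.succ)) - sh α 0 + t) := by
      intro α
      unfold Fcan
      have hz0 : ((Fin.cons (-t) y' : Fin (K+1) → ℝ) + sh α) 0 = -t + sh α 0 := by
        simp [Pi.add_apply]
      have hzs : ∀ j : Fin K, ((Fin.cons (-t) y' : Fin (K+1) → ℝ) + sh α) j.succ = y' j + sh α j.succ := by
        intro j; simp [Pi.add_apply]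
      rw [hz0, Finset.sum_congr rfl (fun j _ => by rw [hzs j])]
      congr 1
      ring
    rw [Finset.sum_congr rfl (fun α _ => by rw [hconv α])] at h2
    exact h2
  intro α0
  have h3 := VGI K (fun α => fun j => sh α j.succ) (fun α => sh α 0) lam h1
    (fun j => sh α0 j.succ) (sh α0 0)
  have heq : univ.filter (fun α => (fun j : Fin K => sh α j.succ) = (fun j => sh α0 j.succ)
        ∧ sh α 0 = sh α0 0) = {α0} := by
    ext α
    simp only [mem_filter, mem_univ, true_and, mem_singleton]
    constructor
    · rintro ⟨hs, h0⟩
      apply hinj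
      funext j
      induction j using Fin.cases with
      | zero => exact h0
      | succ j => exact congrFun hs j
    · rintro rfl; exact ⟨rfl, rfl⟩
  rw [heq, Finset.sum_singleton] at h3
  exact h3


lemma ciSup_add_const {ι : Type} [Fintype ι] [Nonempty ι] (u : ι → ℝ) (C : ℝ) :
    (⨆ i, (u i + C)) = (⨆ i, u i) + C :=
  (ciSup_add (Set.finite_range u).bddAbove C).symm

lemma fin_ciSup_eq_max {ι : Type} [Fintype ι] (u : ι → ℝ) (i0 i1 : ι) (a b : ℝ)
    (h0 : u i0 = a) (h1 : u i1 = b) (hall : ∀ i, u i = a ∨ u i = b) :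
    (⨆ i, u i) = max a b := by
  haveI : Nonempty ι := ⟨i0⟩
  apply le_antisymm
  · apply ciSup_le
    intro i
    rcases hall i with h | h <;> rw [h]
    · exact le_max_left _ _
    · exact le_max_right _ _
  · exact max_le (h0 ▸ le_ciSup (Set.finite_range u).bddAbove i0)
      (h1 ▸ le_ciSup (Set.finite_range u).bddAbove i1)

lemma pairing {V : Type} [AddCommGroup V] {q : ℕ} (hq : 2 ≤ q) (vv : Fin q → V)
    (i : Fin q) (h : V → ℝ) (κ : ℝ) (hh : ∀ x, h (x + vv i) = h x + κ) (x : V) :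
    ∑ S : Finset (Fin q), (-1 : ℝ) ^ S.card * h (x + ∑ j ∈ S, vv j) = 0 := by
  rw [← Finset.powerset_univ]
  rw [show (univ : Finset (Fin q)) = insert i (univ.erase i) from (Finset.insert_erase (mem_univ i)).symm]
  rw [Finset.sum_powerset_insert (notMem_erase i univ)]
  rw [← Finset.sum_add_distrib]
  have hstep : ∀ S ∈ (univ.erase i).powerset,
      (-1:ℝ)^S.card * h (x + ∑ j ∈ S, vv j) + (-1:ℝ)^(insert i S).card * h (x + ∑ j ∈ insert i S, vv j)
      = -κ * (-1:ℝ)^S.card := by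
    intro S hS
    have hiS : i ∉ S := fun hmem => (notMem_erase i univ) (mem_powerset.mp hS hmem)
    rw [Finset.sum_insert hiS, Finset.card_insert_of_notMem hiS]
    have harg : h (x + (vv i + ∑ j ∈ S, vv j)) = h (x + ∑ j ∈ S, vv j) + κ := by
      rw [show x + (vv i + ∑ j ∈ S, vv j) = (x + ∑ j ∈ S, vv j) + vv i by abel]
      exact hh _
    rw [harg, pow_succ]
    ring
  rw [Finset.sum_congr rfl hstep, ← Finset.mul_sum]
  have hne : (univ.erase i) ≠ ∅ := by
    have hc : (univ.erase i).card = q - 1 := by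
      rw [Finset.card_erase_of_mem (mem_univ i), Finset.card_univ, Fintype.card_fin]
    intro hempty
    rw [hempty, Finset.card_empty] at hc
    omega
  have hz : ∑ S ∈ (univ.erase i).powerset, (-1:ℝ)^S.card = 0 := by
    have h2 := Finset.sum_powerset_neg_one_pow_card (x := univ.erase i)
    rw [if_neg hne] at h2
    have h3 : ((∑ S ∈ (univ.erase i).powerset, (-1:ℤ)^S.card : ℤ) : ℝ) = ((0:ℤ):ℝ) := by rw [h2]
    push_cast at h3
    exact h3
  rw [hz, mul_zero]

lemma exists_scalars {M : ℕ} {ι : Type} [Fintype ι] (v : ι → (Fin M → ℝ)) (hv : ∀ i, v i ≠ 0) :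
    ∃ c : ι → ℝ, ∀ S T : Finset ι, (∑ i ∈ S, c i • v i) = (∑ i ∈ T, c i • v i) → S = T := by
  suffices h : ∀ s : Finset ι, ∃ c : ι → ℝ, ∀ S T, S ⊆ s → T ⊆ s →
      (∑ i ∈ S, c i • v i) = (∑ i ∈ T, c i • v i) → S = T by
    obtain ⟨c, hc⟩ := h univ
    exact ⟨c, fun S T h' => hc S T (subset_univ S) (subset_univ T) h'⟩
  intro s
  induction s using Finset.cons_induction with
  | empty =>
    exact ⟨fun _ => 0, fun S T hS hT _ => by
      rw [Finset.subset_empty.mp hS, Finset.subset_empty.mp hT]⟩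
  | cons a s' ha IH =>
    obtain ⟨c', hc'⟩ := IH
    have hex : ∃ j0, v a j0 ≠ 0 := by
      by_contra hno; push_neg at hno; exact hv a (funext hno)
    obtain ⟨j0, hj0⟩ := hex
    set B : Finset ℝ := Finset.image
      (fun P : Finset ι × Finset ι =>
        ((∑ i ∈ P.2, c' i • v i) j0 - (∑ i ∈ P.1, c' i • v i) j0) / v a j0)
      (s'.powerset ×ˢ s'.powerset) with hBdef
    obtain ⟨x, hx⟩ := Infinite.exists_notMem_finset B
    refine ⟨Function.update c' a x, ?_⟩
    intro S T hS hT heq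
    have key : ∀ W : Finset ι, W ⊆ Finset.cons a s' ha →
        (∑ i ∈ W, Function.update c' a x i • v i)
          = (if a ∈ W then x • v a else 0) + ∑ i ∈ W.erase a, c' i • v i := by
      intro W hW
      have herase : ∀ i ∈ W.erase a, Function.update c' a x i • v i = c' i • v i := by
        intro i hi
        rw [Function.update_of_ne (Finset.ne_of_mem_erase hi)]
      by_cases haW : a ∈ W
      · rw [if_pos haW, ← Finset.add_sum_erase _ _ haW, Function.update_self]
        congr 1
        exact Finset.sum_congr rfl herase
      · rw [if_neg haW, zero_add, Finset.erase_eq_of_notMem haW]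
        apply Finset.sum_congr rfl
        intro i hi
        rw [Function.update_of_ne (fun hia => haW (by rwa [hia] at hi))]
    have hSe : S.erase a ⊆ s' := by
      intro i hi
      have := hS (Finset.mem_of_mem_erase hi)
      rw [Finset.mem_cons] at this
      rcases this with h1 | h1
      · exact absurd h1 (Finset.ne_of_mem_erase hi)
      · exact h1
    have hTe : T.erase a ⊆ s' := by
      intro i hi
      have := hT (Finset.mem_of_mem_erase hi)
      rw [Finset.mem_cons] at this
      rcases this with h1 | h1
      · exact absurd h1 (Finset.ne_of_mem_erase hi)
      · exact h1
    rw [key S hS, key T hT] at heq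
    have contra : ∀ (W1 W2 : Finset ι), W1 ⊆ s' → W2 ⊆ s' →
        x • v a + (∑ i ∈ W1, c' i • v i) = (∑ i ∈ W2, c' i • v i) → False := by
      intro W1 W2 hW1 hW2 habs
      apply hx
      rw [hBdef, Finset.mem_image]
      refine ⟨(W1, W2), Finset.mem_product.mpr ⟨Finset.mem_powerset.mpr hW1, Finset.mem_powerset.mpr hW2⟩, ?_⟩
      have hcf := congrFun habs j0
      simp only [Pi.add_apply, Pi.smul_apply, smul_eq_mul, Finset.sum_apply] at hcf
      rw [div_eq_iff hj0]
      simp only [Finset.sum_apply, Pi.smul_apply, smul_eq_mul]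
      linarith [hcf]
    by_cases haS : a ∈ S <;> by_cases haT : a ∈ T
    · rw [if_pos haS, if_pos haT] at heq
      have h2 : (∑ i ∈ S.erase a, c' i • v i) = (∑ i ∈ T.erase a, c' i • v i) := by
        have := add_left_cancel heq
        exact this
      have := hc' _ _ hSe hTe h2
      rw [← Finset.insert_erase haS, ← Finset.insert_erase haT, this]
    · rw [if_pos haS, if_neg haT, zero_add] at heq
      exact absurd heq (fun habs => contra _ _ hSe hTe habs)
    · rw [if_neg haS, if_pos haT, zero_add] at heq
      exact absurd heq.symm (fun habs => contra _ _ hTe hSe habs)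
    · rw [if_neg haS, if_neg haT, zero_add, zero_add] at heq
      have := hc' _ _ hSe hTe heq
      rw [Finset.erase_eq_of_notMem haS, Finset.erase_eq_of_notMem haT] at this
      exact this

variable {n : ℕ}

lemma rank_inf_pair (K1 K2 : Submodule ℝ (Fin n → ℝ)) (m1 m2 : ℕ)
    (h1 : n ≤ Module.finrank ℝ K1 + m1) (h2 : n ≤ Module.finrank ℝ K2 + m2) :
    n ≤ Module.finrank ℝ ↥(K1 ⊓ K2) + (m1 + m2) := by
  have hsum := Submodule.finrank_sup_add_finrank_inf_eq K1 K2
  have hle : Module.finrank ℝ ↥(K1 ⊔ K2) ≤ n := by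
    have := Submodule.finrank_le (K1 ⊔ K2)
    rwa [Module.finrank_fintype_fun_eq_card, Fintype.card_fin] at this
  omega

lemma rank_inf_finset {ι : Type} (s : Finset ι) (Kf : ι → Submodule ℝ (Fin n → ℝ)) (cf : ι → ℕ)
    (h : ∀ i ∈ s, n ≤ Module.finrank ℝ ↥(Kf i) + cf i) :
    n ≤ Module.finrank ℝ ↥(s.inf Kf) + ∑ i ∈ s, cf i := by
  induction s using Finset.cons_induction with
  | empty =>
    simp only [Finset.inf_empty, Finset.sum_empty]
    rw [show (∅ : Finset ι).inf Kf = ⊤ from Finset.inf_empty, finrank_top, Module.finrank_fintype_fun_eq_card, Fintype.card_fin]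
    omega
  | cons a s' ha IH =>
    rw [Finset.inf_cons, Finset.sum_cons]
    exact rank_inf_pair _ _ _ _ (h a (Finset.mem_cons_self a s'))
      (IH fun i hi => h i (Finset.mem_cons_of_mem hi))


lemma mval_zero (d r : ℕ → ℕ) : mval d r 0 = 0 := by
  unfold mval
  rw [show Finset.Icc 1 0 = ∅ from Finset.Icc_eq_empty (by omega), Finset.sum_empty]

lemma mval_succ (d r : ℕ → ℕ) (k : ℕ) :
    mval d r (k+1) = d (k+1) * mval d r k + (r (k+1) - 1) := by
  unfold mval
  rw [Finset.sum_Icc_succ_top (by omega : 1 ≤ k + 1)]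
  rw [show Finset.Icc (k+1+1) (k+1) = ∅ from Finset.Icc_eq_empty (by omega),
    Finset.prod_empty, mul_one]
  congr 1
  rw [Finset.mul_sum]
  apply Finset.sum_congr rfl
  intro j hj
  rw [Finset.mem_Icc] at hj
  rw [Finset.prod_Icc_succ_top (by omega : j + 1 ≤ k + 1)]
  ring

def dotL (n : ℕ) (v : Vec n) : Vec n →ₗ[ℝ] ℝ where
  toFun w := ∑ i, v i * w i
  map_add' := by
    intro w1 w2
    simp only [Pi.add_apply, mul_add]
    rw [Finset.sum_add_distrib]
  map_smul' := by
    intro cx w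
    simp only [Pi.smul_apply, smul_eq_mul, RingHom.id_apply]
    rw [Finset.mul_sum]
    apply Finset.sum_congr rfl
    intros; ring

def AffInv (n : ℕ) (m : ℕ) (f : Vec n → ℝ) : Prop :=
  ∃ (t : Vec n) (K : Submodule ℝ (Vec n)), n ≤ Module.finrank ℝ ↥K + m ∧
    ∀ (x : Vec n), ∀ w ∈ K, f (x + w) = f x + ∑ i, t i * w i

lemma ker_rank_bound (n : ℕ) (v : Vec n) :
    n ≤ Module.finrank ℝ ↥(LinearMap.ker (dotL n v)) + 1 := by
  have h := LinearMap.finrank_range_add_finrank_ker (dotL n v)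
  rw [Module.finrank_fintype_fun_eq_card, Fintype.card_fin] at h
  have h2 : Module.finrank ℝ ↥(LinearMap.range (dotL n v)) ≤ 1 := by
    have := Submodule.finrank_le (LinearMap.range (dotL n v))
    rwa [Module.finrank_self] at this
  omega

lemma nhat_inv (n : ℕ) (d r : ℕ → ℕ) (hr : ∀ k, 2 ≤ r k) :
    ∀ k f, f ∈ Nhat n d r k → AffInv n (mval d r k) f := by
  intro k
  induction k with
  | zero =>
    rintro f ⟨v, rfl⟩
    refine ⟨v, ⊤, ?_, ?_⟩
    · rw [mval_zero, finrank_top, Module.finrank_fintype_fun_eq_card, Fintype.card_fin]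
      omega
    · intro x w _
      simp only [Pi.add_apply]
      rw [← Finset.sum_add_distrib]
      apply Finset.sum_congr rfl
      intros; ring
  | succ k IH =>
    rintro f ⟨α, g, hg, rfl⟩
    choose tt KK hrank hprop using fun j => IH (g j) (hg j)
    have hR : 2 ≤ r (k+1) := hr (k+1)
    haveI : Nonempty (Fin (r (k+1))) := ⟨⟨0, by omega⟩⟩
    set i0 : Fin (r (k+1)) := ⟨0, by omega⟩ with hi0
    set sfun : Fin (r (k+1)) → Vec n := fun i => (fun coord => ∑ j, α i j * tt j coord) with hsfun
    set Kinf1 := (Finset.univ : Finset (Fin (d (k+1)))).inf KK with hK1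
    set Kinf2 := ((Finset.univ : Finset (Fin (r (k+1)))).erase i0).inf
      (fun i => LinearMap.ker (dotL n (sfun i - sfun i0))) with hK2
    refine ⟨sfun i0, Kinf1 ⊓ Kinf2, ?_, ?_⟩
    · have hb1 : n ≤ Module.finrank ℝ ↥Kinf1 + (d (k+1)) * mval d r k := by
        have := rank_inf_finset (Finset.univ : Finset (Fin (d (k+1)))) KK
          (fun _ => mval d r k) (fun i _ => hrank i)
        rwa [Finset.sum_const, Finset.card_univ, Fintype.card_fin, smul_eq_mul] at this
      have hb2 : n ≤ Module.finrank ℝ ↥Kinf2 + (r (k+1) - 1) := by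
        have := rank_inf_finset ((Finset.univ : Finset (Fin (r (k+1)))).erase i0)
          (fun i => LinearMap.ker (dotL n (sfun i - sfun i0))) (fun _ => 1)
          (fun i _ => ker_rank_bound n _)
        rwa [Finset.sum_const, Finset.card_erase_of_mem (mem_univ i0), Finset.card_univ,
          Fintype.card_fin, smul_eq_mul, mul_one] at this
      have hfin := rank_inf_pair Kinf1 Kinf2 _ _ hb1 hb2
      rw [mval_succ]
      exact hfin
    · intro x w hw
      obtain ⟨hw1, hw2⟩ := Submodule.mem_inf.mp hw
      have hwK : ∀ j, w ∈ KK j := fun j => (Finset.inf_le (mem_univ j) : Kinf1 ≤ KK j) hw1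
      have hdot : ∀ i, ∑ coord, sfun i coord * w coord = ∑ coord, sfun i0 coord * w coord := by
        intro i
        by_cases hii : i = i0
        · rw [hii]
        · have hker : w ∈ LinearMap.ker (dotL n (sfun i - sfun i0)) :=
            (Finset.inf_le (Finset.mem_erase.mpr ⟨hii, mem_univ i⟩) :
              Kinf2 ≤ LinearMap.ker (dotL n (sfun i - sfun i0))) hw2
          have hker2 := LinearMap.mem_ker.mp hker
          have hexp : dotL n (sfun i - sfun i0) w
              = (∑ c, sfun i c * w c) - ∑ c, sfun i0 c * w c := by
            show (∑ c, (sfun i - sfun i0) c * w c) = _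
            rw [← Finset.sum_sub_distrib]
            apply Finset.sum_congr rfl
            intros c _
            simp only [Pi.sub_apply]
            ring
          rw [hexp] at hker2
          linarith
      have hinner : ∀ i, (∑ j, α i j * g j (x + w))
          = (∑ j, α i j * g j x) + ∑ coord, sfun i0 coord * w coord := by
        intro i
        rw [← hdot i]
        calc ∑ j, α i j * g j (x + w)
            = ∑ j, (α i j * g j x + α i j * ∑ c, tt j c * w c) := by
              apply Finset.sum_congr rfl
              intro j _
              rw [hprop j x w (hwK j)]; ring
          _ = (∑ j, α i j * g j x) + ∑ j, α i j * ∑ c, tt j c * w c :=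
              Finset.sum_add_distrib
          _ = (∑ j, α i j * g j x) + ∑ c, sfun i c * w c := by
              congr 1
              calc ∑ j, α i j * ∑ c, tt j c * w c
                  = ∑ j, ∑ c, α i j * (tt j c * w c) := by
                    apply Finset.sum_congr rfl
                    intros; rw [Finset.mul_sum]
                _ = ∑ c, ∑ j, α i j * (tt j c * w c) := Finset.sum_comm
                _ = ∑ c, sfun i c * w c := by
                    apply Finset.sum_congr rfl
                    intro c _
                    show _ = (∑ j, α i j * tt j c) * w c
                    rw [Finset.sum_mul]
                    apply Finset.sum_congr rfl
                    intros; ring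
      show (⨆ i, ∑ j, α i j * g j (x+w)) = (⨆ i, ∑ j, α i j * g j x) + ∑ c, sfun i0 c * w c
      rw [show (fun i => ∑ j, α i j * g j (x+w))
          = (fun i => (∑ j, α i j * g j x) + ∑ c, sfun i0 c * w c) from funext hinner]
      exact ciSup_add_const _ _

lemma nhat_subset_nhatU (n : ℕ) (d r : ℕ → ℕ) :
    ∀ k, Nhat n d r k ⊆ NhatU n r k := by
  intro k
  induction k with
  | zero => intro f hf; exact hf
  | succ k IH =>
    rintro f ⟨α, g, hg, rfl⟩
    exact ⟨d (k+1), α, g, fun j => IH (hg j), rfl⟩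


lemma single_dot {n : ℕ} (cc : Fin n) (x : Vec n) :
    ∑ i, (Pi.single cc (1:ℝ) : Vec n) i * x i = x cc := by
  rw [Finset.sum_eq_single cc]
  · rw [Pi.single_eq_same, one_mul]
  · intro b _ hb; rw [Pi.single_eq_of_ne hb, zero_mul]
  · intro habs; exact absurd (mem_univ cc) habs

lemma single_dot_neg {n : ℕ} (cc : Fin n) (x : Vec n) :
    ∑ i, (-(Pi.single cc (1:ℝ) : Vec n)) i * x i = -x cc := by
  have h : ∀ i, (-(Pi.single cc (1:ℝ) : Vec n)) i * x i
      = -((Pi.single cc (1:ℝ) : Vec n) i * x i) := by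
    intro i; simp
  rw [Finset.sum_congr rfl (fun i _ => h i), Finset.sum_neg_distrib, single_dot]

-- embedding
def embL (n M : ℕ) (hM : M ≤ n) : (Fin M → ℝ) →ₗ[ℝ] Vec n :=
  LinearMap.pi (fun i : Fin n => if h : (i : ℕ) < M then LinearMap.proj (⟨i, h⟩ : Fin M) else 0)

lemma embL_castLE {n M : ℕ} (hM : M ≤ n) (z : Fin M → ℝ) (j : Fin M) :
    embL n M hM z (Fin.castLE hM j) = z j := by
  unfold embL
  rw [LinearMap.pi_apply]
  have h : ((Fin.castLE hM j : Fin n) : ℕ) < M := j.isLt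
  rw [dif_pos h]
  rfl

lemma embL_inj {n M : ℕ} (hM : M ≤ n) : Function.Injective (embL n M hM) := by
  intro z1 z2 h
  funext j
  have h2 := congrFun (congrArg (fun f => (f : Vec n)) h) (Fin.castLE hM j)
  simpa [embL_castLE] using h2

-- the separating function
def fstar (n K : ℕ) (hM : K + 1 ≤ n) : Vec n → ℝ :=
  fun x => Fcan K (fun j => x (Fin.castLE hM j))

lemma lin_mem_nhatU1 (n : ℕ) (r : ℕ → ℕ) (hr : ∀ k, 2 ≤ r k) (v : Vec n) :
    (fun x : Vec n => ∑ i, v i * x i) ∈ NhatU n r 1 := by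
  haveI : Nonempty (Fin (r 1)) := ⟨⟨0, by have := hr 1; omega⟩⟩
  refine ⟨1, fun _ _ => 1, fun _ => (fun x => ∑ i, v i * x i), fun _ => ⟨v, rfl⟩, ?_⟩
  funext x
  simp only [Fin.sum_univ_one, one_mul]
  exact ciSup_const.symm

lemma relu_lin_mem_nhatU1 (n : ℕ) (r : ℕ → ℕ) (hr : ∀ k, 2 ≤ r k) (v : Vec n) :
    (fun x : Vec n => relu (∑ i, v i * x i)) ∈ NhatU n r 1 := by
  haveI : Nonempty (Fin (r 1)) := ⟨⟨0, by have := hr 1; omega⟩⟩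
  refine ⟨1, fun i _ => if (i : ℕ) = 0 then 1 else 0, fun _ => (fun x => ∑ i, v i * x i),
    fun _ => ⟨v, rfl⟩, ?_⟩
  funext x
  have h := fin_ciSup_eq_max
    (fun i : Fin (r 1) => ∑ j : Fin 1, (if (i : ℕ) = 0 then (1:ℝ) else 0) * (∑ i, v i * x i))
    ⟨0, by have := hr 1; omega⟩ ⟨1, by have := hr 1; omega⟩ (∑ i, v i * x i) 0 ?_ ?_ ?_
  · rw [h]; rfl
  · simp only [Fin.sum_univ_one]; norm_num
  · simp only [Fin.sum_univ_one]; norm_num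
  · intro i
    simp only [Fin.sum_univ_one]
    by_cases hi : (i : ℕ) = 0
    · left; rw [if_pos hi, one_mul]
    · right; rw [if_neg hi, zero_mul]

lemma fstar_mem_nhatU2 (n K : ℕ) (hM : K + 1 ≤ n) (r : ℕ → ℕ) (hr : ∀ k, 2 ≤ r k) :
    fstar n K hM ∈ NhatU n r 2 := by
  haveI : Nonempty (Fin (r 2)) := ⟨⟨0, by have := hr 2; omega⟩⟩
  set g0 : Vec n → ℝ := fun x => ∑ i, (-(Pi.single (Fin.castLE hM 0) (1:ℝ) : Vec n)) i * x i with hg0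
  set gs : Fin K → Vec n → ℝ :=
    fun j => fun x => relu (∑ i, (Pi.single (Fin.castLE hM j.succ) (1:ℝ) : Vec n) i * x i) with hgs
  set G : Fin (K+1) → Vec n → ℝ := Fin.cons g0 gs with hG
  have hG0 : ∀ x : Vec n, G 0 x = -x (Fin.castLE hM 0) := by
    intro x
    rw [hG, show (Fin.cons g0 gs : Fin (K+1) → Vec n → ℝ) 0 = g0 from Fin.cons_zero _ _, hg0]
    show ∑ i, (-(Pi.single (Fin.castLE hM 0) (1:ℝ) : Vec n)) i * x i = _
    exact single_dot_neg _ x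
  have hGsucc : ∀ (j : Fin K) (x : Vec n), G j.succ x = relu (x (Fin.castLE hM j.succ)) := by
    intro j x
    rw [hG, show (Fin.cons g0 gs : Fin (K+1) → Vec n → ℝ) j.succ = gs j from Fin.cons_succ _ _ _, hgs]
    show relu (∑ i, (Pi.single (Fin.castLE hM j.succ) (1:ℝ) : Vec n) i * x i) = _
    rw [single_dot _ x]
  have hsum : ∀ x : Vec n, (∑ j, G j x)
      = (∑ j : Fin K, relu (x (Fin.castLE hM j.succ))) - x (Fin.castLE hM 0) := by
    intro x
    rw [Fin.sum_univ_succ, hG0 x, Finset.sum_congr rfl (fun j _ => hGsucc j x)]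
    ring
  refine ⟨K+1, fun i _ => if (i : ℕ) = 0 then 1 else 0, G, ?_, ?_⟩
  · intro j
    induction j using Fin.cases with
    | zero =>
      rw [hG, show (Fin.cons g0 gs : Fin (K+1) → Vec n → ℝ) 0 = g0 from Fin.cons_zero _ _, hg0]
      exact lin_mem_nhatU1 n r hr _
    | succ j =>
      rw [hG, show (Fin.cons g0 gs : Fin (K+1) → Vec n → ℝ) j.succ = gs j from Fin.cons_succ _ _ _, hgs]
      exact relu_lin_mem_nhatU1 n r hr _
  · funext x
    have hmax := fin_ciSup_eq_max
      (fun i : Fin (r 2) => ∑ j, (if (i : ℕ) = 0 then (1:ℝ) else 0) * G j x)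
      ⟨0, by have := hr 2; omega⟩ ⟨1, by have := hr 2; omega⟩ (∑ j, G j x) 0 (by simp) (by simp) ?_
    · rw [hmax, hsum x]
      rfl
    · intro i
      by_cases hi : (i : ℕ) = 0
      · left; simp [hi]
      · right; simp [hi]

lemma nhatU_lift (n : ℕ) (r : ℕ → ℕ) (hr : ∀ k, 2 ≤ r k) (k : ℕ) (f : Vec n → ℝ)
    (hf : f ∈ NhatU n r k) : f ∈ NhatU n r (k+1) := by
  haveI : Nonempty (Fin (r (k+1))) := ⟨⟨0, by have := hr (k+1); omega⟩⟩
  refine ⟨1, fun _ _ => 1, fun _ => f, fun _ => hf, ?_⟩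
  funext x
  simp only [Fin.sum_univ_one, one_mul]
  exact ciSup_const.symm

lemma fstar_mem_nfullU (n K : ℕ) (hM : K + 1 ≤ n) (r : ℕ → ℕ) (hr : ∀ k, 2 ≤ r k)
    (ℓ : ℕ) (hℓ : 2 ≤ ℓ) : fstar n K hM ∈ NfullU n r ℓ := by
  have hmem : fstar n K hM ∈ NhatU n r ℓ := by
    induction ℓ, hℓ using Nat.le_induction with
    | base => exact fstar_mem_nhatU2 n K hM r hr
    | succ m hm IH => exact nhatU_lift n r hr m _ IH
  refine ⟨1, fun _ => 1, fun _ => fstar n K hM, fun _ => hmem, ?_⟩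
  funext x
  rw [Fin.sum_univ_one, one_mul]

lemma fstar_not_mem_nfull (n ℓ : ℕ) (d r : ℕ → ℕ) (hr : ∀ k, 2 ≤ r k)
    (hK : mval d r ℓ + 1 ≤ n) : fstar n (mval d r ℓ) hK ∉ Nfull n d r ℓ := by
  rintro ⟨p, cc, g, hg, heq⟩
  have hInv := fun i : Fin p => nhat_inv n d r hr ℓ (g i) (hg i)
  choose tt KK hrank hprop using hInv
  set E := LinearMap.range (embL n (mval d r ℓ + 1) hK) with hE
  have hEr : Module.finrank ℝ ↥E = mval d r ℓ + 1 := by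
    rw [hE, LinearMap.finrank_range_of_inj (embL_inj hK), Module.finrank_fintype_fun_eq_card,
      Fintype.card_fin]
  have hz : ∀ i : Fin p, ∃ z : Fin (mval d r ℓ + 1) → ℝ, z ≠ 0 ∧
      embL n (mval d r ℓ + 1) hK z ∈ KK i := by
    intro i
    have hpos : 0 < Module.finrank ℝ ↥(KK i ⊓ E) := by
      have hsum := Submodule.finrank_sup_add_finrank_inf_eq (KK i) E
      have hle : Module.finrank ℝ ↥(KK i ⊔ E) ≤ n := by
        have := Submodule.finrank_le (KK i ⊔ E)
        rwa [Module.finrank_fintype_fun_eq_card, Fintype.card_fin] at this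
      have h1 := hrank i
      omega
    rw [Module.finrank_pos_iff] at hpos
    obtain ⟨w, hwmem, hwne⟩ := (Submodule.ne_bot_iff _).mp (Submodule.nontrivial_iff_ne_bot.mp hpos)
    obtain ⟨hw1, hw2⟩ := Submodule.mem_inf.mp hwmem
    obtain ⟨z, hzw⟩ := hw2
    refine ⟨z, ?_, by rwa [hzw]⟩
    intro hz0
    apply hwne
    rw [← hzw, hz0, map_zero]
  choose zf hzne hzK using hz
  rcases Nat.eq_zero_or_pos p with hp0 | hp
  · subst hp0
    have h1 := congrFun heq (embL n (mval d r ℓ + 1) hK (-(Pi.single 0 1)))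
    rw [show (∑ i : Fin 0, cc i * g i (embL n (mval d r ℓ + 1) hK (-(Pi.single 0 1)))) = 0 by
      simp] at h1
    rw [show fstar n (mval d r ℓ) hK (embL n (mval d r ℓ + 1) hK (-(Pi.single 0 1)))
        = Fcan (mval d r ℓ) (-(Pi.single 0 1)) from by
      unfold fstar; congr 1; funext j; rw [embL_castLE]] at h1
    rw [show Fcan (mval d r ℓ) (-(Pi.single 0 1)) = 1 from ?_] at h1
    · exact one_ne_zero h1
    · unfold Fcan
      rw [show (∑ j : Fin (mval d r ℓ), relu ((-(Pi.single 0 1) : Fin (mval d r ℓ + 1) → ℝ) j.succ)) = 0 from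
        Finset.sum_eq_zero fun j _ => by
          rw [show ((-(Pi.single 0 1) : Fin (mval d r ℓ + 1) → ℝ)) j.succ = 0 by
            simp [Pi.single_eq_of_ne (Fin.succ_ne_zero j)]]
          exact relu_of_nonpos le_rfl]
      rw [show ((-(Pi.single 0 1) : Fin (mval d r ℓ + 1) → ℝ)) 0 = -1 by simp]
      rw [show (0 : ℝ) - (-1) = 1 by ring]
      exact relu_of_nonneg zero_le_one
  · have hq : 2 ≤ p + 1 := by omega
    set zz : Fin (p+1) → (Fin (mval d r ℓ + 1) → ℝ) :=
      fun i => if h : (i:ℕ) < p then zf ⟨i,h⟩ else Pi.single 0 1 with hzz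
    have hzznz : ∀ i, zz i ≠ 0 := by
      intro i
      rw [hzz]
      dsimp only
      split_ifs with h
      · exact hzne _
      · intro habs
        have := congrFun habs 0
        rw [Pi.single_eq_same] at this
        exact one_ne_zero this
    obtain ⟨cs, hcs⟩ := exists_scalars zz hzznz
    set ζ : Finset (Fin (p+1)) → (Fin (mval d r ℓ + 1) → ℝ) :=
      fun S => ∑ j ∈ S, cs j • zz j with hζ
    have hD : ∀ y : Fin (mval d r ℓ + 1) → ℝ,
        ∑ S : Finset (Fin (p+1)), (-1:ℝ)^S.card * Fcan (mval d r ℓ) (y + ζ S) = 0 := by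
      intro y
      have hstep1 : ∀ S : Finset (Fin (p+1)),
          Fcan (mval d r ℓ) (y + ζ S) = ∑ i : Fin p, cc i * g i
            (embL n (mval d r ℓ + 1) hK y + ∑ j ∈ S, cs j • embL n (mval d r ℓ + 1) hK (zz j)) := by
        intro S
        have hemb : (embL n (mval d r ℓ + 1) hK y)
            + (∑ j ∈ S, cs j • embL n (mval d r ℓ + 1) hK (zz j))
            = embL n (mval d r ℓ + 1) hK (y + ζ S) := by
          rw [hζ]
          dsimp only
          rw [map_add, map_sum]
          congr 1
          apply Finset.sum_congr rfl
          intros j _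
          rw [map_smul]
        rw [hemb]
        have hx := congrFun heq (embL n (mval d r ℓ + 1) hK (y + ζ S))
        rw [show fstar n (mval d r ℓ) hK (embL n (mval d r ℓ + 1) hK (y + ζ S))
            = Fcan (mval d r ℓ) (y + ζ S) from by
          unfold fstar; congr 1; funext j; rw [embL_castLE]] at hx
        exact hx
      rw [Finset.sum_congr rfl (fun S _ => by rw [hstep1 S, Finset.mul_sum])]
      rw [Finset.sum_comm]
      apply Finset.sum_eq_zero
      intro i _
      have hlt : (i : ℕ) < p + 1 := by omega
      set ii : Fin (p+1) := ⟨(i : ℕ), hlt⟩ with hii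
      have hzzii : zz ii = zf i := by
        rw [hzz]
        dsimp only
        rw [dif_pos (show ((ii : Fin (p+1)) : ℕ) < p from i.isLt)]
      have hdir : cs ii • embL n (mval d r ℓ + 1) hK (zz ii) ∈ KK i := by
        rw [hzzii]
        exact Submodule.smul_mem _ _ (hzK i)
      have hprop2 : ∀ x, cc i * g i (x + cs ii • embL n (mval d r ℓ + 1) hK (zz ii))
          = cc i * g i x + cc i * ∑ c, tt i c * (cs ii • embL n (mval d r ℓ + 1) hK (zz ii)) c := by
        intro x
        rw [hprop i x _ hdir]
        ring
      exact pairing (V := Vec n) hq (fun j => cs j • embL n (mval d r ℓ + 1) hK (zz j)) ii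
        (fun x => cc i * g i x) _ hprop2 (embL n (mval d r ℓ + 1) hK y)
    have hinj : Function.Injective ζ := by
      intro S T h
      exact hcs S T h
    have hall := TI (mval d r ℓ) ζ hinj (fun S => (-1:ℝ)^S.card) hD
    have h0 := hall ∅
    norm_num at h0


end AuxProofMachinery

/-- width cannot compensate sparsity:
`N_n(ℓ,d,r) ⊊ N_n(ℓ,r)` whenever `n ≥ m_ℓ + 1`. -/
theorem Nfull_strict_subset_NfullU {n : ℕ} (ℓ : ℕ) (hℓ : 2 ≤ ℓ) (d r : ℕ → ℕ)
    (hd1 : d 1 = n) (hd : ∀ k, 2 ≤ d k) (hr : ∀ k, 2 ≤ r k)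
    (hn : mval d r ℓ + 1 ≤ n) :
    Nfull n d r ℓ ⊂ NfullU n r ℓ := by
  rw [Set.ssubset_def]
  constructor
  · rintro f ⟨p, c, g, hg, rfl⟩
    exact ⟨p, c, g, fun i => nhat_subset_nhatU n d r ℓ (hg i), rfl⟩
  · intro hsub
    exact fstar_not_mem_nfull n ℓ d r hr hn
      (hsub (fstar_mem_nfullU n (mval d r ℓ) hn r hr ℓ hℓ))
end SparseMaxout
end

section
/- For every ℓ ∈ ℕ₀ it holds that N_n(ℓ, 𝟐, 𝟐) = MAX_n(2^ℓ), where 𝟐 denotes the indegree vector (n,2,…,2) and rank vector (2,…,2) of length ℓ. That is, the functions computable by indegree-2-constrained rank-2 maxout networks with ℓ hidden layers (first layer fully connected) are exactly the finite real linear combinations of maxima of at most 2^ℓ linear functions. -/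
open Pointwise

noncomputable section SparseMaxout

/-! ### Auxiliary development for Statement 16 -/

open Finset

section AuxMax
variable {n : ℕ}

def lfun (a x : Vec n) : ℝ := ∑ i, a i * x i

lemma lfun_add (a b x : Vec n) : lfun (a + b) x = lfun a x + lfun b x := by
  simp [lfun, add_mul, Finset.sum_add_distrib]

lemma lfun_smul (t : ℝ) (a x : Vec n) : lfun (t • a) x = t * lfun a x := by
  simp [lfun, Finset.mul_sum, mul_assoc]

lemma lfun_zero (x : Vec n) : lfun (0 : Vec n) x = 0 := by simp [lfun]

lemma isLinearMap_lfun (x : Vec n) : IsLinearMap ℝ (fun a => lfun a x) :=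
  ⟨fun a b => lfun_add a b x, fun t a => lfun_smul t a x⟩

/-- max over a finite set of linear functionals (junk value 0 on empty set). -/
def fmax (A : Finset (Vec n)) (x : Vec n) : ℝ :=
  if h : A.Nonempty then A.sup' h (fun a => lfun a x) else 0

lemma fmax_eq (A : Finset (Vec n)) (h : A.Nonempty) (x : Vec n) :
    fmax A x = A.sup' h (fun a => lfun a x) := dif_pos h

lemma fmax_union {A B : Finset (Vec n)} (hA : A.Nonempty) (hB : B.Nonempty) (x : Vec n) :
    fmax (A ∪ B) x = max (fmax A x) (fmax B x) := by
  rw [fmax_eq A hA, fmax_eq B hB, fmax_eq (A ∪ B) (hA.mono Finset.subset_union_left),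
    Finset.sup'_union hA hB]

lemma fmax_insert {A : Finset (Vec n)} (hA : A.Nonempty) (b x : Vec n) :
    fmax (insert b A) x = max (lfun b x) (fmax A x) := by
  rw [fmax_eq A hA, fmax_eq (insert b A) (hA.mono (Finset.subset_insert b A)),
    Finset.sup'_insert hA]

lemma fmax_singleton (a x : Vec n) : fmax {a} x = lfun a x := by
  rw [fmax_eq {a} ⟨a, Finset.mem_singleton_self a⟩]; simp

lemma le_fmax {A : Finset (Vec n)} {a : Vec n} (ha : a ∈ A) (x : Vec n) :
    lfun a x ≤ fmax A x := by
  rw [fmax_eq A ⟨a, ha⟩]; exact Finset.le_sup' (fun a => lfun a x) ha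

lemma fmax_mono {A B : Finset (Vec n)} (hA : A.Nonempty) (hAB : A ⊆ B) (x : Vec n) :
    fmax A x ≤ fmax B x := by
  rw [fmax_eq A hA, fmax_eq B (hA.mono hAB)]
  exact Finset.sup'_mono _ hAB hA

lemma fmax_minkowski {A B : Finset (Vec n)} (hA : A.Nonempty) (hB : B.Nonempty) (x : Vec n) :
    fmax (A + B) x = fmax A x + fmax B x := by
  rw [fmax_eq A hA, fmax_eq B hB, fmax_eq (A + B) (hA.add hB)]
  apply le_antisymm
  · apply Finset.sup'_le
    intro c hc
    obtain ⟨a, ha, b, hb, rfl⟩ := Finset.mem_add.mp hc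
    rw [lfun_add]
    exact add_le_add (Finset.le_sup' (fun a => lfun a x) ha)
      (Finset.le_sup' (fun a => lfun a x) hb)
  · obtain ⟨a, ha, hae⟩ := Finset.exists_mem_eq_sup' hA (fun a => lfun a x)
    obtain ⟨b, hb, hbe⟩ := Finset.exists_mem_eq_sup' hB (fun a => lfun a x)
    rw [hae, hbe, ← lfun_add]
    exact Finset.le_sup' (fun a => lfun a x) (Finset.add_mem_add ha hb)

lemma fmax_smul {A : Finset (Vec n)} (hA : A.Nonempty) {t : ℝ} (ht : 0 ≤ t) (x : Vec n) :
    fmax (t • A) x = t * fmax A x := by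
  rw [fmax_eq (t • A) hA.smul_finset, fmax_eq A hA]
  have h1 : (t • A).sup' hA.smul_finset (fun a => lfun a x)
      = A.sup' hA (fun a => lfun (t • a) x) := by
    have : (t • A : Finset (Vec n)) = A.image (fun a => t • a) := rfl
    rw [this] at *
    exact Finset.sup'_image _ _
  rw [h1]
  have h2 := Finset.comp_sup'_eq_sup'_comp (γ := ℝ) hA (fun r => t * r)
    (f := fun a => lfun a x) (fun p q => mul_max_of_nonneg p q ht)
  simp only [Function.comp] at h2
  rw [Finset.sup'_congr hA rfl (fun a _ => lfun_smul t a x), ← h2]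


/-- `f = fmax A - fmax B` with the functionals of `A`, `B` lying in translates of `U`. -/
def HasRep (U : Submodule ℝ (Vec n)) (f : Vec n → ℝ) : Prop :=
  ∃ (A B : Finset (Vec n)) (_ : A.Nonempty) (_ : B.Nonempty) (cA cB : Vec n),
    (∀ a ∈ A, a - cA ∈ U) ∧ (∀ b ∈ B, b - cB ∈ U) ∧
    ∀ x, f x = fmax A x - fmax B x

lemma HasRep.mono {U V : Submodule ℝ (Vec n)} (hUV : U ≤ V) {f : Vec n → ℝ}
    (h : HasRep U f) : HasRep V f := by
  obtain ⟨A, B, hA, hB, cA, cB, hAU, hBU, hf⟩ := h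
  exact ⟨A, B, hA, hB, cA, cB, fun a ha => hUV (hAU a ha), fun b hb => hUV (hBU b hb), hf⟩

lemma HasRep.lin (c : Vec n) : HasRep (⊥ : Submodule ℝ (Vec n)) (fun x => lfun c x) := by
  refine ⟨{c}, {0}, Finset.singleton_nonempty c, Finset.singleton_nonempty 0, c, 0, ?_, ?_, ?_⟩
  · intro a ha; rw [Finset.mem_singleton] at ha; simp [ha]
  · intro b hb; rw [Finset.mem_singleton] at hb; simp [hb]
  · intro x; rw [fmax_singleton, fmax_singleton, lfun_zero, sub_zero]

lemma HasRep.add {U V : Submodule ℝ (Vec n)} {f g : Vec n → ℝ}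
    (hf : HasRep U f) (hg : HasRep V g) : HasRep (U ⊔ V) (fun x => f x + g x) := by
  obtain ⟨A, B, hA, hB, cA, cB, hAU, hBU, hfe⟩ := hf
  obtain ⟨C, D, hC, hD, cC, cD, hCU, hDU, hge⟩ := hg
  refine ⟨A + C, B + D, hA.add hC, hB.add hD, cA + cC, cB + cD, ?_, ?_, ?_⟩
  · intro a ha
    obtain ⟨u, hu, v, hv, rfl⟩ := Finset.mem_add.mp ha
    have : u + v - (cA + cC) = (u - cA) + (v - cC) := by abel
    rw [this]
    exact Submodule.add_mem _ (Submodule.mem_sup_left (hAU u hu))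
      (Submodule.mem_sup_right (hCU v hv))
  · intro b hb
    obtain ⟨u, hu, v, hv, rfl⟩ := Finset.mem_add.mp hb
    have : u + v - (cB + cD) = (u - cB) + (v - cD) := by abel
    rw [this]
    exact Submodule.add_mem _ (Submodule.mem_sup_left (hBU u hu))
      (Submodule.mem_sup_right (hDU v hv))
  · intro x
    rw [fmax_minkowski hA hC, fmax_minkowski hB hD]
    show f x + g x = _
    rw [hfe, hge]; ring

lemma HasRep.smul {U : Submodule ℝ (Vec n)} {f : Vec n → ℝ} (t : ℝ)
    (hf : HasRep U f) : HasRep U (fun x => t * f x) := by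
  obtain ⟨A, B, hA, hB, cA, cB, hAU, hBU, hfe⟩ := hf
  rcases le_or_gt 0 t with ht | ht
  · refine ⟨t • A, t • B, hA.smul_finset, hB.smul_finset, t • cA, t • cB, ?_, ?_, ?_⟩
    · intro a ha
      obtain ⟨u, hu, rfl⟩ := Finset.mem_smul_finset.mp ha
      have : t • u - t • cA = t • (u - cA) := by rw [smul_sub]
      rw [this]; exact Submodule.smul_mem _ _ (hAU u hu)
    · intro b hb
      obtain ⟨u, hu, rfl⟩ := Finset.mem_smul_finset.mp hb
      have : t • u - t • cB = t • (u - cB) := by rw [smul_sub]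
      rw [this]; exact Submodule.smul_mem _ _ (hBU u hu)
    · intro x
      rw [fmax_smul hA ht, fmax_smul hB ht]
      show t * f x = _
      rw [hfe x]; ring
  · have ht' : 0 ≤ -t := by linarith
    refine ⟨(-t) • B, (-t) • A, hB.smul_finset, hA.smul_finset, (-t) • cB, (-t) • cA, ?_, ?_, ?_⟩
    · intro a ha
      obtain ⟨u, hu, rfl⟩ := Finset.mem_smul_finset.mp ha
      have : (-t) • u - (-t) • cB = (-t) • (u - cB) := by rw [smul_sub]
      rw [this]; exact Submodule.smul_mem _ _ (hBU u hu)
    · intro b hb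
      obtain ⟨u, hu, rfl⟩ := Finset.mem_smul_finset.mp hb
      have : (-t) • u - (-t) • cA = (-t) • (u - cA) := by rw [smul_sub]
      rw [this]; exact Submodule.smul_mem _ _ (hAU u hu)
    · intro x
      rw [fmax_smul hB ht', fmax_smul hA ht']
      show t * f x = _
      rw [hfe x]; ring

lemma HasRep.max {U : Submodule ℝ (Vec n)} {f g : Vec n → ℝ}
    (hf : HasRep U f) (hg : HasRep U g) :
    ∃ v : Vec n, HasRep (U ⊔ Submodule.span ℝ {v}) (fun x => max (f x) (g x)) := by
  obtain ⟨A, B, hA, hB, cA, cB, hAU, hBU, hfe⟩ := hf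
  obtain ⟨C, D, hC, hD, cC, cD, hCU, hDU, hge⟩ := hg
  refine ⟨(cA + cD) - (cC + cB), (A + D) ∪ (C + B), B + D, (hA.add hD).mono
    Finset.subset_union_left, hB.add hD, cC + cB, cB + cD, ?_, ?_, ?_⟩
  · intro a ha
    rcases Finset.mem_union.mp ha with h | h
    · obtain ⟨u, hu, v, hv, rfl⟩ := Finset.mem_add.mp h
      have : u + v - (cC + cB) = ((u - cA) + (v - cD)) + ((cA + cD) - (cC + cB)) := by abel
      rw [this]
      refine Submodule.add_mem _ (Submodule.mem_sup_left ?_)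
        (Submodule.mem_sup_right (Submodule.mem_span_singleton_self _))
      exact Submodule.add_mem _ (hAU u hu) (hDU v hv)
    · obtain ⟨u, hu, v, hv, rfl⟩ := Finset.mem_add.mp h
      have : u + v - (cC + cB) = (u - cC) + (v - cB) := by abel
      rw [this]
      exact Submodule.mem_sup_left (Submodule.add_mem _ (hCU u hu) (hBU v hv))
  · intro b hb
    obtain ⟨u, hu, v, hv, rfl⟩ := Finset.mem_add.mp hb
    have : u + v - (cB + cD) = (u - cB) + (v - cD) := by abel
    rw [this]
    exact Submodule.mem_sup_left (Submodule.add_mem _ (hBU u hu) (hDU v hv))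
  · intro x
    rw [fmax_union (hA.add hD) (hC.add hB), fmax_minkowski hA hD, fmax_minkowski hC hB,
      fmax_minkowski hB hD]
    show Max.max (f x) (g x) = _
    rw [hfe x, hge x]
    rcases max_cases (fmax A x - fmax B x) (fmax C x - fmax D x) with ⟨he, hle⟩ | ⟨he, hle⟩ <;>
      rw [he] <;>
      rcases max_cases (fmax A x + fmax D x) (fmax C x + fmax B x) with ⟨h2, hl2⟩ | ⟨h2, hl2⟩ <;>
        rw [h2] <;> linarith


/-- Generators of `MAX_n(m)`: maxima of `m` linear functions. -/
def MAXgen (n m : ℕ) : Set ((Vec n) → ℝ) :=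
  {g | ∃ a : Fin m → Vec n, g = fun x => ⨆ j, lfun (a j) x}

lemma fmax_image_univ {m : ℕ} (hm : 0 < m) (a : Fin m → Vec n) (x : Vec n) :
    fmax (Finset.univ.image a) x = ⨆ j, lfun (a j) x := by
  have : Nonempty (Fin m) := Fin.pos_iff_nonempty.mp hm
  rw [fmax_eq _ (Finset.univ_nonempty.image a), Finset.sup'_image, Finset.sup'_univ_eq_ciSup]
  rfl

lemma fmax_mem_MAXgen {m : ℕ} (hm : 0 < m) {A : Finset (Vec n)} (hA : A.Nonempty)
    (hcard : A.card ≤ m) : (fun x => fmax A x) ∈ MAXgen n m := by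
  obtain ⟨a₀, ha₀⟩ := hA
  set l := A.toList with hl
  refine ⟨fun j => if h : (j : ℕ) < l.length then l.get ⟨j, h⟩ else a₀, ?_⟩
  have himg : Finset.univ.image (fun j : Fin m =>
      if h : (j : ℕ) < l.length then l.get ⟨j, h⟩ else a₀) = A := by
    ext b
    simp only [Finset.mem_image, Finset.mem_univ, true_and]
    constructor
    · rintro ⟨j, rfl⟩
      split
      · next h => exact Finset.mem_toList.mp (List.get_mem l ⟨_, h⟩)
      · exact ha₀
    · intro hb
      have hbl : b ∈ l := Finset.mem_toList.mpr hb
      obtain ⟨i, hi⟩ := List.mem_iff_get.mp hbl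
      have hlen : l.length = A.card := Finset.length_toList A
      have him : (i : ℕ) < m := by omega
      refine ⟨⟨i, him⟩, ?_⟩
      rw [dif_pos (show ((⟨(i : ℕ), him⟩ : Fin m) : ℕ) < l.length from i.2)]
      simpa using hi
  funext x
  rw [← fmax_image_univ hm _ x, himg]

/-- The workhorse: the max of a finite family of linear functionals lying in a translate of a
subspace of dimension at most `D` is a linear combination of maxima of `D+1` linear functions. -/
lemma fmax_mem_span (D : ℕ) (U : Submodule ℝ (Vec n)) (hU : Module.finrank ℝ U ≤ D) (c : Vec n) :
    ∀ (N : ℕ) (A : Finset (Vec n)), A.Nonempty → A.card ≤ N → (∀ a ∈ A, a - c ∈ U) →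
    (fun x => fmax A x) ∈ Submodule.span ℝ (MAXgen n (D + 1)) := by
  intro N
  induction N with
  | zero =>
    intro A hA hcard _
    exact absurd (Finset.card_pos.mpr hA) (by omega)
  | succ N ih =>
    intro A hA hcard hsub
    by_cases hsmall : A.card ≤ D + 1
    · exact Submodule.subset_span (fmax_mem_MAXgen (Nat.succ_pos D) hA hsmall)
    push_neg at hsmall
    classical
    -- A is affinely dependent
    have hnotai : ¬ AffineIndependent ℝ (Subtype.val : {v // v ∈ A} → Vec n) := by
      intro hai
      have hc : Fintype.card {v // v ∈ A} = (A.card - 1) + 1 := by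
        rw [Fintype.card_coe]; omega
      have hfr := hai.finrank_vectorSpan hc
      have hle : vectorSpan ℝ (Set.range (Subtype.val : {v // v ∈ A} → Vec n)) ≤ U := by
        rw [vectorSpan]
        apply Submodule.span_le.mpr
        rintro z hz
        obtain ⟨a, ha, b, hb, rfl⟩ := Set.mem_vsub.mp hz
        have ha' : a ∈ A := by rcases ha with ⟨w, rfl⟩; exact w.2
        have hb' : b ∈ A := by rcases hb with ⟨w, rfl⟩; exact w.2
        have : a -ᵥ b = (a - c) - (b - c) := by rw [vsub_eq_sub]; abel
        rw [this]
        exact Submodule.sub_mem _ (hsub a ha') (hsub b hb')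
      have h9 : A.card - 1 ≤ D := by
        rw [← hfr]; exact le_trans (Submodule.finrank_mono hle) hU
      omega
    obtain ⟨I, q, hq1, hq2⟩ := Convex.radon_partition hnotai
    set J : Finset (Vec n) := A.filter (fun v => ∃ h : v ∈ A, (⟨v, h⟩ : {v // v ∈ A}) ∈ I)
      with hJdef
    have hJA : J ⊆ A := Finset.filter_subset _ _
    have hIJ : Subtype.val '' I ⊆ (↑J : Set (Vec n)) := by
      rintro _ ⟨z, hz, rfl⟩
      simp only [hJdef, Finset.coe_filter, Set.mem_setOf_eq]
      exact ⟨z.2, z.2, by simpa using hz⟩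
    set S : Finset (Vec n) := A \ J with hSdef
    have hIcS : Subtype.val '' Iᶜ ⊆ (↑S : Set (Vec n)) := by
      rintro _ ⟨z, hz, rfl⟩
      simp only [hSdef, Finset.coe_sdiff, Set.mem_diff, Finset.mem_coe]
      refine ⟨z.2, ?_⟩
      intro hzJ
      rw [hJdef, Finset.mem_filter] at hzJ
      obtain ⟨_, h', hzI⟩ := hzJ
      exact hz (by simpa using hzI)
    have hqJ : q ∈ convexHull ℝ (↑J : Set (Vec n)) := convexHull_mono hIJ hq1
    have hqS : q ∈ convexHull ℝ (↑S : Set (Vec n)) := convexHull_mono hIcS hq2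
    have hJne : J.Nonempty := by
      rcases J.eq_empty_or_nonempty with h | h
      · rw [h] at hqJ; simp [convexHull_empty] at hqJ
      · exact h
    have hSne : S.Nonempty := by
      rcases S.eq_empty_or_nonempty with h | h
      · rw [h] at hqS; simp [convexHull_empty] at hqS
      · exact h
    have hSJ : S ∪ J = A := Finset.sdiff_union_of_subset hJA
    -- the alternating-sum identity
    have hid : ∀ x, fmax A x =
        ∑ T ∈ J.powerset.erase J, (-(-1 : ℝ) ^ (J.card + T.card)) * fmax (S ∪ T) x := by
      intro x
      obtain ⟨j₀, hj₀J, hmin⟩ := Finset.exists_min_image J (fun j => lfun j x) hJne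
      have hj₀S : lfun j₀ x ≤ fmax S x := by
        have h1 : lfun j₀ x ≤ lfun q x := by
          have : q ∈ {y : Vec n | lfun j₀ x ≤ lfun y x} := by
            apply convexHull_min ?_ (convex_halfSpace_ge (isLinearMap_lfun x) _) hqJ
            intro b hb
            exact hmin b (Finset.mem_coe.mp hb)
          exact this
        have h2 : lfun q x ≤ fmax S x := by
          have : q ∈ {y : Vec n | lfun y x ≤ fmax S x} := by
            apply convexHull_min ?_ (convex_halfSpace_le (isLinearMap_lfun x) _) hqS
            intro b hb
            exact le_fmax (Finset.mem_coe.mp hb) x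
          exact this
        linarith
      have key : ∑ T ∈ J.powerset, (-1 : ℝ) ^ T.card * fmax (S ∪ T) x = 0 := by
        have hJi : J = insert j₀ (J.erase j₀) := (Finset.insert_erase hj₀J).symm
        rw [hJi, Finset.sum_powerset_insert (Finset.notMem_erase _ _), ← Finset.sum_add_distrib]
        apply Finset.sum_eq_zero
        intro T hT
        have hTJ : T ⊆ J.erase j₀ := Finset.mem_powerset.mp hT
        have hj₀T : j₀ ∉ T := fun h => Finset.notMem_erase _ _ (hTJ h)
        have hcins : (insert j₀ T).card = T.card + 1 := Finset.card_insert_of_notMem hj₀T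
        have habs : fmax (S ∪ insert j₀ T) x = fmax (S ∪ T) x := by
          rw [Finset.union_insert, fmax_insert (hSne.mono Finset.subset_union_left)]
          exact max_eq_right (le_trans hj₀S (fmax_mono hSne Finset.subset_union_left x))
        rw [habs, hcins, pow_succ]
        ring
      have hJmem : J ∈ J.powerset := Finset.mem_powerset_self J
      rw [← Finset.add_sum_erase _ _ hJmem, hSJ] at key
      have h4 : ((-1 : ℝ) ^ J.card) * ((-1 : ℝ) ^ J.card) = 1 := by
        rw [← pow_add]
        exact Even.neg_one_pow ⟨J.card, rfl⟩
      have h5 : fmax A x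
          = (-1 : ℝ) ^ J.card * (- ∑ T ∈ J.powerset.erase J, (-1 : ℝ) ^ T.card * fmax (S ∪ T) x)
          := by
        have : (-1 : ℝ) ^ J.card * fmax A x
            = - ∑ T ∈ J.powerset.erase J, (-1 : ℝ) ^ T.card * fmax (S ∪ T) x := by
          linarith
        calc fmax A x = ((-1 : ℝ) ^ J.card * (-1 : ℝ) ^ J.card) * fmax A x := by
              rw [h4, one_mul]
          _ = (-1 : ℝ) ^ J.card * ((-1 : ℝ) ^ J.card * fmax A x) := by ring
          _ = _ := by rw [this]
      rw [h5, mul_neg, Finset.mul_sum, ← Finset.sum_neg_distrib]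
      apply Finset.sum_congr rfl
      intro T _
      rw [pow_add]
      ring
    -- conclude via the induction hypothesis
    have hfun : (fun x => fmax A x) = ∑ T ∈ J.powerset.erase J,
        (-(-1 : ℝ) ^ (J.card + T.card)) • (fun x => fmax (S ∪ T) x) := by
      funext x
      rw [hid x]
      simp [Finset.sum_apply]
    rw [hfun]
    apply Submodule.sum_mem
    intro T hT
    apply Submodule.smul_mem
    have hTJ : T ⊆ J := Finset.mem_powerset.mp (Finset.mem_of_mem_erase hT)
    have hTne : T ≠ J := Finset.ne_of_mem_erase hT
    obtain ⟨j, hjJ, hjT⟩ := Finset.exists_of_ssubset (hTJ.ssubset_of_ne hTne)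
    have hsubA : S ∪ T ⊆ A.erase j := by
      intro b hb
      rcases Finset.mem_union.mp hb with h | h
      · refine Finset.mem_erase.mpr ⟨?_, (Finset.sdiff_subset) h⟩
        rintro rfl
        exact (Finset.mem_sdiff.mp h).2 hjJ
      · refine Finset.mem_erase.mpr ⟨?_, hTJ.trans hJA h⟩
        rintro rfl
        exact hjT h
    refine ih (S ∪ T) (hSne.mono Finset.subset_union_left) ?_ ?_
    · have h6 := Finset.card_le_card hsubA
      have h7 : (A.erase j).card = A.card - 1 := Finset.card_erase_of_mem (hJA hjJ)
      omega
    · intro a ha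
      have : a ∈ A := (hsubA.trans (Finset.erase_subset _ _)) ha
      exact hsub a this




lemma MAXn_eq_span (n m : ℕ) : MAXn n m = ↑(Submodule.span ℝ (MAXgen n m)) := by
  ext f
  constructor
  · rintro ⟨p, β, a, rfl⟩
    have he : (fun x => ∑ i, β i * ⨆ j, ∑ t, a i j t * x t)
        = ∑ i : Fin p, β i • (fun x => ⨆ j, lfun (a i j) x) := by
      funext x
      rw [Finset.sum_apply]
      exact Finset.sum_congr rfl fun i _ => rfl
    rw [SetLike.mem_coe, he]
    exact Submodule.sum_mem _ fun i _ =>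
      Submodule.smul_mem _ _ (Submodule.subset_span ⟨a i, rfl⟩)
  · intro hf
    obtain ⟨p, β, g, hsum⟩ := Submodule.mem_span_set'.mp (SetLike.mem_coe.mp hf)
    choose a ha using fun i => (g i).2
    refine ⟨p, β, a, ?_⟩
    rw [← hsum]
    funext x
    rw [Finset.sum_apply]
    refine Finset.sum_congr rfl fun i _ => ?_
    rw [Pi.smul_apply, smul_eq_mul, ha i]
    rfl

lemma hasRep_mem_span {D : ℕ} {U : Submodule ℝ (Vec n)} (hU : Module.finrank ℝ U ≤ D)
    {f : Vec n → ℝ} (h : HasRep U f) : f ∈ Submodule.span ℝ (MAXgen n (D + 1)) := by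
  obtain ⟨A, B, hA, hB, cA, cB, hAU, hBU, hf⟩ := h
  have h1 := fmax_mem_span D U hU cA A.card A hA le_rfl hAU
  have h2 := fmax_mem_span D U hU cB B.card B hB le_rfl hBU
  have : f = (fun x => fmax A x) - (fun x => fmax B x) := by
    funext x; rw [Pi.sub_apply, hf x]
  rw [this]
  exact Submodule.sub_mem _ h1 h2

lemma finrank_sup_le' (U V : Submodule ℝ (Vec n)) :
    Module.finrank ℝ ↥(U ⊔ V) ≤ Module.finrank ℝ U + Module.finrank ℝ V := by
  have := Submodule.finrank_sup_add_finrank_inf_eq U V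
  omega

lemma iSup_fin_two (F : Fin 2 → ℝ) : (⨆ i, F i) = max (F 0) (F 1) := by
  have hr : Set.range F = {F 0, F 1} := by
    ext y
    constructor
    · rintro ⟨i, rfl⟩
      fin_cases i <;> simp
    · rintro (rfl | rfl)
      · exact ⟨0, rfl⟩
      · exact ⟨1, rfl⟩
  rw [show (⨆ i, F i) = sSup (Set.range F) from rfl, hr, csSup_pair]

lemma HasRep.congr {U : Submodule ℝ (Vec n)} {f g : Vec n → ℝ} (h : HasRep U f)
    (he : ∀ x, g x = f x) : HasRep U g := by
  have : g = f := funext he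
  rwa [this]

lemma hasRep_sum {m : ℕ} (g : Fin m → Vec n → ℝ) (U : Fin m → Submodule ℝ (Vec n))
    (hg : ∀ j, HasRep (U j) (g j)) (t : Fin m → ℝ) :
    HasRep (Finset.univ.sup U) (fun x => ∑ j, t j * g j x) := by
  suffices h : ∀ s : Finset (Fin m), HasRep (s.sup U) (fun x => ∑ j ∈ s, t j * g j x) from
    h Finset.univ
  intro s
  induction s using Finset.induction with
  | empty =>
    refine (HasRep.lin 0).congr fun x => ?_
    simp [lfun_zero]
  | insert a s' ha ih =>
    rw [Finset.sup_insert]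
    refine (((hg a).smul (t a)).add ih).congr fun x => ?_
    rw [Finset.sum_insert ha]

lemma finrank_finset_sup_le {m : ℕ} (U : Fin m → Submodule ℝ (Vec n)) (b : ℕ)
    (hb : ∀ j, Module.finrank ℝ ↥(U j) ≤ b) :
    Module.finrank ℝ ↥(Finset.univ.sup U) ≤ m * b := by
  suffices h : ∀ s : Finset (Fin m), Module.finrank ℝ ↥(s.sup U) ≤ s.card * b by
    simpa using h Finset.univ
  intro s
  induction s using Finset.induction with
  | empty => simp [finrank_bot]
  | insert a s' ha ih =>
    rw [Finset.sup_insert, Finset.card_insert_of_notMem ha]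
    calc Module.finrank ℝ ↥(U a ⊔ s'.sup U) ≤ _ := finrank_sup_le' _ _
      _ ≤ b + s'.card * b := add_le_add (hb a) ih
      _ = (s'.card + 1) * b := by ring

lemma finrank_span_singleton_le' (v : Vec n) :
    Module.finrank ℝ ↥(Submodule.span ℝ {v}) ≤ 1 := by
  by_cases h : v = 0
  · subst h
    rw [Submodule.span_zero_singleton]
    simp [finrank_bot]
  · rw [finrank_span_singleton h]



end AuxMax

section AuxMain
variable (n : ℕ)

variable (n : ℕ)



lemma nhat_rep : ∀ (ℓ : ℕ) (f : Vec n → ℝ), f ∈ Nhat n (fun k => if k = 1 then n else 2) (fun _ => 2) ℓ →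
    ∃ U : Submodule ℝ (Vec n), Module.finrank ℝ U ≤ 2 ^ ℓ - 1 ∧ HasRep U f := by
  intro ℓ
  induction ℓ with
  | zero =>
    rintro f ⟨v, rfl⟩
    exact ⟨⊥, by simp [finrank_bot], HasRep.lin v⟩
  | succ k ih =>
    rintro f ⟨α, g, hg, rfl⟩
    choose U hU hRep using fun j => ih (g j) (hg j)
    set W := Finset.univ.sup U with hW
    have hWrep : ∀ i, HasRep W (fun x => ∑ j, α i j * g j x) := fun i =>
      hasRep_sum g U hRep (α i)
    obtain ⟨v, hmax⟩ := (hWrep 0).max (hWrep 1)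
    refine ⟨W ⊔ Submodule.span ℝ {v}, ?_, ?_⟩
    · have hWb : Module.finrank ℝ ↥W ≤ 2 ^ (k + 1) - 2 := by
        have h1 := finrank_finset_sup_le U (2 ^ k - 1) hU
        have h2 : 1 ≤ 2 ^ k := Nat.one_le_two_pow
        rcases k with _ | k'
        · have h1' : Module.finrank ℝ ↥W ≤ 0 := le_trans h1 (by norm_num)
          exact le_trans h1' (by norm_num)
        · have hd : (fun k => if k = 1 then n else 2 : ℕ → ℕ) (k' + 1 + 1) * (2 ^ (k' + 1) - 1)
              = 2 * (2 ^ (k' + 1) - 1) := by norm_num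
          have h1' := le_of_le_of_eq h1 hd
          rw [← hW] at h1'
          have h3 : 2 ^ (k' + 1 + 1) = 2 * 2 ^ (k' + 1) := by ring
          omega
      have := finrank_sup_le' W (Submodule.span ℝ {v})
      have := finrank_span_singleton_le' v
      have h2 : 1 ≤ 2 ^ (k + 1) := Nat.one_le_two_pow
      omega
    · refine hmax.congr fun x => ?_
      exact iSup_fin_two _

lemma fmax_mem_nhat : ∀ (ℓ : ℕ) (A : Finset (Vec n)) (hA : A.Nonempty),
    A.card ≤ 2 ^ ℓ → (fun x => fmax A x) ∈ Nhat n (fun k => if k = 1 then n else 2) (fun _ => 2) ℓ := by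
  intro ℓ
  induction ℓ with
  | zero =>
    intro A hA hcard
    have : A.card = 1 := by
      have := Finset.card_pos.mpr hA
      simpa using le_antisymm (by simpa using hcard) this
    obtain ⟨v, rfl⟩ := Finset.card_eq_one.mp this
    exact ⟨v, funext fun x => fmax_singleton v x⟩
  | succ k ih =>
    intro A hA hcard
    -- split A into two nonempty halves of size ≤ 2^k
    obtain ⟨B, C, hB, hC, hBc, hCc, hBC⟩ : ∃ B C : Finset (Vec n), B.Nonempty ∧ C.Nonempty ∧
        B.card ≤ 2 ^ k ∧ C.card ≤ 2 ^ k ∧ B ∪ C = A := by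
      by_cases hsm : A.card ≤ 2 ^ k
      · exact ⟨A, A, hA, hA, hsm, hsm, Finset.union_self A⟩
      · push_neg at hsm
        obtain ⟨B, hBA, hBcard⟩ := Finset.exists_subset_card_eq
          (le_of_lt hsm)
        have h2 : 1 ≤ 2 ^ k := Nat.one_le_two_pow
        have hCne : (A \ B).Nonempty := by
          rw [← Finset.card_pos, Finset.card_sdiff_of_subset hBA]
          omega
        refine ⟨B, A \ B, by rw [← Finset.card_pos]; omega, hCne, le_of_eq hBcard, ?_, ?_⟩
        · rw [Finset.card_sdiff_of_subset hBA]
          have : 2 ^ (k + 1) = 2 * 2 ^ k := by ring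
          omega
        · exact Finset.union_sdiff_of_subset hBA
    have hgB := ih B hB hBc
    have hgC := ih C hC hCc
    have hfm : ∀ x, fmax A x = max (fmax B x) (fmax C x) := by
      intro x; rw [← hBC, fmax_union hB hC]
    rcases k with _ | k'
    · -- layer 1: indegree n
      obtain ⟨u, hBu⟩ := Finset.card_eq_one.mp
        (le_antisymm (by simpa using hBc) (Finset.card_pos.mpr hB))
      obtain ⟨w, hCw⟩ := Finset.card_eq_one.mp
        (le_antisymm (by simpa using hCc) (Finset.card_pos.mpr hC))
      have hfB : ∀ x, fmax B x = lfun u x := by intro x; rw [hBu, fmax_singleton]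
      have hfC : ∀ x, fmax C x = lfun w x := by intro x; rw [hCw, fmax_singleton]
      simp only [Nhat, Set.mem_setOf_eq, if_pos rfl]
      refine ⟨fun i j => if (i : ℕ) = 0 then u j else w j, fun j => (fun x => x j),
        fun j => ⟨Pi.single j 1, funext fun x => ?_⟩, ?_⟩
      · simp [Pi.single_apply]
      · funext x
        rw [hfm x, iSup_fin_two, hfB, hfC]
        simp [lfun]
    · -- higher layers: indegree 2
      simp only [Nhat, Set.mem_setOf_eq, if_neg (show ¬(k' + 1 + 1 = 1) from by omega)]
      refine ⟨fun i j => if (i : ℕ) = (j : ℕ) then 1 else 0,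
        fun j => if (j : ℕ) = 0 then (fun x => fmax B x) else (fun x => fmax C x),
        fun j => ?_, ?_⟩
      · by_cases h : (j : ℕ) = 0
        · simp only [if_pos h]; exact hgB
        · simp only [if_neg h]; exact hgC
      · funext x
        rw [hfm x, iSup_fin_two]
        have key : fmax B x ⊔ fmax C x
            = (∑ j : Fin 2, (if ((0 : Fin 2) : ℕ) = (j : ℕ) then (1:ℝ) else 0) *
                (if (j : ℕ) = 0 then (fun x => fmax B x) else (fun x => fmax C x)) x) ⊔
              (∑ j : Fin 2, (if ((1 : Fin 2) : ℕ) = (j : ℕ) then (1:ℝ) else 0) *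
                (if (j : ℕ) = 0 then (fun x => fmax B x) else (fun x => fmax C x)) x) := by
          rw [Fin.sum_univ_two, Fin.sum_univ_two]
          norm_num
        exact key


theorem Nfull_two_two_eq_MAXn' (hn : 1 ≤ n) (ℓ : ℕ) :
    Nfull n (fun k => if k = 1 then n else 2) (fun _ => 2) ℓ = MAXn n (2 ^ ℓ) := by
  have h2pos : 0 < 2 ^ ℓ := Nat.pow_pos (by norm_num)
  ext f
  constructor
  · rintro ⟨p, c, g, hg, rfl⟩
    have hmem : ∀ i, g i ∈ Submodule.span ℝ (MAXgen n (2 ^ ℓ)) := by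
      intro i
      obtain ⟨U, hU, hRep⟩ := nhat_rep n ℓ (g i) (hg i)
      have h1 := hasRep_mem_span hU hRep
      have h2 : 2 ^ ℓ - 1 + 1 = 2 ^ ℓ := Nat.sub_add_cancel Nat.one_le_two_pow
      rwa [h2] at h1
    show _ ∈ MAXn n (2 ^ ℓ)
    rw [MAXn_eq_span, SetLike.mem_coe]
    have he : (fun x => ∑ i, c i * g i x) = ∑ i : Fin p, c i • g i := by
      funext x
      rw [Finset.sum_apply]
      exact Finset.sum_congr rfl fun i _ => rfl
    rw [he]
    exact Submodule.sum_mem _ fun i _ => Submodule.smul_mem _ _ (hmem i)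
  · rintro ⟨p, β, a, rfl⟩
    have hne : Nonempty (Fin (2 ^ ℓ)) := Fin.pos_iff_nonempty.mp h2pos
    refine ⟨p, β, fun i => (fun x => ⨆ j, lfun (a i j) x), fun i => ?_, rfl⟩
    have he : (fun x => ⨆ j, lfun (a i j) x)
        = fun x => fmax (Finset.univ.image (a i)) x :=
      funext fun x => (fmax_image_univ h2pos (a i) x).symm
    show (fun x => ⨆ j, lfun (a i j) x) ∈ _
    rw [he]
    refine fmax_mem_nhat n ℓ _ (Finset.univ_nonempty.image _) ?_
    exact le_trans Finset.card_image_le (by simp)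


end AuxMain

/-- `N_n(ℓ,𝟐,𝟐) = MAX_n(2^ℓ)`. -/
theorem Nfull_two_two_eq_MAXn {n : ℕ} (hn : 1 ≤ n) (ℓ : ℕ) :
    Nfull n (fun k => if k = 1 then n else 2) (fun _ => 2) ℓ = MAXn n (2 ^ ℓ) :=
  Nfull_two_two_eq_MAXn' n hn ℓ
end SparseMaxout
end

section
/- Fix ℓ ∈ ℕ₀ and d = (d_1,…,d_ℓ), r = (r_1,…,r_ℓ) ∈ ℕ^ℓ with d_1 = n. If m ∈ ℕ satisfies m ≤ ∏_{i=1}^ℓ min{d_i, r_i}, then MAX_n(m) ⊆ N_n(ℓ,d,r): every finite real linear combination of maxima of at most m linear functions is computable by an indegree-d-constrained rank-r maxout network with ℓ hidden layers. In particular, if n < ∏_{i=1}^ℓ min{d_i, r_i}, then N_n(ℓ,d,r) contains every function of the form x ↦ max_{j∈[p]}⟨a_j,x⟩ − max_{k∈[q]}⟨b_k,x⟩ (p,q ∈ ℕ, a_j,b_k ∈ ℝ^n), i.e., every positively homogeneous continuous piecewise linear function. -/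
open Pointwise

noncomputable section SparseMaxout

section WangSunAux
open Finset

private lemma sup'_set_congr {ι : Type*} {s t : Finset ι} (hs : s.Nonempty) (ht : t.Nonempty)
    (h : s = t) (f : ι → ℝ) : s.sup' hs f = t.sup' ht f := by subst h; rfl

private lemma exists_pick {ι : Type*} (A : Finset ι) (hA : A.Nonempty) {K : ℕ}
    (hcard : A.card ≤ K) (hK : 0 < K) :
    ∃ pick : Fin K → ι, (∀ j, pick j ∈ A) ∧ ∀ j₀ ∈ A, ∃ j : Fin K, pick j = j₀ := by
  classical
  have hk : 0 < A.card := Finset.card_pos.mpr hA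
  let e : ↥A ≃ Fin A.card := (Fintype.equivFin ↥A).trans (finCongr (Fintype.card_coe A))
  refine ⟨fun j => (e.symm ⟨min j.val (A.card - 1), by omega⟩ : ↥A).1,
    fun j => (e.symm _).2, fun j₀ hj₀ => ?_⟩
  set u : Fin A.card := e ⟨j₀, hj₀⟩ with hu
  refine ⟨⟨u.val, lt_of_lt_of_le u.isLt hcard⟩, ?_⟩
  have h1 : (⟨min u.val (A.card - 1), by omega⟩ : Fin A.card) = u := by
    apply Fin.ext; simp only []; have := u.isLt; omega
  show (e.symm ⟨min u.val (A.card - 1), by omega⟩ : ↥A).1 = j₀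
  rw [h1, hu, Equiv.symm_apply_apply]

private lemma sup'_pad {ι : Type*} (A : Finset ι) (hA : A.Nonempty) {K : ℕ} (hK : 0 < K)
    (pick : Fin K → ι) (hmem : ∀ j, pick j ∈ A) (hsurj : ∀ j₀ ∈ A, ∃ j, pick j = j₀)
    (f : ι → ℝ) :
    A.sup' hA f = (univ : Finset (Fin K)).sup' ⟨⟨0, hK⟩, mem_univ _⟩ (fun j => f (pick j)) := by
  apply le_antisymm
  · refine Finset.sup'_le _ _ fun i hi => ?_
    obtain ⟨j, rfl⟩ := hsurj i hi
    exact Finset.le_sup' (fun j => f (pick j)) (mem_univ j)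
  · exact Finset.sup'_le _ _ fun j _ => Finset.le_sup' f (hmem j)


open Finset

private lemma union_nonempty_left {ι : Type*} [DecidableEq ι] {s : Finset ι} (hs : s.Nonempty)
    (t : Finset ι) : (s ∪ t).Nonempty := by
  obtain ⟨z, hz⟩ := hs; exact ⟨z, Finset.mem_union_left _ hz⟩

private lemma sum_powerset_pair_zero {ι : Type*} [DecidableEq ι] (S : Finset ι) (j₀ : ι)
    (hj₀ : j₀ ∈ S) (F : Finset ι → ℝ)
    (hF : ∀ J ∈ (S.erase j₀).powerset, F (insert j₀ J) = - F J) :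
    ∑ J ∈ S.powerset, F J = 0 := by
  rw [← insert_erase hj₀, Finset.sum_powerset_insert (notMem_erase _ _),
    ← Finset.sum_add_distrib]
  apply Finset.sum_eq_zero
  intro J hJ
  rw [hF J hJ]; ring

private lemma pairing_sum {ι : Type*} [DecidableEq ι] (A S : Finset ι) (hS : S ⊆ A)
    (hc : (A \ S).Nonempty) (y : ι → ℝ) {j₀ : ι} (hj₀ : j₀ ∈ S)
    (hle : y j₀ ≤ (A \ S).sup' hc y) :
    ∑ J ∈ S.powerset, (-1 : ℝ) ^ J.card *
      ((A \ S) ∪ J).sup' (union_nonempty_left hc J) y = 0 := by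
  apply sum_powerset_pair_zero S j₀ hj₀
  intro J hJ
  have hjJ : j₀ ∉ J := fun h => (notMem_erase j₀ S) (mem_powerset.mp hJ h)
  have hGle : (A \ S).sup' hc y ≤ ((A \ S) ∪ J).sup' (union_nonempty_left hc J) y :=
    Finset.sup'_le _ _ fun z hz => Finset.le_sup' y (mem_union_left _ hz)
  have hGi : ((A \ S) ∪ insert j₀ J).sup' (union_nonempty_left hc _) y
      = ((A \ S) ∪ J).sup' (union_nonempty_left hc J) y := by
    apply le_antisymm
    · refine Finset.sup'_le _ _ fun z hz => ?_
      rcases Finset.mem_union.mp hz with h | h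
      · exact Finset.le_sup' y (mem_union_left _ h)
      · rcases Finset.mem_insert.mp h with rfl | h
        · exact le_trans hle hGle
        · exact Finset.le_sup' y (mem_union_right _ h)
    · refine Finset.sup'_le _ _ fun z hz => ?_
      rcases Finset.mem_union.mp hz with h | h
      · exact Finset.le_sup' y (mem_union_left _ h)
      · exact Finset.le_sup' y (mem_union_right _ (mem_insert_of_mem h))
  rw [hGi, Finset.card_insert_of_notMem hjJ, pow_succ]
  ring

private lemma key_sum {ι : Type*} [DecidableEq ι] (A S : Finset ι) (hS : S ⊆ A)
    (hc : (A \ S).Nonempty) (y : ι → ℝ) {j₀ : ι} (hj₀ : j₀ ∈ S)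
    (hle : y j₀ ≤ (A \ S).sup' hc y) :
    ∑ I ∈ S.powerset, (-1 : ℝ) ^ I.card *
      ((A \ S) ∪ (S \ I)).sup' (union_nonempty_left hc _) y = 0 := by
  have h2 : ∑ I ∈ S.powerset, (-1 : ℝ) ^ I.card *
      ((A \ S) ∪ (S \ I)).sup' (union_nonempty_left hc _) y
      = (-1 : ℝ) ^ S.card * ∑ J ∈ S.powerset, (-1 : ℝ) ^ J.card *
          ((A \ S) ∪ J).sup' (union_nonempty_left hc _) y := by
    rw [Finset.mul_sum]
    refine Finset.sum_nbij' (fun I => S \ I) (fun J => S \ J) ?_ ?_ ?_ ?_ ?_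
    · intro I hI; exact mem_powerset.mpr (sdiff_subset)
    · intro J hJ; exact mem_powerset.mpr (sdiff_subset)
    · intro I hI; exact Finset.sdiff_sdiff_eq_self (mem_powerset.mp hI)
    · intro J hJ; exact Finset.sdiff_sdiff_eq_self (mem_powerset.mp hJ)
    · intro I hI
      have hIS : I ⊆ S := mem_powerset.mp hI
      have hcd : (S \ I).card + I.card = S.card := card_sdiff_add_card_eq_card hIS
      have h4 : ((-1 : ℝ)) ^ ((S \ I).card) * ((-1 : ℝ)) ^ ((S \ I).card) = 1 := by
        rw [← pow_add]; exact Even.neg_one_pow ⟨_, rfl⟩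
      have hsign : (-1 : ℝ) ^ I.card = (-1 : ℝ) ^ S.card * (-1 : ℝ) ^ ((S \ I).card) := by
        rw [← hcd, pow_add]; linear_combination (-(-1 : ℝ) ^ I.card) * h4
      rw [hsign]; ring
  rw [h2, pairing_sum A S hS hc y hj₀ hle, mul_zero]

open Finset

private lemma radon {n : ℕ} {ι : Type*} [DecidableEq ι] (a : ι → Vec n) (A : Finset ι)
    (hA : n + 2 ≤ A.card) :
    ∃ S : Finset ι, S ⊆ A ∧ S.Nonempty ∧ ∃ hc : (A \ S).Nonempty,
      ∀ x : Vec n, ∃ j₀ ∈ S,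
        (∑ t, a j₀ t * x t) ≤ (A \ S).sup' hc (fun i => ∑ t, a i t * x t) := by
  classical
  set v : ι → (Fin (n+1) → ℝ) := fun i => Fin.snoc (a i) 1 with hv
  have hnl : ¬ LinearIndependent ℝ (fun i : ↥A => v i.1) := by
    intro h
    have hcle := h.fintype_card_le_finrank
    rw [Module.finrank_fin_fun, Fintype.card_coe] at hcle
    omega
  obtain ⟨g, hsum, i₀, hi₀⟩ := Fintype.not_linearIndependent_iff.mp hnl
  set g' : ι → ℝ := fun i => if h : i ∈ A then g ⟨i, h⟩ else 0 with hg'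
  have hg'eq : ∀ i : ↥A, g' i.1 = g i := by
    intro i; simp only [hg', i.2, dif_pos]
  have hcoord : ∀ t : Fin (n+1), ∑ i ∈ A, g' i * v i t = 0 := by
    intro t
    have h0 : ∑ i : ↥A, g' i.1 * v i.1 t = 0 := by
      have := congrFun hsum t
      rw [Finset.sum_apply] at this
      simpa [hg'eq] using this
    rw [← Finset.sum_coe_sort A (fun i => g' i * v i t)]
    exact h0
  have h1 : ∑ i ∈ A, g' i = 0 := by
    have := hcoord (Fin.last n)
    simpa [hv, Fin.snoc_last] using this
  have h2 : ∀ u : Fin n, ∑ i ∈ A, g' i * a i u = 0 := by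
    intro u
    have := hcoord u.castSucc
    simpa [hv, Fin.snoc_castSucc] using this
  have hex : ∃ i ∈ A, g' i ≠ 0 := ⟨i₀.1, i₀.2, by rw [hg'eq]; exact hi₀⟩
  set S : Finset ι := A.filter (fun i => 0 < g' i) with hSdef
  have hSA : S ⊆ A := filter_subset _ _
  have hSne : S.Nonempty := by
    by_contra h
    rw [Finset.not_nonempty_iff_eq_empty] at h
    have hnonneg : ∀ i ∈ A, 0 ≤ -g' i := by
      intro i hi
      have : ¬ (0 < g' i) := by
        intro hpos
        have : i ∈ S := mem_filter.mpr ⟨hi, hpos⟩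
        simp [h] at this
      linarith [not_lt.mp this]
    have hzero : ∀ i ∈ A, -g' i = 0 := by
      rw [← Finset.sum_eq_zero_iff_of_nonneg hnonneg]
      rw [Finset.sum_neg_distrib, h1, neg_zero]
    obtain ⟨i, hi, hne⟩ := hex
    exact hne (by have := hzero i hi; linarith)
  have hTne : ∃ i ∈ A, g' i < 0 := by
    by_contra h
    push_neg at h
    have hzero : ∀ i ∈ A, g' i = 0 := by
      rw [← Finset.sum_eq_zero_iff_of_nonneg h, h1]
    obtain ⟨i, hi, hne⟩ := hex
    exact hne (hzero i hi)
  have hc : (A \ S).Nonempty := by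
    obtain ⟨i, hi, hneg⟩ := hTne
    refine ⟨i, mem_sdiff.mpr ⟨hi, fun hiS => ?_⟩⟩
    have := (mem_filter.mp hiS).2; linarith
  refine ⟨S, hSA, hSne, hc, fun x => ?_⟩
  set y : ι → ℝ := fun i => ∑ t, a i t * x t with hy
  obtain ⟨j₀, hj₀S, hmin⟩ := S.exists_min_image y hSne
  refine ⟨j₀, hj₀S, ?_⟩
  have hy0 : ∑ i ∈ A, g' i * y i = 0 := by
    have hterm : ∀ i ∈ A, g' i * y i = ∑ t, (g' i * a i t) * x t := by
      intro i _
      rw [hy, Finset.mul_sum]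
      exact Finset.sum_congr rfl fun t _ => by ring
    rw [Finset.sum_congr rfl hterm, Finset.sum_comm]
    apply Finset.sum_eq_zero
    intro u _
    rw [← Finset.sum_mul, h2 u, zero_mul]
  have hsplit : ∑ i ∈ A \ S, g' i * y i + ∑ i ∈ S, g' i * y i = 0 := by
    rw [Finset.sum_sdiff hSA]; exact hy0
  have hsplit1 : ∑ i ∈ A \ S, g' i + ∑ i ∈ S, g' i = 0 := by
    rw [Finset.sum_sdiff hSA]; exact h1
  have hW : (0 : ℝ) < ∑ i ∈ S, g' i :=
    Finset.sum_pos (fun i hi => (mem_filter.mp hi).2) hSne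
  set Msup := (A \ S).sup' hc y with hM
  have step1 : (∑ i ∈ S, g' i) * y j₀ ≤ ∑ i ∈ S, g' i * y i := by
    rw [Finset.sum_mul]
    exact Finset.sum_le_sum fun i hi =>
      mul_le_mul_of_nonneg_left (hmin i hi) (le_of_lt (mem_filter.mp hi).2)
  have step2 : ∑ i ∈ S, g' i * y i = ∑ i ∈ A \ S, (-g' i) * y i := by
    have : ∑ i ∈ A \ S, (-g' i) * y i = - ∑ i ∈ A \ S, g' i * y i := by
      rw [← Finset.sum_neg_distrib]
      exact Finset.sum_congr rfl fun i _ => by ring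
    rw [this]; linarith
  have step3 : ∑ i ∈ A \ S, (-g' i) * y i ≤ ∑ i ∈ A \ S, (-g' i) * Msup := by
    refine Finset.sum_le_sum fun i hi => ?_
    have hnp : 0 ≤ -g' i := by
      have h1' := (mem_sdiff.mp hi).2
      have h2' := (mem_sdiff.mp hi).1
      by_contra hcon
      push_neg at hcon
      exact h1' (mem_filter.mpr ⟨h2', by linarith⟩)
    exact mul_le_mul_of_nonneg_left (Finset.le_sup' y hi) hnp
  have step4 : ∑ i ∈ A \ S, (-g' i) * Msup = (∑ i ∈ S, g' i) * Msup := by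
    rw [← Finset.sum_mul]
    congr 1
    have hnd : ∑ i ∈ A \ S, (-g' i) = - ∑ i ∈ A \ S, g' i := Finset.sum_neg_distrib _
    linarith
  have hfin : (∑ i ∈ S, g' i) * y j₀ ≤ (∑ i ∈ S, g' i) * Msup := by
    calc (∑ i ∈ S, g' i) * y j₀ ≤ ∑ i ∈ S, g' i * y i := step1
    _ = ∑ i ∈ A \ S, (-g' i) * y i := step2
    _ ≤ ∑ i ∈ A \ S, (-g' i) * Msup := step3
    _ = (∑ i ∈ S, g' i) * Msup := step4
  exact le_of_mul_le_mul_left hfin hW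

def smallMax (n : ℕ) : Set ((Vec n) → ℝ) :=
  {f | ∃ b : Fin (n+1) → Vec n, f = fun x => ⨆ j, ∑ t, b j t * x t}

private lemma sup'_mem_span {n p : ℕ} (a : Fin p → Vec n) :
    ∀ (N : ℕ) (A : Finset (Fin p)) (hA : A.Nonempty), A.card ≤ N →
      (fun x => A.sup' hA (fun i => ∑ t, a i t * x t)) ∈ Submodule.span ℝ (smallMax n) := by
  intro N
  induction N with
  | zero =>
    intro A hA hc
    exact absurd (Finset.card_pos.mpr hA) (by omega)
  | succ N ih =>
    intro A hA hcard
    by_cases hsmall : A.card ≤ n + 1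
    · apply Submodule.subset_span
      obtain ⟨pick, hmem, hsurj⟩ := exists_pick A hA hsmall (by omega)
      refine ⟨fun j => a (pick j), ?_⟩
      funext x
      rw [sup'_pad A hA (by omega) pick hmem hsurj (fun i => ∑ t, a i t * x t)]
      haveI : Nonempty (Fin (n+1)) := ⟨⟨0, by omega⟩⟩
      exact Finset.sup'_univ_eq_ciSup _
    · push_neg at hsmall
      obtain ⟨S, hSA, hSne, hc, hkey⟩ := radon a A (by omega)
      have hfun : (fun x : Vec n => A.sup' hA (fun i => ∑ t, a i t * x t))
          = ∑ I ∈ S.powerset.erase ∅, ((-1 : ℝ) ^ (I.card + 1)) •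
              (fun x : Vec n => ((A \ S) ∪ (S \ I)).sup' (union_nonempty_left hc _)
                (fun i => ∑ t, a i t * x t)) := by
        funext x
        obtain ⟨j₀, hj₀, hle⟩ := hkey x
        have h0 := key_sum A S hSA hc (fun i => ∑ t, a i t * x t) hj₀ hle
        rw [← Finset.add_sum_erase _ _ (Finset.empty_mem_powerset S)] at h0
        have hterm0 : (-1 : ℝ) ^ (∅ : Finset (Fin p)).card *
            ((A \ S) ∪ (S \ (∅ : Finset (Fin p)))).sup' (union_nonempty_left hc _)
              (fun i => ∑ t, a i t * x t)
            = A.sup' hA (fun i => ∑ t, a i t * x t) := by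
          rw [Finset.card_empty, pow_zero, one_mul]
          apply sup'_set_congr
          rw [Finset.sdiff_empty, Finset.sdiff_union_of_subset hSA]
        rw [hterm0] at h0
        have hsum : (∑ I ∈ S.powerset.erase ∅, ((-1 : ℝ) ^ (I.card + 1)) •
            (fun x : Vec n => ((A \ S) ∪ (S \ I)).sup' (union_nonempty_left hc _)
              (fun i => ∑ t, a i t * x t))) x
            = ∑ I ∈ S.powerset.erase ∅, ((-1 : ℝ) ^ (I.card + 1)) *
              ((A \ S) ∪ (S \ I)).sup' (union_nonempty_left hc _)
                (fun i => ∑ t, a i t * x t) := by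
          rw [Finset.sum_apply]
          exact Finset.sum_congr rfl fun I _ => rfl
        rw [hsum]
        have : ∑ I ∈ S.powerset.erase ∅, ((-1 : ℝ) ^ (I.card + 1)) *
              ((A \ S) ∪ (S \ I)).sup' (union_nonempty_left hc _)
                (fun i => ∑ t, a i t * x t)
            = - ∑ I ∈ S.powerset.erase ∅, ((-1 : ℝ) ^ I.card) *
              ((A \ S) ∪ (S \ I)).sup' (union_nonempty_left hc _)
                (fun i => ∑ t, a i t * x t) := by
          rw [← Finset.sum_neg_distrib]
          exact Finset.sum_congr rfl fun I _ => by rw [pow_succ]; ring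
        rw [this]
        linarith
      rw [hfun]
      apply Submodule.sum_mem
      intro I hI
      apply Submodule.smul_mem
      have hIne : I.Nonempty :=
        Finset.nonempty_iff_ne_empty.mpr (Finset.mem_erase.mp hI).1
      have hIS : I ⊆ S := Finset.mem_powerset.mp (Finset.mem_erase.mp hI).2
      have hIA : I ⊆ A := hIS.trans hSA
      have hset : (A \ S) ∪ (S \ I) = A \ I := by
        ext z
        simp only [Finset.mem_union, Finset.mem_sdiff]
        constructor
        · rintro (⟨h1, h2⟩ | ⟨h1, h2⟩)
          · exact ⟨h1, fun hzI => h2 (hIS hzI)⟩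
          · exact ⟨hSA h1, h2⟩
        · rintro ⟨h1, h2⟩
          by_cases hz : z ∈ S
          · exact Or.inr ⟨hz, h2⟩
          · exact Or.inl ⟨h1, hz⟩
      have hAIne : (A \ I).Nonempty := by
        obtain ⟨z, hz⟩ := hc
        rw [Finset.mem_sdiff] at hz
        exact ⟨z, Finset.mem_sdiff.mpr ⟨hz.1, fun h => hz.2 (hIS h)⟩⟩
      have heq : (fun x : Vec n => ((A \ S) ∪ (S \ I)).sup' (union_nonempty_left hc _)
            (fun i => ∑ t, a i t * x t))
          = (fun x : Vec n => (A \ I).sup' hAIne (fun i => ∑ t, a i t * x t)) := by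
        funext x
        exact sup'_set_congr _ _ hset _
      rw [heq]
      apply ih
      have hcd : (A \ I).card = A.card - I.card := Finset.card_sdiff_of_subset hIA
      have hIpos : 0 < I.card := Finset.card_pos.mpr hIne
      have hIle : I.card ≤ A.card := Finset.card_le_card hIA
      omega

private lemma maxM_mem_Nhat {n : ℕ} (d r : ℕ → ℕ) (hd : ∀ k, 1 ≤ d k) (hr : ∀ k, 1 ≤ r k) :
    ∀ (ℓ : ℕ) (M : ℕ), M = (∏ i ∈ Finset.Icc 1 ℓ, min (d i) (r i)) →
      ∀ b : Fin M → Vec n,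
        (fun x => ⨆ j, ∑ t, b j t * x t) ∈ Nhat n d r ℓ := by
  intro ℓ
  induction ℓ with
  | zero =>
    intro M hM b
    have hM1 : M = 1 := by simpa using hM
    subst hM1
    refine ⟨b 0, ?_⟩
    funext x
    exact ciSup_unique
  | succ ℓ ih =>
    intro M hM b
    rw [Finset.prod_Icc_succ_top (by omega)] at hM
    set c := min (d (ℓ+1)) (r (ℓ+1)) with hcdef
    set K := ∏ i ∈ Finset.Icc 1 ℓ, min (d i) (r i) with hKdef
    have hc1 : 1 ≤ c := le_min (hd _) (hr _)
    have hK1 : 0 < K := by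
      rw [hKdef]
      show 0 < ∏ i ∈ Finset.Icc 1 ℓ, min (d i) (r i)
      apply Finset.prod_pos
      intro i _
      have := hd i; have := hr i; omega
    have hcd : c ≤ d (ℓ+1) := min_le_left _ _
    have hcr : c ≤ r (ℓ+1) := min_le_right _ _
    have hM1 : 1 ≤ M := hM ▸ Nat.mul_pos hK1 hc1

    let E : Fin K × Fin c ≃ Fin M := finProdFinEquiv.trans (finCongr hM.symm)
    let bb : Fin K × Fin c → Vec n := fun q => b (E q)
    let g : Fin c → (Vec n) → ℝ := fun u => fun x => ⨆ s : Fin K, ∑ t, bb (s, u) t * x t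
    have hg : ∀ u, g u ∈ Nhat n d r ℓ := fun u => ih K rfl (fun s => bb (s, u))
    have hcap : ∀ j : ℕ, min j (c - 1) < c := fun j => by omega
    refine ⟨fun i j => if j.val = min i.val (c-1) then (1:ℝ) else 0,
      fun j => g ⟨min j.val (c-1), hcap _⟩, fun j => hg _, ?_⟩
    funext x
    haveI hne1 : Nonempty (Fin M) := ⟨⟨0, by omega⟩⟩
    haveI hne2 : Nonempty (Fin (r (ℓ+1))) := ⟨⟨0, by have := hr (ℓ+1); omega⟩⟩
    haveI hne3 : Nonempty (Fin K) := ⟨⟨0, by omega⟩⟩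
    have hrow : ∀ i : Fin (r (ℓ+1)),
        ∑ j : Fin (d (ℓ+1)), (if j.val = min i.val (c-1) then (1:ℝ) else 0) *
            (fun j : Fin (d (ℓ+1)) => g ⟨min j.val (c-1), hcap _⟩) j x
          = g ⟨min i.val (c-1), hcap _⟩ x := by
      intro i
      have hjlt : min i.val (c-1) < d (ℓ+1) := by omega
      rw [Finset.sum_eq_single (⟨min i.val (c-1), hjlt⟩ : Fin (d (ℓ+1)))]
      · rw [if_pos rfl, one_mul]
        show g ⟨min (min i.val (c-1)) (c-1), _⟩ x = _
        congr 1
        exact Fin.ext (by simp only []; omega)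
      · intro j _ hne
        rw [if_neg, zero_mul]
        intro hval; exact hne (Fin.ext (by simpa using hval))
      · intro h; exact absurd (Finset.mem_univ _) h
    simp only [hrow]
    -- now: ⨆ j : Fin M, ∑ t, b j t * x t = ⨆ i : Fin r', g ⟨min i (c-1)⟩ x
    rw [← Finset.sup'_univ_eq_ciSup, ← Finset.sup'_univ_eq_ciSup]
    have hgx : ∀ u : Fin c, g u x
        = (univ : Finset (Fin K)).sup' univ_nonempty (fun s => ∑ t, bb (s, u) t * x t) := by
      intro u
      show (⨆ s : Fin K, ∑ t, bb (s, u) t * x t) = _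
      rw [← Finset.sup'_univ_eq_ciSup]
    apply le_antisymm
    · refine Finset.sup'_le _ _ fun j _ => ?_
      obtain ⟨⟨s, u⟩, hj⟩ : ∃ q, E q = j := ⟨E.symm j, E.apply_symm_apply j⟩
      have hval : (∑ t, b j t * x t) = ∑ t, bb (s, u) t * x t := by
        simp only [bb, hj]
      rw [hval]
      have hiu : u.val < r (ℓ+1) := lt_of_lt_of_le u.isLt hcr
      have htof : (⟨min (⟨u.val, hiu⟩ : Fin (r (ℓ+1))).val (c-1), hcap _⟩ : Fin c) = u :=
        Fin.ext (by simp only []; have := u.isLt; omega)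
      calc (∑ t, bb (s, u) t * x t)
          ≤ (univ : Finset (Fin K)).sup' univ_nonempty (fun s => ∑ t, bb (s, u) t * x t) :=
            Finset.le_sup' (fun s : Fin K => ∑ t, bb (s, u) t * x t) (mem_univ s)
        _ = g u x := (hgx u).symm
        _ = g ⟨min (⟨u.val, hiu⟩ : Fin (r (ℓ+1))).val (c-1), hcap _⟩ x := by rw [htof]
        _ ≤ _ := Finset.le_sup' (fun i : Fin (r (ℓ+1)) => g ⟨min i.val (c-1), hcap _⟩ x)
            (mem_univ (⟨u.val, hiu⟩ : Fin (r (ℓ+1))))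
    · refine Finset.sup'_le _ _ fun i _ => ?_
      rw [hgx]
      refine Finset.sup'_le _ _ fun s _ => ?_
      have : bb (s, ⟨min i.val (c-1), hcap _⟩) = b (E (s, ⟨min i.val (c-1), hcap _⟩)) := rfl
      rw [this]
      exact Finset.le_sup' (fun j : Fin M => ∑ t, b j t * x t) (mem_univ _)

private lemma fin_sup_pad {n : ℕ} {m M : ℕ} (hm : 0 < m) (hmM : m ≤ M) (cvec : Fin m → Vec n) :
    ∃ b : Fin M → Vec n, (fun x : Vec n => ⨆ j, ∑ t, cvec j t * x t)
      = fun x : Vec n => ⨆ j, ∑ t, b j t * x t := by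
  haveI : Nonempty (Fin m) := ⟨⟨0, hm⟩⟩
  haveI : Nonempty (Fin M) := ⟨⟨0, by omega⟩⟩
  obtain ⟨pick, hmem, hsurj⟩ := exists_pick (univ : Finset (Fin m)) univ_nonempty
    (by simpa using hmM) (by omega : 0 < M)
  refine ⟨fun j => cvec (pick j), ?_⟩
  funext x
  rw [← Finset.sup'_univ_eq_ciSup, ← Finset.sup'_univ_eq_ciSup]
  exact sup'_pad univ univ_nonempty (by omega) pick hmem hsurj _

private lemma mem_span_rep {n : ℕ} (s : Set ((Vec n) → ℝ)) (f : (Vec n) → ℝ)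
    (hf : f ∈ Submodule.span ℝ s) :
    ∃ (p : ℕ) (c : Fin p → ℝ) (g : Fin p → (Vec n) → ℝ),
      (∀ i, g i ∈ s) ∧ f = fun x => ∑ i, c i * g i x := by
  classical
  obtain ⟨cc, hsupp, hsum⟩ := Submodule.mem_span_set.mp hf
  set sp := cc.support with hsp
  let e : ↥sp ≃ Fin sp.card := (Fintype.equivFin ↥sp).trans (finCongr (Fintype.card_coe sp))
  refine ⟨sp.card, fun i => cc ((e.symm i : ↥sp) : (Vec n) → ℝ),
    fun i => ((e.symm i : ↥sp) : (Vec n) → ℝ), fun i => hsupp (e.symm i).2, ?_⟩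
  rw [← hsum]
  funext x
  have h1 : (cc.sum fun mi r => r • mi) x = ∑ mfun ∈ sp, cc mfun * mfun x := by
    rw [Finsupp.sum, Finset.sum_apply]
    exact Finset.sum_congr rfl fun mfun _ => rfl
  rw [h1, ← Finset.sum_coe_sort sp (fun mfun => cc mfun * mfun x)]
  exact (Equiv.sum_comp e.symm (fun mfun : ↥sp => cc (mfun : (Vec n) → ℝ) * (mfun : (Vec n) → ℝ) x)).symm

end WangSunAux


/-- deep sparse maxout networks are universal:
`MAX_n(m) ⊆ N_n(ℓ,d,r)` when `m ≤ ∏_{i=1}^ℓ min{d_i, r_i}`; in particular, if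
`n < ∏_{i=1}^ℓ min{d_i, r_i}` then every difference of two finite maxima of
linear functions lies in `N_n(ℓ,d,r)`. -/
theorem MAXn_subset_Nfull {n : ℕ} (ℓ : ℕ) (d r : ℕ → ℕ) (hd1 : d 1 = n)
    (hd : ∀ k, 1 ≤ d k) (hr : ∀ k, 1 ≤ r k) (m : ℕ) (hm : 1 ≤ m)
    (hmb : m ≤ ∏ i ∈ Finset.Icc 1 ℓ, min (d i) (r i)) :
    MAXn n m ⊆ Nfull n d r ℓ ∧
    (n < ∏ i ∈ Finset.Icc 1 ℓ, min (d i) (r i) →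
      ∀ (p q : ℕ) (a : Fin p → Vec n) (b : Fin q → Vec n), 0 < p → 0 < q →
        (fun x : Vec n => (⨆ j, ∑ t, a j t * x t) - (⨆ k, ∑ t, b k t * x t)) ∈
          Nfull n d r ℓ) := by
  set Mcap := ∏ i ∈ Finset.Icc 1 ℓ, min (d i) (r i) with hMcap
  constructor
  · rintro f ⟨P, β, a, rfl⟩
    refine ⟨P, β, fun i => fun x => ⨆ j, ∑ t, a i j t * x t, fun i => ?_, rfl⟩
    obtain ⟨b', heq⟩ := fin_sup_pad (by omega : 0 < m) hmb (a i)
    show (fun x : Vec n => ⨆ j, ∑ t, a i j t * x t) ∈ Nhat n d r ℓ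
    rw [heq]
    exact maxM_mem_Nhat d r hd hr ℓ Mcap hMcap b'
  · intro hcap p q a b hp hq
    have hsm : smallMax n ⊆ Nhat n d r ℓ := by
      rintro f ⟨bv, rfl⟩
      obtain ⟨b', heq⟩ := fin_sup_pad (by omega : 0 < n + 1) (by omega : n + 1 ≤ Mcap) bv
      rw [heq]
      exact maxM_mem_Nhat d r hd hr ℓ Mcap hMcap b'
    have hspan : ∀ (P : ℕ), 0 < P → ∀ av : Fin P → Vec n,
        (fun x : Vec n => ⨆ j, ∑ t, av j t * x t) ∈ Submodule.span ℝ (Nhat n d r ℓ) := by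
      intro P hP av
      haveI : Nonempty (Fin P) := ⟨⟨0, hP⟩⟩
      have h1 : (fun x : Vec n => ⨆ j, ∑ t, av j t * x t)
          = fun x => (Finset.univ : Finset (Fin P)).sup' Finset.univ_nonempty
              (fun i => ∑ t, av i t * x t) := by
        funext x
        rw [← Finset.sup'_univ_eq_ciSup]
      rw [h1]
      exact Submodule.span_mono hsm
        (sup'_mem_span av P Finset.univ Finset.univ_nonempty (by simp))
    have h2 := Submodule.sub_mem (Submodule.span ℝ (Nhat n d r ℓ))
      (hspan p hp a) (hspan q hq b)
    have h3 : (fun x : Vec n => (⨆ j, ∑ t, a j t * x t) - (⨆ k, ∑ t, b k t * x t))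
        = (fun x : Vec n => ⨆ j, ∑ t, a j t * x t)
          - (fun x : Vec n => ⨆ k, ∑ t, b k t * x t) := rfl
    obtain ⟨P, c, g, hg, hfeq⟩ := mem_span_rep _ _ (h3 ▸ h2)
    exact ⟨P, c, g, hg, hfeq⟩
end SparseMaxout
end
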